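/- arXiv:1809.02104 — 6 statements merged into one kernel-verified Lean document; each statement's English description precedes it below -/
import Mathlib

section
/- (Talagrand's inequality) Let (Ω, μ) be a probability space, g: Ω → [0,1] measurable, t ≥ 0 and α > 0. Then (∫_Ω min(e^t, g^{-α}) dμ) · (∫_Ω g dμ)^α ≤ exp(t²(α+1)/(8α)). -/
open Real MeasureTheory

lemma hoeff_scalar (p x : ℝ) (hp0 : 0 ≤ p) (hp1 : p ≤ 1) :
    1 - p + p * Real.exp x ≤ Real.exp (p * x + x ^ 2 / 8) := by
  set u : ℝ → ℝ := fun y => 1 - p + p * Real.exp y with hu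
  have hupos : ∀ y, 0 < u y := by
    intro y
    have he := Real.exp_pos y
    rcases eq_or_lt_of_le hp1 with h | h
    · simp only [hu]; nlinarith
    · simp only [hu]; nlinarith [mul_nonneg hp0 he.le]
  have hud : ∀ y, HasDerivAt u (p * Real.exp y) y := by
    intro y
    exact ((Real.hasDerivAt_exp y).const_mul p).const_add (1 - p)
  set φ : ℝ → ℝ := fun y => p + y / 4 - p * Real.exp y / u y with hφ
  set f : ℝ → ℝ := fun y => p * y + y ^ 2 / 8 - Real.log (u y) with hf
  have hfd : ∀ y, HasDerivAt f (φ y) y := by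
    intro y
    have h1 : HasDerivAt (fun y : ℝ => p * y + y ^ 2 / 8) (p + y / 4) y := by
      have := ((hasDerivAt_id y).const_mul p).add ((hasDerivAt_pow 2 y).div_const 8)
      exact this.congr_deriv (by push_cast; ring)
    have h2 : HasDerivAt (fun y => Real.log (u y)) (p * Real.exp y / u y) y :=
      (hud y).log (hupos y).ne'
    exact h1.sub h2
  have hφd : ∀ y, HasDerivAt φ
      (1 / 4 - (p * Real.exp y * u y - p * Real.exp y * (p * Real.exp y)) / (u y) ^ 2) y := by
    intro y
    have h1 : HasDerivAt (fun y : ℝ => p + y / 4) (1 / 4) y := by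
      simpa using ((hasDerivAt_id y).div_const 4).const_add p
    have h2 : HasDerivAt (fun y => p * Real.exp y / u y)
        ((p * Real.exp y * u y - p * Real.exp y * (p * Real.exp y)) / (u y) ^ 2) y :=
      ((Real.hasDerivAt_exp y).const_mul p).div (hud y) (hupos y).ne'
    exact h1.sub h2
  have hφmono : Monotone φ := by
    apply monotone_of_deriv_nonneg (fun y => (hφd y).differentiableAt)
    intro y
    rw [(hφd y).deriv, sub_nonneg, div_le_iff₀ (pow_pos (hupos y) 2)]
    have hv := hupos y
    have huy : u y = 1 - p + p * Real.exp y := rfl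
    nlinarith [sq_nonneg (p * Real.exp y - (1 - p))]
  have hφ0 : φ 0 = 0 := by
    simp only [hφ, hu, Real.exp_zero, mul_one]
    field_simp; ring
  have hf0 : f 0 = 0 := by
    simp [hf, hu]
  have hfnonneg : ∀ y, 0 ≤ f y := by
    intro y
    have hdiff : Differentiable ℝ f := fun y => (hfd y).differentiableAt
    rcases le_total 0 y with h | h
    · have hm : MonotoneOn f (Set.Ici 0) := by
        apply monotoneOn_of_deriv_nonneg (convex_Ici 0) hdiff.continuous.continuousOn
          (hdiff.differentiableOn)
        intro z hz
        rw [interior_Ici] at hz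
        rw [(hfd z).deriv]
        calc (0:ℝ) = φ 0 := hφ0.symm
          _ ≤ φ z := hφmono hz.le
      calc (0:ℝ) = f 0 := hf0.symm
        _ ≤ f y := hm (by simp) (by simpa using h) h
    · have hm : AntitoneOn f (Set.Iic 0) := by
        apply antitoneOn_of_deriv_nonpos (convex_Iic 0) hdiff.continuous.continuousOn
          (hdiff.differentiableOn)
        intro z hz
        rw [interior_Iic] at hz
        rw [(hfd z).deriv]
        calc φ z ≤ φ 0 := hφmono hz.le
          _ = 0 := hφ0
      calc (0:ℝ) = f 0 := hf0.symm
        _ ≤ f y := hm (by simpa using h) (by simp) h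
  have := hfnonneg x
  rw [← Real.log_le_iff_le_exp (hupos x)]
  simp only [hf] at this
  linarith

theorem talagrand_inequality {Ω : Type*} [MeasurableSpace Ω] (μ : Measure Ω)
    [IsProbabilityMeasure μ] (g : Ω → ℝ) (hg : Measurable g)
    (hg0 : ∀ ω, 0 ≤ g ω) (hg1 : ∀ ω, g ω ≤ 1) (t : ℝ) (ht : 0 ≤ t)
    (α : ℝ) (hα : 0 < α) :
    (∫ ω, (if g ω = 0 then Real.exp t else min (Real.exp t) ((g ω) ^ (-α))) ∂μ) *
        (∫ ω, g ω ∂μ) ^ α ≤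
      Real.exp (t ^ 2 * (α + 1) / (8 * α)) := by
  classical
  have intg : Integrable g μ := by
    apply (integrable_const (1:ℝ)).mono' hg.aestronglyMeasurable
    refine Filter.Eventually.of_forall fun ω => ?_
    rw [Real.norm_eq_abs, abs_of_nonneg (hg0 ω)]
    exact hg1 ω
  have hgint0 : 0 ≤ ∫ ω, g ω ∂μ := integral_nonneg hg0
  rcases eq_or_lt_of_le ht with h0 | htpos
  · -- t = 0 case
    have hone : ∀ ω, (if g ω = 0 then Real.exp t else min (Real.exp t) ((g ω) ^ (-α))) = 1 := by
      intro ω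
      by_cases h : g ω = 0
      · simp [h, ← h0]
      · have hgpos : 0 < g ω := (hg0 ω).lt_of_ne (Ne.symm h)
        have h1 : (1:ℝ) ≤ g ω ^ (-α) :=
          Real.one_le_rpow_of_pos_of_le_one_of_nonpos hgpos (hg1 ω) (by linarith)
        simp [h, ← h0, min_eq_left h1]
    rw [integral_congr_ae (Filter.Eventually.of_forall hone)]
    simp only [integral_const, measure_univ, probReal_univ, ENNReal.toReal_one, smul_eq_mul, mul_one, one_mul]
    have hg_le1 : ∫ ω, g ω ∂μ ≤ 1 := by
      have := integral_mono intg (integrable_const 1) hg1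
      simpa using this
    calc (∫ ω, g ω ∂μ) ^ α ≤ 1 := Real.rpow_le_one hgint0 hg_le1 hα.le
      _ ≤ Real.exp (t ^ 2 * (α + 1) / (8 * α)) := by
          rw [← h0]; norm_num
  · -- t > 0 case
    set M := t / α with hM
    have hMpos : 0 < M := div_pos htpos hα
    set Y : Ω → ℝ := fun ω => if g ω = 0 then M else min M (-Real.log (g ω)) with hY
    have hYmeas : Measurable Y := by
      apply Measurable.ite (hg (measurableSet_singleton 0)) measurable_const
      exact measurable_const.min (Real.measurable_log.comp hg).neg
    have hY0 : ∀ ω, 0 ≤ Y ω := by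
      intro ω
      by_cases h : g ω = 0
      · simp [hY, h, hMpos.le]
      · have hgpos : 0 < g ω := (hg0 ω).lt_of_ne (Ne.symm h)
        simp only [hY, if_neg h]
        exact le_min hMpos.le (by simpa using Real.log_nonpos (hg0 ω) (hg1 ω))
    have hYM : ∀ ω, Y ω ≤ M := by
      intro ω
      by_cases h : g ω = 0
      · simp [hY, h]
      · simp only [hY, if_neg h]
        exact min_le_left _ _
    have hYint : Integrable Y μ := by
      apply (integrable_const M).mono' hYmeas.aestronglyMeasurable
      refine Filter.Eventually.of_forall fun ω => ?_
      rw [Real.norm_eq_abs, abs_of_nonneg (hY0 ω)]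
      exact hYM ω
    -- rewrite the integrand
    have key1 : ∀ ω, (if g ω = 0 then Real.exp t else min (Real.exp t) ((g ω) ^ (-α)))
        = Real.exp (α * Y ω) := by
      intro ω
      by_cases h : g ω = 0
      · simp only [hY, h, if_pos, hM]
        rw [mul_div_cancel₀ _ hα.ne']
      · have hgpos : 0 < g ω := (hg0 ω).lt_of_ne (Ne.symm h)
        simp only [hY, if_neg h]
        rw [Real.rpow_def_of_pos hgpos, ← Real.exp_monotone.map_min]
        congr 1
        rw [mul_min_of_nonneg _ _ hα.le]
        congr 1
        · rw [hM, mul_div_cancel₀ _ hα.ne']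
        · ring
    have key2 : ∀ ω, g ω ≤ Real.exp (-Y ω) := by
      intro ω
      by_cases h : g ω = 0
      · rw [h]; exact (Real.exp_pos _).le
      · have hgpos : 0 < g ω := (hg0 ω).lt_of_ne (Ne.symm h)
        simp only [hY, if_neg h]
        have h2 : Real.log (g ω) ≤ -min M (-Real.log (g ω)) := by
          have := min_le_right M (-Real.log (g ω))
          linarith
        calc g ω = Real.exp (Real.log (g ω)) := (Real.exp_log hgpos).symm
          _ ≤ _ := Real.exp_le_exp.2 h2
    set I := ∫ ω, Y ω ∂μ with hI
    have hI0 : 0 ≤ I := integral_nonneg hY0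
    have hIM : I ≤ M := by
      have := integral_mono hYint (integrable_const M) hYM
      simpa using this
    set q := I / M with hq
    have hq0 : 0 ≤ q := div_nonneg hI0 hMpos.le
    have hq1 : q ≤ 1 := (div_le_one hMpos).2 hIM
    -- convexity pointwise bound
    have conv : ∀ (c y : ℝ), 0 ≤ y → y ≤ M →
        Real.exp (c * y) ≤ 1 + y * ((Real.exp (c * M) - 1) / M) := by
      intro c y hy0 hyM
      have hθ0 : 0 ≤ y / M := div_nonneg hy0 hMpos.le
      have hθ1 : y / M ≤ 1 := (div_le_one hMpos).2 hyM
      have h := convexOn_exp.2 (Set.mem_univ (0:ℝ)) (Set.mem_univ (c * M))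
        (by linarith : (0:ℝ) ≤ 1 - y / M) hθ0 (by ring)
      simp only [smul_eq_mul, mul_zero, Real.exp_zero, mul_one, zero_add] at h
      have harg : y / M * (c * M) = c * y := by field_simp
      rw [harg] at h
      calc Real.exp (c * y) ≤ (1 - y / M) + y / M * Real.exp (c * M) := by linarith
        _ = 1 + y * ((Real.exp (c * M) - 1) / M) := by field_simp; ring
    -- integral bounds
    have intExpY : Integrable (fun ω => Real.exp (α * Y ω)) μ := by
      apply (integrable_const (Real.exp (α * M))).mono'
        ((hYmeas.const_mul α).exp.aestronglyMeasurable)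
      refine Filter.Eventually.of_forall fun ω => ?_
      rw [Real.norm_eq_abs, abs_of_nonneg (Real.exp_pos _).le]
      exact Real.exp_le_exp.2 (mul_le_mul_of_nonneg_left (hYM ω) hα.le)
    have intLin : ∀ c : ℝ, Integrable (fun ω => 1 + Y ω * ((Real.exp (c * M) - 1) / M)) μ :=
      fun c => (integrable_const 1).add (hYint.mul_const _)
    have boundA : ∫ ω, Real.exp (α * Y ω) ∂μ ≤ 1 + I * ((Real.exp (α * M) - 1) / M) := by
      have h := integral_mono intExpY (intLin α)
        (fun ω => conv α (Y ω) (hY0 ω) (hYM ω))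
      rwa [integral_add (integrable_const 1) (hYint.mul_const _), integral_const,
        integral_mul_const, probReal_univ, one_smul] at h
    have intExpNegY : Integrable (fun ω => Real.exp (-Y ω)) μ := by
      apply (integrable_const (1:ℝ)).mono' (hYmeas.neg.exp.aestronglyMeasurable)
      refine Filter.Eventually.of_forall fun ω => ?_
      rw [Real.norm_eq_abs, abs_of_nonneg (Real.exp_pos _).le, ← Real.exp_zero]
      exact Real.exp_le_exp.2 (by rw [Pi.neg_apply]; linarith [hY0 ω])
    have boundB : ∫ ω, g ω ∂μ ≤ 1 + I * ((Real.exp ((-1) * M) - 1) / M) := by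
      have h1 : ∫ ω, g ω ∂μ ≤ ∫ ω, Real.exp (-Y ω) ∂μ :=
        integral_mono intg intExpNegY key2
      have h2 : ∫ ω, Real.exp (-Y ω) ∂μ ≤ 1 + I * ((Real.exp ((-1) * M) - 1) / M) := by
        have h := integral_mono intExpNegY (intLin (-1))
          (fun ω => by simpa using conv (-1) (Y ω) (hY0 ω) (hYM ω))
        rwa [integral_add (integrable_const 1) (hYint.mul_const _), integral_const,
          integral_mul_const, probReal_univ, one_smul] at h
      linarith
    -- scalar Hoeffding applications
    have hAeq : 1 + I * ((Real.exp (α * M) - 1) / M) = 1 - q + q * Real.exp (α * M) := by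
      rw [hq]; field_simp; ring
    have hBeq : 1 + I * ((Real.exp ((-1) * M) - 1) / M) = 1 - q + q * Real.exp (-M) := by
      rw [hq]; field_simp; ring
    have h1 := hoeff_scalar q (α * M) hq0 hq1
    have h2 := hoeff_scalar q (-M) hq0 hq1
    have hFa : ∫ ω, Real.exp (α * Y ω) ∂μ ≤ Real.exp (q * (α * M) + (α * M) ^ 2 / 8) := by
      calc ∫ ω, Real.exp (α * Y ω) ∂μ ≤ 1 + I * ((Real.exp (α * M) - 1) / M) := boundA
        _ = 1 - q + q * Real.exp (α * M) := hAeq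
        _ ≤ _ := h1
    have hFb : (∫ ω, g ω ∂μ) ^ α ≤ Real.exp ((q * (-M) + (-M) ^ 2 / 8) * α) := by
      have hb : ∫ ω, g ω ∂μ ≤ Real.exp (q * (-M) + (-M) ^ 2 / 8) := by
        calc ∫ ω, g ω ∂μ ≤ 1 + I * ((Real.exp ((-1) * M) - 1) / M) := boundB
          _ = 1 - q + q * Real.exp (-M) := hBeq
          _ ≤ _ := h2
      calc (∫ ω, g ω ∂μ) ^ α ≤ (Real.exp (q * (-M) + (-M) ^ 2 / 8)) ^ α :=
            Real.rpow_le_rpow hgint0 hb hα.le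
        _ = Real.exp ((q * (-M) + (-M) ^ 2 / 8) * α) := (Real.exp_mul _ _).symm
    rw [integral_congr_ae (Filter.Eventually.of_forall key1)]
    calc (∫ ω, Real.exp (α * Y ω) ∂μ) * (∫ ω, g ω ∂μ) ^ α
        ≤ Real.exp (q * (α * M) + (α * M) ^ 2 / 8) *
            Real.exp ((q * (-M) + (-M) ^ 2 / 8) * α) := by
          apply mul_le_mul hFa hFb (Real.rpow_nonneg hgint0 α) (Real.exp_pos _).le
      _ = Real.exp (q * (α * M) + (α * M) ^ 2 / 8 + (q * (-M) + (-M) ^ 2 / 8) * α) :=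
          (Real.exp_add _ _).symm
      _ = Real.exp (t ^ 2 * (α + 1) / (8 * α)) := by
          congr 1
          rw [hM]
          field_simp
          ring
end

section
/- (One-dimensional base case) For any measurable A ⊂ [0,1] with vol[A] = σ > 0, any p > 0, t ≥ 0, and α > 0, letting f(x) = min over y∈A of |x-y|^p, we have ∫₀¹ e^{t·f(x)} dx ≤ σ + (1-σ)e^t ≤ σ^{-α}·exp(t²(α+1)/(8α)). -/
open Real MeasureTheory

lemma part2_bound (σ t α : ℝ) (hσ : 0 < σ) (hσ1 : σ ≤ 1) (ht : 0 ≤ t) (hα : 0 < α)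
    (hhoeff : σ + (1-σ) * Real.exp t ≤ Real.exp ((1-σ) * t + t^2/8))
    (hlog : 2 * (1-σ)^2 ≤ -Real.log σ) :
    σ + (1 - σ) * Real.exp t ≤ σ ^ (-α) * Real.exp (t ^ 2 * (α + 1) / (8 * α)) := by
  set u := 1 - σ with hu
  set L := -Real.log σ with hL
  have hrw : σ ^ (-α) * Real.exp (t ^ 2 * (α + 1) / (8 * α))
      = Real.exp (α * L + t ^ 2 * (α + 1) / (8 * α)) := by
    rw [Real.rpow_def_of_pos hσ, ← Real.exp_add]
    rw [hL]; congr 1; ring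
  rw [hrw]
  clear_value u L
  refine hhoeff.trans (Real.exp_le_exp.2 ?_)
  have hsplit : t^2*(α+1)/(8*α) = t^2/8 + t^2/(8*α) := by field_simp
  have hdiv : t^2/(8*α)*(8*α) = t^2 := by field_simp
  have hαL : 2*α*u^2 ≤ α * L := by nlinarith
  rw [hsplit]
  have hid : 2*α*(2*α*u^2 + t^2/(8*α) - u*t) = (2*α*u - t/2)^2 := by
    field_simp; ring
  have hkey : 0 ≤ 2*α*u^2 + t^2/(8*α) - u*t := by
    nlinarith [sq_nonneg (2*α*u - t/2)]
  linarith

lemma log_ge_sq (σ : ℝ) (h0 : 0 < σ) (h1 : σ ≤ 1) : 2 * (1 - σ)^2 ≤ -Real.log σ := by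
  set G : ℝ → ℝ := fun x => -Real.log x - 2 * (1 - x)^2 with hG
  have key : AntitoneOn G (Set.Icc σ 1) := by
    apply antitoneOn_of_deriv_nonpos (convex_Icc σ 1)
    · apply ContinuousOn.sub
      · exact (Real.continuousOn_log.mono (fun x hx => by
          simp only [Set.mem_compl_iff, Set.mem_singleton_iff]
          exact ne_of_gt (lt_of_lt_of_le h0 hx.1))).neg
      · fun_prop
    · intro x hx
      have hx' : x ∈ Set.Icc σ 1 := interior_subset hx
      have hxpos : 0 < x := lt_of_lt_of_le h0 hx'.1
      exact (((Real.differentiableAt_log hxpos.ne').neg).sub (by fun_prop)).differentiableWithinAt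
    · intro x hx
      rw [interior_Icc] at hx
      have hxpos : 0 < x := lt_of_lt_of_le h0 hx.1.le
      have hd : HasDerivAt G (-x⁻¹ - 2 * (2 * (1 - x)^1 * (-1))) x := by
        exact ((Real.hasDerivAt_log hxpos.ne').neg).sub
          ((((hasDerivAt_id x).const_sub 1).pow 2).const_mul 2)
      rw [hd.deriv]
      have h4 : (2*x - 1)^2 ≥ 0 := sq_nonneg _
      have : x⁻¹ * x = 1 := inv_mul_cancel₀ hxpos.ne'
      nlinarith [mul_pos hxpos hxpos]
  have := key (Set.left_mem_Icc.2 h1) (Set.right_mem_Icc.2 h1) h1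
  simpa [hG] using this

lemma hoeff_two_point (σ u t : ℝ) (hσ : 0 < σ) (hu : 0 ≤ u) (hsum : σ + u = 1)
    (ht : 0 ≤ t) : σ + u * Real.exp t ≤ Real.exp (u * t + t^2/8) := by
  have hφpos : ∀ x : ℝ, 0 < σ + u * Real.exp x := fun x =>
    add_pos_of_pos_of_nonneg hσ (mul_nonneg hu (Real.exp_pos x).le)
  set F : ℝ → ℝ := fun x => u * x + x^2/8 - Real.log (σ + u * Real.exp x) with hF
  set F' : ℝ → ℝ := fun x => u + x/4 - u * Real.exp x / (σ + u * Real.exp x) with hF'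
  have hφ : ∀ x : ℝ, HasDerivAt (fun y => σ + u * Real.exp y) (u * Real.exp x) x :=
    fun x => ((Real.hasDerivAt_exp x).const_mul u).const_add σ
  have hdF : ∀ x : ℝ, HasDerivAt F (F' x) x := by
    intro x
    have h1 : HasDerivAt (fun y : ℝ => u * y + y^2/8) (u + 2 * x^1 / 8) x := by
      exact (((hasDerivAt_id' x).const_mul u).add ((hasDerivAt_pow 2 x).div_const 8)).congr_deriv (by norm_num)
    have h2 : HasDerivAt (fun y => Real.log (σ + u * Real.exp y))
        (u * Real.exp x / (σ + u * Real.exp x)) x := (hφ x).log (hφpos x).ne'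
    have := h1.sub h2
    refine this.congr_deriv ?_
    simp only [hF']; ring
  have hdF' : ∀ x : ℝ, HasDerivAt F'
      (1/4 - σ * (u * Real.exp x) / (σ + u * Real.exp x)^2) x := by
    intro x
    have h1 : HasDerivAt (fun y : ℝ => u + y/4) (1/4) x := by
      simpa using ((hasDerivAt_id x).div_const 4).const_add u
    have h2 : HasDerivAt (fun y => u * Real.exp y / (σ + u * Real.exp y))
        ((u * Real.exp x * (σ + u * Real.exp x) - u * Real.exp x * (u * Real.exp x)) /
          (σ + u * Real.exp x)^2) x :=
      ((Real.hasDerivAt_exp x).const_mul u).div (hφ x) (hφpos x).ne'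
    have := h1.sub h2
    refine this.congr_deriv ?_
    field_simp
    ring
  have hmono' : Monotone F' := by
    apply monotone_of_deriv_nonneg (fun x => (hdF' x).differentiableAt)
    intro x
    rw [(hdF' x).deriv]
    have h1 := hφpos x
    have h2 : 0 ≤ u * Real.exp x := mul_nonneg hu (Real.exp_pos x).le
    have h3 : (σ - u * Real.exp x)^2 ≥ 0 := sq_nonneg _
    have h4 : 4 * (σ * (u * Real.exp x)) ≤ (σ + u * Real.exp x)^2 := by nlinarith
    have h5 : σ * (u * Real.exp x) / (σ + u * Real.exp x)^2 ≤ 1/4 := by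
      rw [div_le_iff₀ (by positivity)]
      nlinarith
    linarith
  have hF'0 : F' 0 = 0 := by
    simp [hF', hsum]
  have hF'nonneg : ∀ x ≥ (0:ℝ), 0 ≤ F' x := fun x hx => hF'0 ▸ hmono' hx
  have hmono : MonotoneOn F (Set.Ici 0) := by
    apply monotoneOn_of_deriv_nonneg (convex_Ici 0)
      (fun x _ => (hdF x).continuousAt.continuousWithinAt)
      (fun x _ => (hdF x).differentiableAt.differentiableWithinAt)
    intro x hx
    rw [interior_Ici] at hx
    rw [(hdF x).deriv]
    exact hF'nonneg x hx.le
  have hF0 : F 0 = 0 := by simp [hF, hsum]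
  have hFt : 0 ≤ F t := hF0 ▸ hmono (Set.self_mem_Ici) (Set.mem_Ici.2 ht) ht
  have hlog : Real.log (σ + u * Real.exp t) ≤ u * t + t^2/8 := by
    have := hFt; simp only [hF, sub_nonneg] at this; linarith
  calc σ + u * Real.exp t = Real.exp (Real.log (σ + u * Real.exp t)) :=
        (Real.exp_log (hφpos t)).symm
    _ ≤ _ := Real.exp_le_exp.2 hlog

theorem one_dim_exp_moment_bound (A : Set ℝ) (hA : MeasurableSet A)
    (hAsub : A ⊆ Set.Icc 0 1) (σ : ℝ) (hσ : 0 < σ)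
    (hvol : volume A = ENNReal.ofReal σ)
    (p : ℝ) (hp : 0 < p) (t : ℝ) (ht : 0 ≤ t) (α : ℝ) (hα : 0 < α)
    (f : ℝ → ℝ) (hf : ∀ x, f x = sInf ((fun y => |x - y| ^ p) '' A)) :
    (∫ x in Set.Icc (0 : ℝ) 1, Real.exp (t * f x)) ≤ σ + (1 - σ) * Real.exp t ∧
      σ + (1 - σ) * Real.exp t ≤ σ ^ (-α) * Real.exp (t ^ 2 * (α + 1) / (8 * α)) := by
  have hvolIcc : volume (Set.Icc (0:ℝ) 1) = 1 := by
    rw [Real.volume_Icc]; norm_num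
  have hσ1 : σ ≤ 1 := by
    have h1 : volume A ≤ volume (Set.Icc (0:ℝ) 1) := measure_mono hAsub
    rw [hvol, hvolIcc] at h1
    have := (ENNReal.ofReal_le_one).1 h1
    linarith
  have hAne : A.Nonempty := by
    rw [Set.nonempty_iff_ne_empty]
    intro h
    rw [h, measure_empty] at hvol
    have := (ENNReal.ofReal_eq_zero).1 hvol.symm
    linarith
  -- basic facts about f
  have hbdd : ∀ x : ℝ, BddBelow ((fun y => |x - y| ^ p) '' A) := by
    intro x
    refine ⟨0, fun b hb => ?_⟩
    obtain ⟨y, _, rfl⟩ := hb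
    exact Real.rpow_nonneg (abs_nonneg _) p
  have hfA : ∀ x ∈ A, f x = 0 := by
    intro x hx
    rw [hf x]
    apply le_antisymm
    · apply csInf_le (hbdd x)
      exact ⟨x, hx, by simp [Real.zero_rpow hp.ne']⟩
    · apply le_csInf (hAne.image _)
      rintro b ⟨y, _, rfl⟩
      exact Real.rpow_nonneg (abs_nonneg _) p
  have hfle : ∀ x ∈ Set.Icc (0:ℝ) 1, f x ≤ 1 := by
    intro x hx
    obtain ⟨y, hy⟩ := hAne
    have hyI := hAsub hy
    have habs : |x - y| ≤ 1 := abs_le.2 ⟨by linarith [hx.1, hx.2, hyI.1, hyI.2],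
      by linarith [hx.1, hx.2, hyI.1, hyI.2]⟩
    have h1 : |x - y| ^ p ≤ 1 := Real.rpow_le_one (abs_nonneg _) habs hp.le
    rw [hf x]
    exact le_trans (csInf_le (hbdd x) ⟨y, hy, rfl⟩) h1
  -- the comparison function g
  set g : ℝ → ℝ := fun x =>
    A.indicator (fun _ => (1:ℝ)) x + Aᶜ.indicator (fun _ => Real.exp t) x with hg
  have hint1 : IntegrableOn (A.indicator (fun _ => (1:ℝ))) (Set.Icc (0:ℝ) 1) volume := by
    apply Integrable.indicator _ hA
    exact integrableOn_const (by rw [hvolIcc]; exact ENNReal.one_ne_top)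
  have hint2 : IntegrableOn (Aᶜ.indicator (fun _ => Real.exp t)) (Set.Icc (0:ℝ) 1) volume := by
    apply Integrable.indicator _ hA.compl
    exact integrableOn_const (by rw [hvolIcc]; exact ENNReal.one_ne_top)
  have hg_int : IntegrableOn g (Set.Icc (0:ℝ) 1) volume := hint1.add hint2
  have hg_val : (∫ x in Set.Icc (0:ℝ) 1, g x) = σ + (1 - σ) * Real.exp t := by
    rw [hg]
    rw [integral_add hint1 hint2]
    have e1 : (∫ x in Set.Icc (0:ℝ) 1, A.indicator (fun _ => (1:ℝ)) x) = σ := by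
      rw [setIntegral_indicator hA, Set.inter_eq_self_of_subset_right hAsub,
        setIntegral_const, measureReal_def, hvol, smul_eq_mul, mul_one, ENNReal.toReal_ofReal hσ.le]
    have e2 : (∫ x in Set.Icc (0:ℝ) 1, Aᶜ.indicator (fun _ => Real.exp t) x)
        = (1 - σ) * Real.exp t := by
      rw [setIntegral_indicator hA.compl, ← Set.diff_eq, setIntegral_const, smul_eq_mul]
      congr 1
      rw [measureReal_def, measure_diff hAsub hA.nullMeasurableSet (by rw [hvol]; exact ENNReal.ofReal_ne_top),
        hvolIcc, hvol]
      rw [← ENNReal.ofReal_one, ← ENNReal.ofReal_sub _ hσ.le,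
        ENNReal.toReal_ofReal (by linarith)]
    rw [e1, e2]
  have hbd : ∀ x ∈ Set.Icc (0:ℝ) 1, Real.exp (t * f x) ≤ g x := by
    intro x hx
    by_cases hxA : x ∈ A
    · have : g x = 1 := by
        simp [hg, Set.indicator_of_mem hxA,
          Set.indicator_of_notMem (by simp [hxA] : x ∉ Aᶜ)]
      rw [this, hfA x hxA, mul_zero, Real.exp_zero]
    · have : g x = Real.exp t := by
        simp [hg, Set.indicator_of_notMem hxA,
          Set.indicator_of_mem (by simp [hxA] : x ∈ Aᶜ)]
      rw [this]
      apply Real.exp_le_exp.2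
      calc t * f x ≤ t * 1 := mul_le_mul_of_nonneg_left (hfle x hx) ht
        _ = t := mul_one t
  constructor
  · by_cases hint : IntegrableOn (fun x => Real.exp (t * f x)) (Set.Icc (0:ℝ) 1) volume
    · calc (∫ x in Set.Icc (0:ℝ) 1, Real.exp (t * f x))
          ≤ ∫ x in Set.Icc (0:ℝ) 1, g x :=
            setIntegral_mono_on hint hg_int measurableSet_Icc hbd
        _ = σ + (1 - σ) * Real.exp t := hg_val
    · rw [integral_undef hint]
      have := Real.exp_pos t
      nlinarith
  · exact part2_bound σ t α hσ hσ1 ht hα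
      (by simpa using hoeff_two_point σ (1 - σ) t hσ (by linarith) (by ring) ht)
      (log_ge_sq σ hσ hσ1)
end

section
/- (Exponential moment bound on the cube) For any measurable A ⊂ [0,1]ⁿ with positive volume, any p > 0, t ≥ 0, α > 0, letting f(x,A) = min_{y∈A} Σᵢ|xᵢ-yᵢ|^p, we have ∫_{[0,1]ⁿ} e^{t·f(x,A)} dx ≤ vol[A]^{-α}·exp(n·t²(α+1)/(8α)). -/
open Real MeasureTheory Set

namespace CubeAux

noncomputable def cf (p : ℝ) {n : ℕ} (A : Set (Fin n → ℝ)) (x : Fin n → ℝ) : ℝ :=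
  sInf ((fun y => ∑ i, |x i - y i| ^ p) '' A)

variable {p : ℝ} {n : ℕ}

lemma phi_nonneg (x y : Fin n → ℝ) : 0 ≤ ∑ i, |x i - y i| ^ p :=
  Finset.sum_nonneg fun i _ => Real.rpow_nonneg (abs_nonneg _) _

lemma bddPhi (x : Fin n → ℝ) (A : Set (Fin n → ℝ)) :
    BddBelow ((fun y => ∑ i, |x i - y i| ^ p) '' A) := by
  refine ⟨0, ?_⟩
  rintro b ⟨y, -, rfl⟩
  exact phi_nonneg x y

lemma cf_le_of_mem {A : Set (Fin n → ℝ)} {y : Fin n → ℝ} (hy : y ∈ A) (x : Fin n → ℝ) :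
    cf p A x ≤ ∑ i, |x i - y i| ^ p :=
  csInf_le (bddPhi x A) ⟨y, hy, rfl⟩

lemma le_cf {A : Set (Fin n → ℝ)} (hne : A.Nonempty) {x : Fin n → ℝ} {b : ℝ}
    (h : ∀ y ∈ A, b ≤ ∑ i, |x i - y i| ^ p) : b ≤ cf p A x := by
  refine le_csInf (hne.image _) ?_
  rintro c ⟨y, hy, rfl⟩
  exact h y hy

lemma cf_nonneg {A : Set (Fin n → ℝ)} (hne : A.Nonempty) (x : Fin n → ℝ) :
    0 ≤ cf p A x :=
  le_cf hne fun y _ => phi_nonneg x y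

lemma cf_mono {A B : Set (Fin n → ℝ)} (hBA : B ⊆ A) (hBne : B.Nonempty) (x : Fin n → ℝ) :
    cf p A x ≤ cf p B x := by
  refine le_csInf (hBne.image _) ?_
  rintro c ⟨y, hy, rfl⟩
  exact cf_le_of_mem (hBA hy) x

lemma phi_le_n (hp : 0 < p) {x y : Fin n → ℝ} (hx : x ∈ Icc (0 : Fin n → ℝ) 1)
    (hy : y ∈ Icc (0 : Fin n → ℝ) 1) : (∑ i, |x i - y i| ^ p) ≤ n := by
  have : ∀ i : Fin n, |x i - y i| ^ p ≤ 1 := by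
    intro i
    apply Real.rpow_le_one (abs_nonneg _) _ hp.le
    rw [abs_le]
    constructor
    · have := hx.1 i; have := hy.2 i
      simp only [Pi.zero_apply, Pi.one_apply] at *
      linarith
    · have := hx.2 i; have := hy.1 i
      simp only [Pi.zero_apply, Pi.one_apply] at *
      linarith
  calc (∑ i, |x i - y i| ^ p) ≤ ∑ _i : Fin n, (1 : ℝ) :=
        Finset.sum_le_sum fun i _ => this i
    _ = n := by simp

lemma cf_le_n (hp : 0 < p) {A : Set (Fin n → ℝ)} (hne : A.Nonempty)
    (hsub : A ⊆ Icc 0 1) {x : Fin n → ℝ} (hx : x ∈ Icc (0 : Fin n → ℝ) 1) :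
    cf p A x ≤ n := by
  obtain ⟨y, hy⟩ := hne
  exact (cf_le_of_mem hy x).trans (phi_le_n hp hx (hsub hy))

lemma continuous_phi_x (hp : 0 < p) (y : Fin n → ℝ) :
    Continuous fun x : Fin n → ℝ => ∑ i, |x i - y i| ^ p :=
  continuous_finset_sum _ fun i _ =>
    (((continuous_apply i).sub continuous_const).abs).rpow_const fun _ => Or.inr hp.le

lemma continuous_phi_y (hp : 0 < p) (x : Fin n → ℝ) :
    Continuous fun y : Fin n → ℝ => ∑ i, |x i - y i| ^ p :=
  continuous_finset_sum _ fun i _ =>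
    ((continuous_const.sub (continuous_apply i)).abs).rpow_const fun _ => Or.inr hp.le

lemma cf_measurable (hp : 0 < p) {A : Set (Fin n → ℝ)} (hne : A.Nonempty) :
    Measurable (cf p A) := by
  obtain ⟨s, hsc, hsd⟩ := TopologicalSpace.exists_countable_dense (↥A)
  set D : Set (Fin n → ℝ) := Subtype.val '' s with hD
  have hDA : D ⊆ A := Subtype.coe_image_subset A s
  have hDc : D.Countable := hsc.image _
  have hAD : A ⊆ closure D := by
    intro a ha
    have h1 : (⟨a, ha⟩ : ↥A) ∈ closure s := hsd.closure_eq ▸ mem_univ _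
    have h2 : Subtype.val '' closure s ⊆ closure D :=
      image_closure_subset_closure_image continuous_subtype_val
    exact h2 ⟨_, h1, rfl⟩
  have hDne : D.Nonempty := by
    obtain ⟨a, ha⟩ := hne
    exact closure_nonempty_iff.1 ⟨a, hAD ha⟩
  obtain ⟨y, hy⟩ := Set.Countable.exists_eq_range hDc hDne
  have key : ∀ x, cf p A x = ⨅ k : ℕ, ∑ i, |x i - y k i| ^ p := by
    intro x
    have hbdd : BddBelow (range fun k : ℕ => ∑ i, |x i - y k i| ^ p) := by
      refine ⟨0, ?_⟩
      rintro b ⟨k, rfl⟩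
      exact phi_nonneg x (y k)
    apply le_antisymm
    · refine le_ciInf fun k => cf_le_of_mem (hDA ?_) x
      rw [hy]; exact mem_range_self k
    · refine le_cf hne fun a haA => ?_
      have hcl : IsClosed {y' : Fin n → ℝ |
          (⨅ k : ℕ, ∑ i, |x i - y k i| ^ p) ≤ ∑ i, |x i - y' i| ^ p} :=
        isClosed_le continuous_const (continuous_phi_y hp x)
      have hsubD : D ⊆ {y' : Fin n → ℝ |
          (⨅ k : ℕ, ∑ i, |x i - y k i| ^ p) ≤ ∑ i, |x i - y' i| ^ p} := by
        intro d hd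
        rw [hy] at hd
        obtain ⟨k, rfl⟩ := hd
        exact ciInf_le hbdd k
      exact closure_minimal hsubD hcl (hAD haA)
  have : cf p A = fun x => ⨅ k : ℕ, ∑ i, |x i - y k i| ^ p := funext key
  rw [this]
  exact Measurable.iInf fun k => (continuous_phi_x hp (y k)).measurable

/-! ### Hoeffding-type two point inequality -/

lemma exp_convex {s : ℝ} (v : ℝ) (h0 : 0 ≤ s) (h1 : s ≤ 1) :
    Real.exp (s * v) ≤ 1 - s + s * Real.exp v := by
  have h := convexOn_exp.2 (mem_univ (0 : ℝ)) (mem_univ v)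
    (by linarith : (0:ℝ) ≤ 1 - s) h0 (by ring)
  simpa using h

lemma two_point {l : ℝ} (u : ℝ) (h0 : 0 ≤ l) (h1 : l ≤ 1) :
    1 - l + l * Real.exp u ≤ Real.exp (l * u + u ^ 2 / 8) := by
  rcases eq_or_lt_of_le h0 with rfl | hl0
  · simpa using Real.one_le_exp (by positivity)
  have hD : ∀ v : ℝ, 0 < 1 - l + l * Real.exp v := by
    intro v
    have := Real.exp_pos v
    nlinarith
  set F : ℝ → ℝ := fun v => l * v + v ^ 2 / 8 - Real.log (1 - l + l * Real.exp v) with hF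
  set F' : ℝ → ℝ := fun v => l + v / 4 - l * Real.exp v / (1 - l + l * Real.exp v) with hF'
  have hder : ∀ v, HasDerivAt F (F' v) v := by
    intro v
    have h1' : HasDerivAt (fun v : ℝ => 1 - l + l * Real.exp v) (l * Real.exp v) v := by
      simpa using ((Real.hasDerivAt_exp v).const_mul l).const_add (1 - l)
    have h2 : HasDerivAt (fun v : ℝ => Real.log (1 - l + l * Real.exp v))
        (l * Real.exp v / (1 - l + l * Real.exp v)) v := h1'.log (hD v).ne'
    have h3 : HasDerivAt (fun v : ℝ => l * v + v ^ 2 / 8) (l + v / 4) v := by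
      have := ((hasDerivAt_id v).const_mul l).add ((hasDerivAt_pow 2 v).div_const 8)
      refine this.congr_deriv ?_
      simp
      ring
    exact h3.sub h2
  have hder' : ∀ v, HasDerivAt F'
      (1 / 4 - l * (1 - l) * Real.exp v / (1 - l + l * Real.exp v) ^ 2) v := by
    intro v
    have h1' : HasDerivAt (fun v : ℝ => 1 - l + l * Real.exp v) (l * Real.exp v) v := by
      simpa using ((Real.hasDerivAt_exp v).const_mul l).const_add (1 - l)
    have h2 : HasDerivAt (fun v : ℝ => l * Real.exp v) (l * Real.exp v) v :=
      (Real.hasDerivAt_exp v).const_mul l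
    have h3 : HasDerivAt (fun v : ℝ => l * Real.exp v / (1 - l + l * Real.exp v))
        ((l * Real.exp v * (1 - l + l * Real.exp v) - l * Real.exp v * (l * Real.exp v)) /
          (1 - l + l * Real.exp v) ^ 2) v := h2.div h1' (hD v).ne'
    have h4 : HasDerivAt (fun v : ℝ => l + v / 4) (1 / 4) v := by
      simpa using (hasDerivAt_id v).div_const 4 |>.const_add l
    have h5 := h4.sub h3
    refine h5.congr_deriv ?_
    have := (hD v).ne'
    field_simp
    ring
  have hF'0 : F' 0 = 0 := by simp [hF']
  have hF'mono : Monotone F' := by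
    have hdiff : Differentiable ℝ F' := fun v => (hder' v).differentiableAt
    refine monotone_of_deriv_nonneg hdiff ?_
    intro v
    rw [(hder' v).deriv]
    have hDv := hD v
    have hev := Real.exp_pos v
    have key : 4 * (l * (1 - l) * Real.exp v) ≤ (1 - l + l * Real.exp v) ^ 2 := by
      nlinarith [sq_nonneg (1 - l - l * Real.exp v)]
    rw [sub_nonneg, div_le_iff₀ (by positivity)]
    nlinarith
  have hF0 : F 0 = 0 := by simp [hF]
  have hFnonneg : ∀ u, 0 ≤ F u := by
    intro u
    rcases le_total 0 u with hu | hu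
    · have hmono : MonotoneOn F (Ici (0:ℝ)) := by
        apply monotoneOn_of_deriv_nonneg (convex_Ici 0)
          (fun v _ => (hder v).continuousAt.continuousWithinAt)
          (fun v _ => (hder v).differentiableAt.differentiableWithinAt)
        intro v hv
        rw [(hder v).deriv]
        rw [interior_Ici] at hv
        have : F' 0 ≤ F' v := hF'mono (le_of_lt hv)
        rw [hF'0] at this
        exact this
      have := hmono (self_mem_Ici) (by exact hu) hu
      rw [hF0] at this; exact this
    · have hmono : AntitoneOn F (Iic (0:ℝ)) := by
        apply antitoneOn_of_deriv_nonpos (convex_Iic 0)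
          (fun v _ => (hder v).continuousAt.continuousWithinAt)
          (fun v _ => (hder v).differentiableAt.differentiableWithinAt)
        intro v hv
        rw [(hder v).deriv]
        rw [interior_Iic] at hv
        have : F' v ≤ F' 0 := hF'mono (le_of_lt hv)
        rw [hF'0] at this
        exact this
      have := hmono (by exact hu) (self_mem_Iic) hu
      rw [hF0] at this; exact this
  have h := hFnonneg u
  have hlog : Real.log (1 - l + l * Real.exp u) ≤ l * u + u ^ 2 / 8 := by
    simp only [hF] at h; linarith
  calc 1 - l + l * Real.exp u = Real.exp (Real.log (1 - l + l * Real.exp u)) :=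
        (Real.exp_log (hD u)).symm
    _ ≤ Real.exp (l * u + u ^ 2 / 8) := Real.exp_le_exp.2 hlog

/-! ### integrability helper -/

lemma intOn {X : Type*} [MeasurableSpace X] {μ : Measure X} {s : Set X} (hs : μ s ≠ ⊤)
    {f : X → ℝ} (hf : AEStronglyMeasurable f (μ.restrict s)) (C : ℝ)
    (hC : ∀ x ∈ s, |f x| ≤ C) (hsm : MeasurableSet s) : IntegrableOn f s μ := by
  refine Integrable.mono' ((integrableOn_const_iff (C := C)).2 (Or.inr hs.lt_top)) hf ?_
  rw [ae_restrict_iff' hsm]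
  exact Filter.Eventually.of_forall fun x hx => by
    simpa [Real.norm_eq_abs] using hC x hx


/-! ### key 1-dimensional lemma -/

lemma key1d {α t : ℝ} (hα : 0 < α) (ht : 0 < t) {h : ℝ → ℝ} (hm : Measurable h)
    (hlb : ∀ ω ∈ Icc (0:ℝ) 1, Real.exp (-(t/α)) ≤ h ω)
    (hub : ∀ ω ∈ Icc (0:ℝ) 1, h ω ≤ 1) :
    (∫ ω in Icc (0:ℝ) 1, h ω ^ (-α)) ≤
      (∫ ω in Icc (0:ℝ) 1, h ω) ^ (-α) * Real.exp (t ^ 2 * (α + 1) / (8 * α)) := by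
  have hvol : volume (Icc (0:ℝ) 1) = 1 := by simp [Real.volume_Icc]
  have hvolne : volume (Icc (0:ℝ) 1) ≠ ⊤ := by rw [hvol]; exact ENNReal.one_ne_top
  set T : ℝ := t / α with hT
  have hT0 : 0 < T := div_pos ht hα
  set s : ℝ → ℝ := fun ω => -Real.log (h ω) / T with hs
  have hsmeas : Measurable s := ((Real.measurable_log.comp hm).neg).div_const T
  have hpos : ∀ ω ∈ Icc (0:ℝ) 1, 0 < h ω := fun ω hω =>
    lt_of_lt_of_le (Real.exp_pos _) (hlb ω hω)
  have hs0 : ∀ ω ∈ Icc (0:ℝ) 1, 0 ≤ s ω := by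
    intro ω hω
    have : Real.log (h ω) ≤ 0 := Real.log_nonpos (hpos ω hω).le (hub ω hω)
    have : 0 ≤ -Real.log (h ω) := by linarith
    positivity
  have hs1 : ∀ ω ∈ Icc (0:ℝ) 1, s ω ≤ 1 := by
    intro ω hω
    have h1 : Real.log (Real.exp (-T)) ≤ Real.log (h ω) :=
      Real.log_le_log (Real.exp_pos _) (hlb ω hω)
    rw [Real.log_exp] at h1
    rw [hs, div_le_one hT0]
    linarith
  have hIs : IntegrableOn s (Icc (0:ℝ) 1) volume := by
    refine CubeAux.intOn hvolne hsmeas.aestronglyMeasurable 1 ?_ measurableSet_Icc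
    intro ω hω
    rw [abs_le]
    exact ⟨by linarith [hs0 ω hω], hs1 ω hω⟩
  set sb : ℝ := ∫ ω in Icc (0:ℝ) 1, s ω with hsb
  have hsb0 : 0 ≤ sb := setIntegral_nonneg measurableSet_Icc hs0
  have hone : (∫ _ω in Icc (0:ℝ) 1, (1:ℝ)) = 1 := by simp [hvol]
  have hsb1 : sb ≤ 1 := by
    calc sb ≤ ∫ _ω in Icc (0:ℝ) 1, (1:ℝ) :=
          setIntegral_mono_on hIs ((integrableOn_const_iff (C := (1:ℝ))).2
            (Or.inr (hvol ▸ ENNReal.one_lt_top))) measurableSet_Icc hs1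
      _ = 1 := hone
  -- exp representations
  have hrepr : ∀ ω ∈ Icc (0:ℝ) 1, h ω ^ (-α) = Real.exp (t * s ω) := by
    intro ω hω
    rw [Real.rpow_def_of_pos (hpos ω hω)]
    congr 1
    rw [hs, hT]
    field_simp
  have hexph : ∀ ω ∈ Icc (0:ℝ) 1, h ω = Real.exp (-(T * s ω)) := by
    intro ω hω
    rw [hs]
    rw [← Real.exp_log (hpos ω hω)]
    congr 1
    field_simp
  -- integrability of the exp forms
  have hIets : IntegrableOn (fun ω => Real.exp (t * s ω)) (Icc (0:ℝ) 1) volume := by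
    refine CubeAux.intOn hvolne
      ((Real.measurable_exp.comp (hsmeas.const_mul t)).aestronglyMeasurable) (Real.exp t) ?_
      measurableSet_Icc
    intro ω hω
    rw [abs_of_nonneg (Real.exp_pos _).le]
    exact Real.exp_le_exp.2 (by nlinarith [hs0 ω hω, hs1 ω hω])
  have hIaff : ∀ (r : ℝ), IntegrableOn (fun ω => 1 - s ω + s ω * r) (Icc (0:ℝ) 1) volume := by
    intro r
    refine CubeAux.intOn hvolne
      (((measurable_const.sub hsmeas).add (hsmeas.mul_const r)).aestronglyMeasurable)
      (2 + |r|) ?_ measurableSet_Icc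
    intro ω hω
    have h1 := hs0 ω hω; have h2 := hs1 ω hω
    have h3 : |s ω * r| ≤ |r| := by
      rw [abs_mul]
      exact mul_le_of_le_one_left (abs_nonneg r) (abs_le.2 ⟨by linarith, h2⟩)
    rw [abs_le] at h3 ⊢
    constructor <;> nlinarith [h3.1, h3.2]
  have haffint : ∀ (r : ℝ),
      (∫ ω in Icc (0:ℝ) 1, (1 - s ω + s ω * r)) = 1 - sb + sb * r := by
    intro r
    have e : (∫ ω in Icc (0:ℝ) 1, (1 - s ω + s ω * r)) =
        (∫ _ω in Icc (0:ℝ) 1, (1:ℝ)) + (∫ ω in Icc (0:ℝ) 1, s ω) * (r - 1) := by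
      rw [← integral_mul_const, ← integral_add ((integrableOn_const_iff (C := (1:ℝ))).2
          (Or.inr (hvol ▸ ENNReal.one_lt_top))) (hIs.mul_const (r - 1))]
      exact integral_congr_ae (Filter.Eventually.of_forall fun ω => by ring)
    rw [e, hone, ← hsb]
    ring
  -- Step 1 : ∫ h^(-α) ≤ exp (sb * t + t²/8)
  have step1 : (∫ ω in Icc (0:ℝ) 1, h ω ^ (-α)) ≤ Real.exp (sb * t + t ^ 2 / 8) := by
    have e1 : (∫ ω in Icc (0:ℝ) 1, h ω ^ (-α)) = ∫ ω in Icc (0:ℝ) 1, Real.exp (t * s ω) :=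
      setIntegral_congr_fun measurableSet_Icc fun ω hω => hrepr ω hω
    have e2 : (∫ ω in Icc (0:ℝ) 1, Real.exp (t * s ω)) ≤
        ∫ ω in Icc (0:ℝ) 1, (1 - s ω + s ω * Real.exp t) := by
      refine setIntegral_mono_on hIets (hIaff _) measurableSet_Icc fun ω hω => ?_
      have := CubeAux.exp_convex (s := s ω) t (hs0 ω hω) (hs1 ω hω)
      simpa [mul_comm] using this
    have e3 : 1 - sb + sb * Real.exp t ≤ Real.exp (sb * t + t ^ 2 / 8) :=
      CubeAux.two_point t hsb0 hsb1
    rw [e1]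
    calc _ ≤ _ := e2
      _ = 1 - sb + sb * Real.exp t := haffint _
      _ ≤ _ := e3
  -- Step 2 : ∫ h ≤ exp (-sb*T + T²/8)
  set m : ℝ := ∫ ω in Icc (0:ℝ) 1, h ω with hm'
  have hIh : IntegrableOn h (Icc (0:ℝ) 1) volume := by
    refine CubeAux.intOn hvolne hm.aestronglyMeasurable 1 ?_ measurableSet_Icc
    intro ω hω
    rw [abs_le]
    exact ⟨by linarith [hpos ω hω], hub ω hω⟩
  have hm0 : 0 < m := by
    have : (∫ _ω in Icc (0:ℝ) 1, Real.exp (-(t/α))) ≤ m := by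
      refine setIntegral_mono_on ((integrableOn_const_iff (C := Real.exp (-(t/α)))).2
        (Or.inr (hvol ▸ ENNReal.one_lt_top))) hIh measurableSet_Icc hlb
    have h2 : (∫ _ω in Icc (0:ℝ) 1, Real.exp (-(t/α))) = Real.exp (-(t/α)) := by
      simp [hvol]
    rw [h2] at this
    exact lt_of_lt_of_le (Real.exp_pos _) this
  have step2 : m ≤ Real.exp (-(sb * T) + T ^ 2 / 8) := by
    have e1 : m = ∫ ω in Icc (0:ℝ) 1, Real.exp (-T * s ω) := by
      refine setIntegral_congr_fun measurableSet_Icc fun ω hω => ?_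
      rw [hexph ω hω]; ring_nf
    have hIeTs : IntegrableOn (fun ω => Real.exp (-T * s ω)) (Icc (0:ℝ) 1) volume := by
      refine CubeAux.intOn hvolne
        ((Real.measurable_exp.comp (hsmeas.const_mul (-T))).aestronglyMeasurable) 1 ?_
        measurableSet_Icc
      intro ω hω
      rw [abs_of_nonneg (Real.exp_pos _).le]
      have h1 := hs0 ω hω
      calc Real.exp (-T * s ω) ≤ Real.exp 0 := Real.exp_le_exp.2 (by nlinarith)
        _ = 1 := Real.exp_zero
    have e2 : (∫ ω in Icc (0:ℝ) 1, Real.exp (-T * s ω)) ≤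
        ∫ ω in Icc (0:ℝ) 1, (1 - s ω + s ω * Real.exp (-T)) := by
      refine setIntegral_mono_on hIeTs (hIaff _) measurableSet_Icc fun ω hω => ?_
      have := CubeAux.exp_convex (s := s ω) (-T) (hs0 ω hω) (hs1 ω hω)
      calc Real.exp (-T * s ω) = Real.exp (s ω * -T) := by ring_nf
        _ ≤ _ := this
    have e3 : 1 - sb + sb * Real.exp (-T) ≤ Real.exp (sb * (-T) + (-T) ^ 2 / 8) :=
      CubeAux.two_point (-T) hsb0 hsb1
    rw [e1]
    calc _ ≤ _ := e2
      _ = 1 - sb + sb * Real.exp (-T) := haffint _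
      _ ≤ Real.exp (sb * (-T) + (-T) ^ 2 / 8) := e3
      _ = Real.exp (-(sb * T) + T ^ 2 / 8) := by ring_nf
  -- Step 3 : combine
  have step3 : Real.exp (sb * t - t ^ 2 / (8 * α)) ≤ m ^ (-α) := by
    have h1 : Real.exp (-(sb * T) + T ^ 2 / 8) ^ (-α) ≤ m ^ (-α) :=
      Real.rpow_le_rpow_of_nonpos hm0 step2 (by linarith)
    have h2 : Real.exp (-(sb * T) + T ^ 2 / 8) ^ (-α) =
        Real.exp (sb * t - t ^ 2 / (8 * α)) := by
      rw [← Real.exp_mul]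
      congr 1
      rw [hT]
      field_simp
      ring
    rw [← h2]; exact h1
  calc (∫ ω in Icc (0:ℝ) 1, h ω ^ (-α)) ≤ Real.exp (sb * t + t ^ 2 / 8) := step1
    _ = Real.exp (sb * t - t ^ 2 / (8 * α)) * Real.exp (t ^ 2 * (α + 1) / (8 * α)) := by
        rw [← Real.exp_add]
        congr 1
        field_simp
        ring
    _ ≤ m ^ (-α) * Real.exp (t ^ 2 * (α + 1) / (8 * α)) :=
        mul_le_mul_of_nonneg_right step3 (Real.exp_pos _).le

/-! ### Main induction -/

lemma rpow_const_measurable (q : ℝ) : Measurable fun x : ℝ => x ^ q := by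
  measurability

lemma vol_Icc_pi (n : ℕ) : volume (Icc (0 : Fin n → ℝ) 1) = 1 := by
  rw [Real.volume_Icc_pi]
  simp

lemma snoc_mem_Icc {n : ℕ} {z : Fin n → ℝ} {ω : ℝ} (hz : z ∈ Icc (0 : Fin n → ℝ) 1)
    (hω : ω ∈ Icc (0:ℝ) 1) : Fin.snoc z ω ∈ Icc (0 : Fin (n+1) → ℝ) 1 := by
  constructor <;> intro i <;> refine Fin.lastCases ?_ ?_ i
  · simpa [Fin.snoc_last] using hω.1
  · intro j; simpa [Fin.snoc_castSucc] using hz.1 j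
  · simpa [Fin.snoc_last] using hω.2
  · intro j; simpa [Fin.snoc_castSucc] using hz.2 j

lemma main (p t α : ℝ) (hp : 0 < p) (ht : 0 < t) (hα : 0 < α) :
    ∀ n : ℕ, ∀ A : Set (Fin n → ℝ), IsCompact A → A.Nonempty → A ⊆ Icc 0 1 →
      0 < volume A →
      (∫ x in Icc (0 : Fin n → ℝ) 1, Real.exp (t * cf p A x)) ≤
        (volume A).toReal ^ (-α) * Real.exp (n * (t ^ 2 * (α + 1) / (8 * α))) := by
  intro n
  induction n with
  | zero =>
    intro A _hK hne _hsub _hpos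
    rw [Nat.cast_zero]
    have hA : A = univ := hne.eq_univ
    have hIcc : Icc (0 : Fin 0 → ℝ) 1 = univ :=
      (Set.nonempty_Icc.2 (le_of_eq (Subsingleton.elim _ _))).eq_univ
    have hvol : volume (univ : Set (Fin 0 → ℝ)) = 1 := by
      rw [← hIcc]; exact vol_Icc_pi 0
    have hcf : ∀ x, cf p A x = 0 := by
      intro x
      rw [hA]
      have : (fun y : Fin 0 → ℝ => ∑ i, |x i - y i| ^ p) '' univ = {0} := by
        rw [Set.image_univ]
        have : (fun y : Fin 0 → ℝ => ∑ i, |x i - y i| ^ p) = fun _ => 0 := by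
          funext y; simp
        rw [this, Set.range_const]
      rw [cf, this, csInf_singleton]
    calc (∫ x in Icc (0 : Fin 0 → ℝ) 1, Real.exp (t * cf p A x))
        = ∫ _x in Icc (0 : Fin 0 → ℝ) 1, (1:ℝ) := by
          refine setIntegral_congr_fun measurableSet_Icc fun x _ => ?_
          rw [hcf x, mul_zero, Real.exp_zero]
      _ = 1 := by rw [hIcc]; simp [Measure.real, hvol]
      _ ≤ (volume A).toReal ^ (-α) * Real.exp (0 * (t ^ 2 * (α + 1) / (8 * α))) := by
          rw [hA, hvol]
          simp
  | succ n IH =>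
    intro A hK hne hsub hpos
    set c := t ^ 2 * (α + 1) / (8 * α) with hc
    have hc0 : 0 ≤ c := by positivity
    set e := MeasurableEquiv.piFinSuccAbove (fun _ : Fin (n+1) => ℝ) (Fin.last n) with he
    have hmp : MeasurePreserving e (volume : Measure (Fin (n+1) → ℝ))
        ((volume : Measure ℝ).prod (volume : Measure (Fin n → ℝ))) := by
      have h1 := measurePreserving_piFinSuccAbove (fun _ : Fin (n+1) => (volume : Measure ℝ))
        (Fin.last n)
      rw [← volume_pi] at h1
      exact h1
    have hsymm : ∀ (ω : ℝ) (z : Fin n → ℝ), e.symm (ω, z) = Fin.snoc z ω := by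
      intro ω z
      rw [he]
      simp [MeasurableEquiv.piFinSuccAbove_symm_apply, Fin.insertNthEquiv,
        Fin.insertNth_last']
    have hesnoc : ∀ (ω : ℝ) (z : Fin n → ℝ), e (Fin.snoc z ω) = (ω, z) := by
      intro ω z
      rw [← hsymm ω z, MeasurableEquiv.apply_symm_apply]
    -- projection and slices
    set B : Set (Fin n → ℝ) := (fun x : Fin (n+1) → ℝ => fun j : Fin n => x j.castSucc) '' A
      with hB
    set sl : ℝ → Set (Fin n → ℝ) := fun ω => {z : Fin n → ℝ | (Fin.snoc z ω : Fin (n+1) → ℝ) ∈ A} with hsl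
    have hinitcont : Continuous fun x : Fin (n+1) → ℝ => fun j : Fin n => x j.castSucc :=
      continuous_pi fun j => continuous_apply _
    have hBK : IsCompact B := hK.image hinitcont
    have hBne : B.Nonempty := hne.image _
    have hBsub : B ⊆ Icc (0 : Fin n → ℝ) 1 := by
      rintro - ⟨x, hx, rfl⟩
      exact ⟨fun j => (hsub hx).1 _, fun j => (hsub hx).2 _⟩
    have hcsnoc : ∀ ω : ℝ, Continuous fun z : Fin n → ℝ => (Fin.snoc z ω : Fin (n+1) → ℝ) := by
      intro ω
      apply continuous_pi
      intro i
      refine Fin.lastCases ?_ ?_ i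
      · simp only [Fin.snoc_last]; exact continuous_const
      · intro j; simp only [Fin.snoc_castSucc]; exact continuous_apply j
    have hslsub : ∀ ω, sl ω ⊆ Icc (0 : Fin n → ℝ) 1 := by
      intro ω z hz
      have h1 := hsub hz
      exact ⟨fun j => by simpa [Fin.snoc_castSucc] using h1.1 (Fin.castSucc j),
        fun j => by simpa [Fin.snoc_castSucc] using h1.2 (Fin.castSucc j)⟩
    have hslK : ∀ ω, IsCompact (sl ω) := by
      intro ω
      exact IsCompact.of_isClosed_subset isCompact_Icc
        (hK.isClosed.preimage (hcsnoc ω)) (hslsub ω)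
    have hslB : ∀ ω, sl ω ⊆ B := by
      intro ω z hz
      exact ⟨Fin.snoc z ω, hz, by funext j; simp [Fin.snoc_castSucc]⟩
    have hAmeas : MeasurableSet A := hK.measurableSet
    have hAe : MeasurableSet (e '' A) := by
      rw [MeasurableEquiv.image_eq_preimage_symm]
      exact e.symm.measurable hAmeas
    have hslice_pre : ∀ ω : ℝ, Prod.mk ω ⁻¹' (e '' A) = sl ω := by
      intro ω
      ext z
      rw [MeasurableEquiv.image_eq_preimage_symm]
      simp only [Set.mem_preimage, hsymm ω z, hsl, Set.mem_setOf_eq]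
    have hmeasvol : Measurable fun ω => volume (sl ω) := by
      simp_rw [← hslice_pre]
      exact measurable_measure_prodMk_left hAe
    have hvolA_eq : volume A = ((volume : Measure ℝ).prod volume) (e '' A) := by
      rw [MeasurableEquiv.image_eq_preimage_symm]
      exact (hmp.symm e).measure_preimage hAmeas.nullMeasurableSet |>.symm
    have hvolA_slice : ((volume : Measure ℝ).prod volume) (e '' A)
        = ∫⁻ ω, volume (sl ω) := by
      rw [Measure.prod_apply hAe]
      simp_rw [hslice_pre]
    -- vol B > 0
    have hvolB_ne_top : volume B ≠ ⊤ := by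
      refine ne_top_of_le_ne_top ?_ (measure_mono hBsub)
      rw [vol_Icc_pi n]
      exact ENNReal.one_ne_top
    have hvolB : 0 < volume B := by
      rcases eq_or_lt_of_le (zero_le : 0 ≤ volume B) with hB0 | hB0
      · exfalso
        have hsubset : e '' A ⊆ (Icc (0:ℝ) 1) ×ˢ B := by
          rintro - ⟨x, hx, rfl⟩
          constructor
          · simp only [he, MeasurableEquiv.piFinSuccAbove_apply]
            exact ⟨(hsub hx).1 _, (hsub hx).2 _⟩
          · refine ⟨x, hx, ?_⟩
            simp only [he, MeasurableEquiv.piFinSuccAbove_apply]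
            funext j
            congr 1
            exact (Fin.succAbove_last_apply j).symm
        have h2 : ((volume : Measure ℝ).prod volume) ((Icc (0:ℝ) 1) ×ˢ B)
            = volume (Icc (0:ℝ) 1) * volume B := Measure.prod_prod _ _
        have h3 : volume A ≤ volume (Icc (0:ℝ) 1) * volume B := by
          rw [hvolA_eq, ← h2]
          exact measure_mono hsubset
        rw [← hB0, mul_zero] at h3
        exact absurd (le_antisymm h3 zero_le) hpos.ne'
      · exact hB0
    set vB : ℝ := (volume B).toReal with hvB
    have hvB0 : 0 < vB := ENNReal.toReal_pos hvolB.ne' hvolB_ne_top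
    have hvB1 : vB ≤ 1 := by
      rw [hvB, ← ENNReal.toReal_one]
      exact ENNReal.toReal_mono ENNReal.one_ne_top
        (by rw [← vol_Icc_pi n]; exact measure_mono hBsub)
    set θ : ℝ := Real.exp (-(t/α)) with hθ
    have hθ0 : 0 < θ := Real.exp_pos _
    have hθ1 : θ ≤ 1 := by
      rw [hθ, Real.exp_le_one_iff]
      have : 0 ≤ t / α := by positivity
      linarith
    set g : ℝ → ℝ := fun ω => (volume (sl ω)).toReal / vB with hg
    set hh : ℝ → ℝ := fun ω => max (g ω) θ with hhh
    have hgmeas : Measurable g := hmeasvol.ennreal_toReal.div_const vB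
    have hhmeas : Measurable hh := hgmeas.max measurable_const
    have hg0 : ∀ ω, 0 ≤ g ω := fun ω => div_nonneg ENNReal.toReal_nonneg hvB0.le
    have hg1 : ∀ ω, g ω ≤ 1 := by
      intro ω
      rw [hg]
      rw [div_le_one hvB0]
      exact ENNReal.toReal_mono hvolB_ne_top (measure_mono (hslB ω))
    -- the two cf inequalities
    have key1 : ∀ (ω : ℝ) (z : Fin n → ℝ), (sl ω).Nonempty →
        cf p A ((Fin.snoc z ω : Fin (n+1) → ℝ)) ≤ cf p (sl ω) z := by
      intro ω z hslne
      refine le_csInf (hslne.image _) ?_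
      rintro - ⟨y, hy, rfl⟩
      have hy' : (Fin.snoc y ω : Fin (n+1) → ℝ) ∈ A := hy
      calc cf p A ((Fin.snoc z ω : Fin (n+1) → ℝ))
          ≤ ∑ i, |(Fin.snoc z ω : Fin (n+1) → ℝ) i - (Fin.snoc y ω : Fin (n+1) → ℝ) i| ^ p := cf_le_of_mem hy' _
        _ = ∑ j, |z j - y j| ^ p := by
            rw [Fin.sum_univ_castSucc]
            simp [Fin.snoc_castSucc, Fin.snoc_last, Real.zero_rpow hp.ne']
    have key2 : ∀ ω ∈ Icc (0:ℝ) 1, ∀ z : Fin n → ℝ,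
        cf p A ((Fin.snoc z ω : Fin (n+1) → ℝ)) ≤ cf p B z + 1 := by
      intro ω hω z
      have hmain : cf p A ((Fin.snoc z ω : Fin (n+1) → ℝ)) - 1 ≤ cf p B z := by
        refine le_csInf (hBne.image _) ?_
        rintro - ⟨y, hyB, rfl⟩
        obtain ⟨x, hx, rfl⟩ := hyB
        have hlast : |ω - x (Fin.last n)| ^ p ≤ 1 := by
          apply Real.rpow_le_one (abs_nonneg _) _ hp.le
          rw [abs_le]
          have h1 := (hsub hx).1 (Fin.last n)
          have h2 := (hsub hx).2 (Fin.last n)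
          simp only [Pi.zero_apply, Pi.one_apply] at h1 h2
          constructor <;> linarith [hω.1, hω.2]
        have hle : cf p A ((Fin.snoc z ω : Fin (n+1) → ℝ)) ≤
            (∑ j, |z j - x j.castSucc| ^ p) + |ω - x (Fin.last n)| ^ p := by
          calc cf p A ((Fin.snoc z ω : Fin (n+1) → ℝ)) ≤ ∑ i, |(Fin.snoc z ω : Fin (n+1) → ℝ) i - x i| ^ p := cf_le_of_mem hx _
            _ = (∑ j, |z j - x j.castSucc| ^ p) + |ω - x (Fin.last n)| ^ p := by
                rw [Fin.sum_univ_castSucc]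
                simp [Fin.snoc_castSucc, Fin.snoc_last]
        have : cf p A ((Fin.snoc z ω : Fin (n+1) → ℝ)) ≤ (∑ j, |z j - x j.castSucc| ^ p) + 1 := by linarith
        linarith
      linarith
    -- measurability of integrands
    have hcfA : Measurable (cf p A) := cf_measurable hp hne
    have hGmeas : Measurable fun x : Fin (n+1) → ℝ => Real.exp (t * cf p A x) :=
      Real.measurable_exp.comp (hcfA.const_mul t)
    set F : ℝ × (Fin n → ℝ) → ℝ := fun q => Real.exp (t * cf p A ((Fin.snoc q.2 q.1 : Fin (n+1) → ℝ))) with hFdef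
    have hFeq : F = fun q => Real.exp (t * cf p A (e.symm q)) := by
      funext q
      rw [hFdef]
      have : e.symm (q.1, q.2) = (Fin.snoc q.2 q.1 : Fin (n+1) → ℝ) := hsymm q.1 q.2
      simp only [Prod.mk.eta] at this
      rw [this]
    have hFmeas : Measurable F := by
      rw [hFeq]
      exact hGmeas.comp e.symm.measurable
    -- rewriting the integral over the cube as iterated integral
    have hex : ∀ x : Fin (n+1) → ℝ, e x = (x (Fin.last n), fun j => x j.castSucc) := by
      intro x
      have h1 : (Fin.snoc (fun j => x j.castSucc) (x (Fin.last n)) : Fin (n+1) → ℝ) = x := by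
        funext i
        refine Fin.lastCases ?_ ?_ i
        · simp [Fin.snoc_last]
        · intro j; simp [Fin.snoc_castSucc]
      conv_lhs => rw [← h1]
      rw [hesnoc]
    have hIccprod : Icc (0 : Fin (n+1) → ℝ) 1 =
        e ⁻¹' ((Icc (0:ℝ) 1) ×ˢ (Icc (0:Fin n → ℝ) 1)) := by
      ext x
      rw [Set.mem_preimage, hex x, Set.mem_prod]
      constructor
      · intro hx
        exact ⟨⟨hx.1 _, hx.2 _⟩, ⟨fun j => hx.1 _, fun j => hx.2 _⟩⟩
      · rintro ⟨h1, h2⟩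
        constructor <;> intro i <;> refine Fin.lastCases ?_ ?_ i
        · exact h1.1
        · intro j; exact h2.1 j
        · exact h1.2
        · intro j; exact h2.2 j
    have hprodvol : ((volume : Measure ℝ).prod volume)
        ((Icc (0:ℝ) 1) ×ˢ (Icc (0:Fin n → ℝ) 1)) = 1 := by
      rw [Measure.prod_prod, vol_Icc_pi n]
      simp [Real.volume_Icc]
    have hFbdd : ∀ q ∈ (Icc (0:ℝ) 1) ×ˢ (Icc (0:Fin n → ℝ) 1), |F q| ≤ Real.exp (t * (n+1)) := by
      rintro ⟨ω, z⟩ ⟨hω, hz⟩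
      have hmem : (Fin.snoc z ω : Fin (n+1) → ℝ) ∈ Icc (0 : Fin (n+1) → ℝ) 1 :=
        snoc_mem_Icc hz hω
      have hcfle : cf p A ((Fin.snoc z ω : Fin (n+1) → ℝ)) ≤ (n+1 : ℕ) := cf_le_n hp hne hsub hmem
      rw [hFdef, abs_of_nonneg (Real.exp_pos _).le]
      apply Real.exp_le_exp.2
      push_cast at hcfle ⊢
      exact mul_le_mul_of_nonneg_left hcfle ht.le
    have hFint : IntegrableOn F ((Icc (0:ℝ) 1) ×ˢ (Icc (0:Fin n → ℝ) 1))
        ((volume : Measure ℝ).prod volume) :=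
      intOn (by rw [hprodvol]; exact ENNReal.one_ne_top) hFmeas.aestronglyMeasurable
        (Real.exp (t * (n+1))) hFbdd (measurableSet_Icc.prod measurableSet_Icc)
    have step1 : (∫ x in Icc (0 : Fin (n+1) → ℝ) 1, Real.exp (t * cf p A x))
        = ∫ ω in Icc (0:ℝ) 1, ∫ z in Icc (0:Fin n → ℝ) 1,
            Real.exp (t * cf p A ((Fin.snoc z ω : Fin (n+1) → ℝ))) := by
      rw [hIccprod]
      have h1 := hmp.setIntegral_preimage_emb e.measurableEmbedding
        (fun q => Real.exp (t * cf p A (e.symm q)))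
        ((Icc (0:ℝ) 1) ×ˢ (Icc (0:Fin n → ℝ) 1))
      have h2 : (∫ x in e ⁻¹' ((Icc (0:ℝ) 1) ×ˢ (Icc (0:Fin n → ℝ) 1)),
          Real.exp (t * cf p A x))
          = ∫ x in e ⁻¹' ((Icc (0:ℝ) 1) ×ˢ (Icc (0:Fin n → ℝ) 1)),
            Real.exp (t * cf p A (e.symm (e x))) := by
        refine setIntegral_congr_fun (e.measurable (measurableSet_Icc.prod measurableSet_Icc)) ?_
        intro x _
        simp
      rw [h2, h1, ← hFeq]
      have h3 := setIntegral_prod F hFint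
      rw [h3]
    -- inner pointwise bound
    have hIH_B := IH B hBK hBne hBsub hvolB
    have hIccn_ne : volume (Icc (0:Fin n → ℝ) 1) ≠ ⊤ := by
      rw [vol_Icc_pi n]; exact ENNReal.one_ne_top
    have hI1_ne : volume (Icc (0:ℝ) 1) ≠ ⊤ := by
      simp [Real.volume_Icc]
    have innerkey : ∀ ω ∈ Icc (0:ℝ) 1,
        (∫ z in Icc (0:Fin n → ℝ) 1, Real.exp (t * cf p A ((Fin.snoc z ω : Fin (n+1) → ℝ))))
          ≤ Real.exp (n * c) * vB ^ (-α) * hh ω ^ (-α) := by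
      intro ω hω
      have hzmeas : Measurable fun z : Fin n → ℝ => Real.exp (t * cf p A ((Fin.snoc z ω : Fin (n+1) → ℝ))) :=
        hGmeas.comp (hcsnoc ω).measurable
      have hintz : IntegrableOn (fun z => Real.exp (t * cf p A ((Fin.snoc z ω : Fin (n+1) → ℝ))))
          (Icc (0:Fin n → ℝ) 1) volume := by
        refine intOn hIccn_ne hzmeas.aestronglyMeasurable (Real.exp (t * (n+1))) ?_
          measurableSet_Icc
        intro z hz
        have hcfle : cf p A ((Fin.snoc z ω : Fin (n+1) → ℝ)) ≤ (n+1 : ℕ) := cf_le_n hp hne hsub (snoc_mem_Icc hz hω)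
        rw [abs_of_nonneg (Real.exp_pos _).le]
        apply Real.exp_le_exp.2
        push_cast at hcfle ⊢
        exact mul_le_mul_of_nonneg_left hcfle ht.le
      have hBbound : (∫ z in Icc (0:Fin n → ℝ) 1, Real.exp (t * cf p A ((Fin.snoc z ω : Fin (n+1) → ℝ))))
          ≤ Real.exp t * (vB ^ (-α) * Real.exp (n * c)) := by
        have hcfB : Measurable (cf p B) := cf_measurable hp hBne
        have hintB : IntegrableOn (fun z => Real.exp (t * (cf p B z + 1)))
            (Icc (0:Fin n → ℝ) 1) volume := by
          refine intOn hIccn_ne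
            ((Real.measurable_exp.comp ((hcfB.add_const 1).const_mul t)).aestronglyMeasurable)
            (Real.exp (t * (n+1))) ?_ measurableSet_Icc
          intro z hz
          have hcfle : cf p B z ≤ n := cf_le_n hp hBne hBsub hz
          rw [abs_of_nonneg (Real.exp_pos _).le]
          apply Real.exp_le_exp.2
          have : cf p B z + 1 ≤ (n:ℝ) + 1 := by linarith
          nlinarith [ht.le]
        have h1 : (∫ z in Icc (0:Fin n → ℝ) 1, Real.exp (t * cf p A ((Fin.snoc z ω : Fin (n+1) → ℝ))))
            ≤ ∫ z in Icc (0:Fin n → ℝ) 1, Real.exp (t * (cf p B z + 1)) := by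
          refine setIntegral_mono_on hintz hintB measurableSet_Icc fun z _ => ?_
          exact Real.exp_le_exp.2 (mul_le_mul_of_nonneg_left (key2 ω hω z) ht.le)
        have h2 : (∫ z in Icc (0:Fin n → ℝ) 1, Real.exp (t * (cf p B z + 1)))
            = Real.exp t * ∫ z in Icc (0:Fin n → ℝ) 1, Real.exp (t * cf p B z) := by
          rw [← integral_const_mul]
          refine setIntegral_congr_fun measurableSet_Icc fun z _ => ?_
          rw [← Real.exp_add]
          ring_nf
        calc (∫ z in Icc (0:Fin n → ℝ) 1, Real.exp (t * cf p A ((Fin.snoc z ω : Fin (n+1) → ℝ))))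
            ≤ _ := h1
          _ = Real.exp t * ∫ z in Icc (0:Fin n → ℝ) 1, Real.exp (t * cf p B z) := h2
          _ ≤ Real.exp t * (vB ^ (-α) * Real.exp (n * c)) := by
              exact mul_le_mul_of_nonneg_left hIH_B (Real.exp_pos _).le
      rcases le_total (g ω) θ with hcase | hcase
      · have hmax : hh ω = θ := by rw [hhh]; exact max_eq_right hcase
        have hθα : θ ^ (-α) = Real.exp t := by
          rw [hθ, ← Real.exp_mul]
          congr 1
          field_simp
        rw [hmax, hθα]
        calc (∫ z in Icc (0:Fin n → ℝ) 1, Real.exp (t * cf p A ((Fin.snoc z ω : Fin (n+1) → ℝ))))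
            ≤ Real.exp t * (vB ^ (-α) * Real.exp (n * c)) := hBbound
          _ = Real.exp (n * c) * vB ^ (-α) * Real.exp t := by ring
      · have hmax : hh ω = g ω := by rw [hhh]; exact max_eq_left hcase
        have hgpos : 0 < g ω := lt_of_lt_of_le hθ0 hcase
        have hslvol_ne : volume (sl ω) ≠ 0 := by
          intro h0
          have hz : g ω = 0 := by simp [hg, h0]
          rw [hz] at hgpos
          exact lt_irrefl 0 hgpos
        have hslvolpos : 0 < volume (sl ω) := pos_iff_ne_zero.2 hslvol_ne
        have hslne : (sl ω).Nonempty := nonempty_of_measure_ne_zero hslvol_ne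
        have hIH_sl := IH (sl ω) (hslK ω) hslne (hslsub ω) hslvolpos
        have hcfsl : Measurable (cf p (sl ω)) := cf_measurable hp hslne
        have hintsl : IntegrableOn (fun z => Real.exp (t * cf p (sl ω) z))
            (Icc (0:Fin n → ℝ) 1) volume := by
          refine intOn hIccn_ne
            ((Real.measurable_exp.comp (hcfsl.const_mul t)).aestronglyMeasurable)
            (Real.exp (t * n)) ?_ measurableSet_Icc
          intro z hz
          have hcfle : cf p (sl ω) z ≤ n := cf_le_n hp hslne (hslsub ω) hz
          rw [abs_of_nonneg (Real.exp_pos _).le]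
          exact Real.exp_le_exp.2 (mul_le_mul_of_nonneg_left hcfle ht.le)
        have h1 : (∫ z in Icc (0:Fin n → ℝ) 1, Real.exp (t * cf p A ((Fin.snoc z ω : Fin (n+1) → ℝ))))
            ≤ ∫ z in Icc (0:Fin n → ℝ) 1, Real.exp (t * cf p (sl ω) z) := by
          refine setIntegral_mono_on hintz hintsl measurableSet_Icc fun z _ => ?_
          exact Real.exp_le_exp.2 (mul_le_mul_of_nonneg_left (key1 ω z hslne) ht.le)
        have hrw : (volume (sl ω)).toReal = g ω * vB := by
          rw [hg]
          field_simp
        rw [hmax]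
        calc (∫ z in Icc (0:Fin n → ℝ) 1, Real.exp (t * cf p A ((Fin.snoc z ω : Fin (n+1) → ℝ))))
            ≤ _ := h1
          _ ≤ (volume (sl ω)).toReal ^ (-α) * Real.exp (n * c) := hIH_sl
          _ = Real.exp (n * c) * vB ^ (-α) * g ω ^ (-α) := by
              rw [hrw, Real.mul_rpow hgpos.le hvB0.le]
              ring
    -- outer integration
    set vA : ℝ := (volume A).toReal with hvA
    have hvolA_ne_top : volume A ≠ ⊤ := by
      refine ne_top_of_le_ne_top ?_ (measure_mono hsub)
      rw [vol_Icc_pi (n+1)]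
      exact ENNReal.one_ne_top
    have hvA0 : 0 < vA := ENNReal.toReal_pos hpos.ne' hvolA_ne_top
    have hInner_sm : AEStronglyMeasurable
        (fun ω => ∫ z in Icc (0:Fin n → ℝ) 1,
          Real.exp (t * cf p A ((Fin.snoc z ω : Fin (n+1) → ℝ))))
        ((volume : Measure ℝ).restrict (Icc (0:ℝ) 1)) := by
      have hFs : StronglyMeasurable F := hFmeas.stronglyMeasurable
      have h1 := hFs.integral_prod_right'
        (ν := (volume : Measure (Fin n → ℝ)).restrict (Icc 0 1))
      exact h1.aestronglyMeasurable
    have hInner_int : IntegrableOn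
        (fun ω => ∫ z in Icc (0:Fin n → ℝ) 1,
          Real.exp (t * cf p A ((Fin.snoc z ω : Fin (n+1) → ℝ))))
        (Icc (0:ℝ) 1) volume := by
      refine intOn hI1_ne hInner_sm (Real.exp (t * (n+1))) ?_ measurableSet_Icc
      intro ω hω
      have hzmeas : Measurable fun z : Fin n → ℝ =>
          Real.exp (t * cf p A ((Fin.snoc z ω : Fin (n+1) → ℝ))) :=
        hGmeas.comp (hcsnoc ω).measurable
      have h1 : ‖∫ z in Icc (0:Fin n → ℝ) 1,
          Real.exp (t * cf p A ((Fin.snoc z ω : Fin (n+1) → ℝ)))‖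
          ≤ Real.exp (t * (n+1)) * (volume (Icc (0:Fin n → ℝ) 1)).toReal := by
        refine norm_setIntegral_le_of_norm_le_const
          (by rw [vol_Icc_pi n]; exact ENNReal.one_lt_top) ?_
        intro z hz
        rw [Real.norm_eq_abs, abs_of_nonneg (Real.exp_pos _).le]
        have hcfle : cf p A ((Fin.snoc z ω : Fin (n+1) → ℝ)) ≤ (n+1:ℕ) :=
          cf_le_n hp hne hsub (snoc_mem_Icc hz hω)
        apply Real.exp_le_exp.2
        push_cast at hcfle ⊢
        exact mul_le_mul_of_nonneg_left hcfle ht.le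
      rw [Real.norm_eq_abs] at h1
      rw [vol_Icc_pi n] at h1
      simpa using h1
    -- RHS integrand integrability
    have hrpowmeas : Measurable fun x : ℝ => x ^ (-α) := rpow_const_measurable (-α)
    have hhh_pos : ∀ ω, 0 < hh ω := fun ω => lt_of_lt_of_le hθ0 (le_max_right _ _)
    have hhub : ∀ ω ∈ Icc (0:ℝ) 1, hh ω ≤ 1 := by
      intro ω _
      rw [hhh]
      exact max_le (hg1 ω) hθ1
    have hhlb : ∀ ω ∈ Icc (0:ℝ) 1, θ ≤ hh ω := fun ω _ => le_max_right _ _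
    have hr_int : IntegrableOn (fun ω => Real.exp (n * c) * vB ^ (-α) * hh ω ^ (-α))
        (Icc (0:ℝ) 1) volume := by
      refine intOn hI1_ne
        (((hrpowmeas.comp hhmeas).const_mul _).aestronglyMeasurable)
        (Real.exp (n * c) * vB ^ (-α) * θ ^ (-α)) ?_ measurableSet_Icc
      intro ω hω
      have h1 : hh ω ^ (-α) ≤ θ ^ (-α) :=
        Real.rpow_le_rpow_of_nonpos hθ0 (le_max_right _ _) (by linarith)
      have h2 : (0:ℝ) ≤ hh ω ^ (-α) := Real.rpow_nonneg (hhh_pos ω).le _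
      rw [abs_of_nonneg (by positivity)]
      have h3 : (0:ℝ) ≤ Real.exp (n * c) * vB ^ (-α) := by positivity
      exact mul_le_mul_of_nonneg_left h1 h3
    -- integral of g over Icc equals vA / vB
    have hg_int_val : (∫ ω in Icc (0:ℝ) 1, g ω) = vA / vB := by
      have h0 : (∫ ω in Icc (0:ℝ) 1, g ω)
          = (∫ ω in Icc (0:ℝ) 1, (volume (sl ω)).toReal) / vB := by
        rw [hg, integral_div]
      have h1 : (∫ ω in Icc (0:ℝ) 1, (volume (sl ω)).toReal) = vA := by
        rw [integral_toReal (hmeasvol.aemeasurable.restrict)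
          (Filter.Eventually.of_forall fun ω =>
            lt_of_le_of_lt (measure_mono (hslB ω)) hvolB_ne_top.lt_top)]
        rw [hvA]
        congr 1
        have hvanish : ∀ ω, ω ∉ Icc (0:ℝ) 1 → volume (sl ω) = 0 := by
          intro ω hω
          have : sl ω = ∅ := by
            rw [Set.eq_empty_iff_forall_notMem]
            intro z hz
            have hmem := hsub hz
            have h1' := hmem.1 (Fin.last n)
            have h2' := hmem.2 (Fin.last n)
            simp only [Pi.zero_apply, Pi.one_apply, Fin.snoc_last] at h1' h2'
            exact hω ⟨h1', h2'⟩
          rw [this]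
          simp
        have hind : (fun ω => volume (sl ω))
            = (Icc (0:ℝ) 1).indicator (fun ω => volume (sl ω)) := by
          funext ω
          by_cases hω : ω ∈ Icc (0:ℝ) 1
          · rw [Set.indicator_of_mem hω]
          · rw [Set.indicator_of_notMem hω, hvanish ω hω]
        calc ∫⁻ ω in Icc (0:ℝ) 1, volume (sl ω)
            = ∫⁻ ω, (Icc (0:ℝ) 1).indicator (fun ω => volume (sl ω)) ω := by
              rw [lintegral_indicator measurableSet_Icc]
          _ = ∫⁻ ω, volume (sl ω) := by rw [← hind]
          _ = volume A := by rw [hvolA_eq, hvolA_slice]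
      rw [h0, h1]
    -- integral of hh lower bound
    have hg_intOn : IntegrableOn g (Icc (0:ℝ) 1) volume := by
      refine intOn hI1_ne hgmeas.aestronglyMeasurable 1 ?_ measurableSet_Icc
      intro ω _
      rw [abs_of_nonneg (hg0 ω)]
      exact hg1 ω
    have hhh_intOn : IntegrableOn hh (Icc (0:ℝ) 1) volume := by
      refine intOn hI1_ne hhmeas.aestronglyMeasurable 1 ?_ measurableSet_Icc
      intro ω hω
      rw [abs_of_nonneg (hhh_pos ω).le]
      exact hhub ω hω
    have hh_ge : vA / vB ≤ ∫ ω in Icc (0:ℝ) 1, hh ω := by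
      rw [← hg_int_val]
      refine setIntegral_mono_on hg_intOn hhh_intOn measurableSet_Icc fun ω _ => ?_
      exact le_max_left _ _
    have hkey1d := key1d hα ht hhmeas hhlb hhub
    have hfinal_rpow : (∫ ω in Icc (0:ℝ) 1, hh ω) ^ (-α) ≤ (vA / vB) ^ (-α) :=
      Real.rpow_le_rpow_of_nonpos (div_pos hvA0 hvB0) hh_ge (by linarith)
    -- assembling
    have hchain : (∫ x in Icc (0 : Fin (n+1) → ℝ) 1, Real.exp (t * cf p A x))
        ≤ Real.exp (n * c) * vB ^ (-α) * ((vA / vB) ^ (-α) * Real.exp c) := by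
      rw [step1]
      calc (∫ ω in Icc (0:ℝ) 1, ∫ z in Icc (0:Fin n → ℝ) 1,
            Real.exp (t * cf p A ((Fin.snoc z ω : Fin (n+1) → ℝ))))
          ≤ ∫ ω in Icc (0:ℝ) 1, Real.exp (n * c) * vB ^ (-α) * hh ω ^ (-α) :=
            setIntegral_mono_on hInner_int hr_int measurableSet_Icc innerkey
        _ = Real.exp (n * c) * vB ^ (-α) * ∫ ω in Icc (0:ℝ) 1, hh ω ^ (-α) := by
            rw [← integral_const_mul]
        _ ≤ Real.exp (n * c) * vB ^ (-α) *
              ((∫ ω in Icc (0:ℝ) 1, hh ω) ^ (-α) * Real.exp (c)) := by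
            refine mul_le_mul_of_nonneg_left ?_ (by positivity)
            rw [hc]
            exact hkey1d
        _ ≤ Real.exp (n * c) * vB ^ (-α) * ((vA / vB) ^ (-α) * Real.exp c) := by
            refine mul_le_mul_of_nonneg_left ?_ (by positivity)
            exact mul_le_mul_of_nonneg_right hfinal_rpow (Real.exp_pos _).le
    have hsimpl : Real.exp (n * c) * vB ^ (-α) * ((vA / vB) ^ (-α) * Real.exp c)
        = vA ^ (-α) * Real.exp ((n + 1 : ℕ) * c) := by
      have h1 : vB ^ (-α) * (vA / vB) ^ (-α) = vA ^ (-α) := by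
        rw [← Real.mul_rpow hvB0.le (div_nonneg hvA0.le hvB0.le)]
        congr 1
        field_simp
      have h2 : Real.exp (n * c) * Real.exp c = Real.exp ((n + 1 : ℕ) * c) := by
        rw [← Real.exp_add]
        congr 1
        push_cast
        ring
      calc Real.exp (n * c) * vB ^ (-α) * ((vA / vB) ^ (-α) * Real.exp c)
          = (vB ^ (-α) * (vA / vB) ^ (-α)) * (Real.exp (n * c) * Real.exp c) := by ring
        _ = vA ^ (-α) * Real.exp ((n + 1 : ℕ) * c) := by rw [h1, h2]
    rw [hsimpl] at hchain
    exact hchain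



end CubeAux

theorem cube_exp_moment_bound (n : ℕ) (A : Set (Fin n → ℝ))
    (hA : MeasurableSet A) (hAsub : A ⊆ Set.Icc 0 1)
    (hApos : 0 < volume A)
    (p : ℝ) (hp : 0 < p) (t : ℝ) (ht : 0 ≤ t) (α : ℝ) (hα : 0 < α)
    (f : (Fin n → ℝ) → ℝ)
    (hf : ∀ x, f x = sInf ((fun y => ∑ i, |x i - y i| ^ p) '' A)) :
    (∫ x in Set.Icc (0 : Fin n → ℝ) 1, Real.exp (t * f x)) ≤
      (volume A).toReal ^ (-α) * Real.exp (n * t ^ 2 * (α + 1) / (8 * α)) := by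
  have hfcf : f = CubeAux.cf p A := funext fun x => hf x
  have hIccvol : volume (Icc (0:Fin n → ℝ) 1) = 1 := CubeAux.vol_Icc_pi n
  have hvolA_ne_top : volume A ≠ ⊤ :=
    ne_top_of_le_ne_top (hIccvol ▸ ENNReal.one_ne_top) (measure_mono hAsub)
  have hvA0 : 0 < (volume A).toReal := ENNReal.toReal_pos hApos.ne' hvolA_ne_top
  have hvA1 : (volume A).toReal ≤ 1 := by
    rw [← ENNReal.toReal_one]
    exact ENNReal.toReal_mono ENNReal.one_ne_top (hIccvol ▸ measure_mono hAsub)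
  have hne : A.Nonempty := nonempty_of_measure_ne_zero hApos.ne'
  rcases eq_or_lt_of_le ht with rfl | ht0
  · -- t = 0
    have h1 : (∫ x in Icc (0:Fin n → ℝ) 1, Real.exp (0 * f x)) = 1 := by
      simp [Measure.real, hIccvol]
    rw [h1]
    have h2 : Real.exp ((n:ℝ) * 0 ^ 2 * (α + 1) / (8 * α)) = 1 := by norm_num
    rw [h2, mul_one]
    calc (1:ℝ) = (volume A).toReal ^ (0:ℝ) := (Real.rpow_zero _).symm
      _ ≤ (volume A).toReal ^ (-α) :=
          Real.rpow_le_rpow_of_exponent_ge hvA0 hvA1 (by linarith)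
  · -- t > 0
    rw [hfcf]
    set E := Real.exp ((n:ℝ) * (t ^ 2 * (α + 1) / (8 * α))) with hE
    have hgoalE : Real.exp ((n:ℝ) * t ^ 2 * (α + 1) / (8 * α)) = E := by
      rw [hE]; congr 1; ring
    rw [hgoalE]
    have hE0 : 0 < E := Real.exp_pos _
    have hcfA : Measurable (CubeAux.cf p A) := CubeAux.cf_measurable hp hne
    have hGmeas : Measurable fun x : Fin n → ℝ => Real.exp (t * CubeAux.cf p A x) :=
      Real.measurable_exp.comp (hcfA.const_mul t)
    have hIcc_ne : volume (Icc (0:Fin n → ℝ) 1) ≠ ⊤ := by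
      rw [hIccvol]; exact ENNReal.one_ne_top
    have hintA : IntegrableOn (fun x => Real.exp (t * CubeAux.cf p A x))
        (Icc (0:Fin n → ℝ) 1) volume := by
      refine CubeAux.intOn hIcc_ne hGmeas.aestronglyMeasurable (Real.exp (t * n)) ?_
        measurableSet_Icc
      intro x hx
      rw [abs_of_nonneg (Real.exp_pos _).le]
      exact Real.exp_le_exp.2 (mul_le_mul_of_nonneg_left
        (CubeAux.cf_le_n hp hne hAsub hx) ht)
    have claim : ∀ m : ℝ, 0 < m → m < (volume A).toReal →
        (∫ x in Icc (0:Fin n → ℝ) 1, Real.exp (t * CubeAux.cf p A x)) ≤ m ^ (-α) * E := by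
      intro m hm0 hmlt
      have hlt : ENNReal.ofReal m < volume A := by
        rw [← ENNReal.ofReal_toReal hvolA_ne_top]
        exact (ENNReal.ofReal_lt_ofReal_iff hvA0).2 hmlt
      obtain ⟨K, hKA, hKc, hKlt⟩ := hA.exists_lt_isCompact hlt
      have hKvol_pos : 0 < volume K := lt_of_le_of_lt zero_le
        (lt_of_le_of_lt zero_le hKlt)
      have hKne : K.Nonempty := nonempty_of_measure_ne_zero hKvol_pos.ne'
      have hKsub : K ⊆ Icc (0:Fin n → ℝ) 1 := hKA.trans hAsub
      have hKvol_ne_top : volume K ≠ ⊤ :=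
        ne_top_of_le_ne_top hvolA_ne_top (measure_mono hKA)
      have hmleK : m ≤ (volume K).toReal := by
        have := ENNReal.toReal_mono hKvol_ne_top hKlt.le
        rwa [ENNReal.toReal_ofReal hm0.le] at this
      have hmain := CubeAux.main p t α hp ht0 hα n K hKc hKne hKsub hKvol_pos
      have hcfK : Measurable (CubeAux.cf p K) := CubeAux.cf_measurable hp hKne
      have hintK : IntegrableOn (fun x => Real.exp (t * CubeAux.cf p K x))
          (Icc (0:Fin n → ℝ) 1) volume := by
        refine CubeAux.intOn hIcc_ne
          ((Real.measurable_exp.comp (hcfK.const_mul t)).aestronglyMeasurable)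
          (Real.exp (t * n)) ?_ measurableSet_Icc
        intro x hx
        rw [abs_of_nonneg (Real.exp_pos _).le]
        exact Real.exp_le_exp.2 (mul_le_mul_of_nonneg_left
          (CubeAux.cf_le_n hp hKne hKsub hx) ht)
      calc (∫ x in Icc (0:Fin n → ℝ) 1, Real.exp (t * CubeAux.cf p A x))
          ≤ ∫ x in Icc (0:Fin n → ℝ) 1, Real.exp (t * CubeAux.cf p K x) := by
            refine setIntegral_mono_on hintA hintK measurableSet_Icc fun x _ => ?_
            exact Real.exp_le_exp.2 (mul_le_mul_of_nonneg_left
              (CubeAux.cf_mono hKA hKne x) ht)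
        _ ≤ (volume K).toReal ^ (-α) * E := hmain
        _ ≤ m ^ (-α) * E := by
            refine mul_le_mul_of_nonneg_right ?_ hE0.le
            exact Real.rpow_le_rpow_of_nonpos hm0 hmleK (by linarith)
    -- pass to the limit m → (volume A).toReal from the left
    have htend : Filter.Tendsto (fun m : ℝ => m ^ (-α) * E)
        (nhdsWithin (volume A).toReal (Iio (volume A).toReal))
        (nhds ((volume A).toReal ^ (-α) * E)) := by
      refine Filter.Tendsto.mul_const E ?_
      refine Filter.Tendsto.mono_left ?_ nhdsWithin_le_nhds
      exact (Real.continuousAt_rpow_const _ _ (Or.inl hvA0.ne')).tendsto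
    have hNB : (nhdsWithin (volume A).toReal (Iio (volume A).toReal)).NeBot := by
      infer_instance
    refine ge_of_tendsto htend ?_
    have hmem : Ioo (0:ℝ) (volume A).toReal ∈
        nhdsWithin (volume A).toReal (Iio (volume A).toReal) :=
      Ioo_mem_nhdsLT_of_mem ⟨hvA0, le_refl _⟩
    filter_upwards [hmem] with m hm
    exact claim m hm.1 hm.2
end

section
/- (Concentration for ℓ_p expansion, small p) For any measurable A ⊂ [0,1]ⁿ with vol[A] > 0 and any p > 0, the ℓ_p ε-expansion satisfies vol[A(ε, d_p)] ≥ 1 - exp(-ε^{2p}/n)/vol[A]. -/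
open Real MeasureTheory

/-- The ℓ_p distance on ℝⁿ (for p > 0). -/
noncomputable def lpDist {n : ℕ} (p : ℝ) (x y : Fin n → ℝ) : ℝ :=
  (∑ i, |x i - y i| ^ p) ^ (1 / p)

namespace LpConc


noncomputable def nu : Measure ℝ := volume.restrict (Set.Icc 0 1)

instance : IsProbabilityMeasure nu := by
  constructor
  rw [nu, Measure.restrict_apply MeasurableSet.univ, Set.univ_inter, Real.volume_Icc]
  norm_num

noncomputable def mu (n : ℕ) : Measure (Fin n → ℝ) := Measure.pi fun _ => nu

instance (n : ℕ) : IsProbabilityMeasure (mu n) := by unfold mu; infer_instance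

lemma integrable_of_bound {α : Type*} [MeasurableSpace α] (μ : Measure α) [IsFiniteMeasure μ]
    (f : α → ℝ) (hf : Measurable f) (C : ℝ) (h : ∀ x, |f x| ≤ C) : Integrable f μ :=
  Integrable.mono' (integrable_const C) hf.aestronglyMeasurable
    (Filter.Eventually.of_forall fun x => by simpa [Real.norm_eq_abs] using h x)

lemma oneD (Z : ℝ → ℝ) (hZm : Measurable Z) (C : ℝ) (hZb : ∀ s, |Z s| ≤ C)
    (hlip : ∀ s t, Z s - Z t ≤ 1) (l : ℝ) :
    (∫ s, exp (l * Z s) ∂nu) * (∫ s, exp (-(l * Z s)) ∂nu) ≤ exp (l ^ 2 / 4) := by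
  have hZint : Integrable Z nu := integrable_of_bound _ Z hZm C hZb
  set c := sInf (Set.range Z) with hc
  have hbdd : BddBelow (Set.range Z) := ⟨-C, by rintro _ ⟨s, rfl⟩; linarith [(abs_le.1 (hZb s)).1]⟩
  have hcle : ∀ s, c ≤ Z s := fun s => csInf_le hbdd ⟨s, rfl⟩
  have hlec : ∀ s, Z s ≤ c + 1 := by
    intro s
    have h1 : Z s - 1 ≤ c :=
      le_csInf (Set.range_nonempty Z) (by rintro _ ⟨t, rfl⟩; linarith [hlip s t])
    linarith
  set m := ∫ s, (Z s - c) ∂nu with hm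
  have hZc : Integrable (fun s => Z s - c) nu := hZint.sub (integrable_const c)
  have hm0 : 0 ≤ m := integral_nonneg fun s => by simp only [Pi.zero_apply, sub_nonneg]; exact hcle s
  have hm1 : m ≤ 1 := by
    have h := integral_mono hZc (integrable_const 1)
      (fun s => by simp only; linarith [hlec s])
    simpa using h
  have key : ∀ t : ℝ, ∫ s, exp (t * Z s) ∂nu ≤ exp (t * c) * (1 + m * (exp t - 1)) := by
    intro t
    have hpt : ∀ s, exp (t * Z s) ≤ exp (t * c) * (1 + (Z s - c) * (exp t - 1)) := by
      intro s
      have hy0 : 0 ≤ Z s - c := by linarith [hcle s]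
      have hy1 : Z s - c ≤ 1 := by linarith [hlec s]
      have hconv := convexOn_exp.2 (Set.mem_univ (0:ℝ)) (Set.mem_univ t)
          (by linarith : (0:ℝ) ≤ 1 - (Z s - c)) hy0 (by ring)
      simp only [smul_eq_mul, mul_zero, zero_add, Real.exp_zero, mul_one] at hconv
      have h2 : exp (t * (Z s - c)) ≤ 1 + (Z s - c) * (exp t - 1) := by
        have : exp ((Z s - c) * t) ≤ 1 - (Z s - c) + (Z s - c) * exp t := hconv
        calc exp (t * (Z s - c)) = exp ((Z s - c) * t) := by rw [mul_comm]
          _ ≤ 1 - (Z s - c) + (Z s - c) * exp t := this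
          _ = 1 + (Z s - c) * (exp t - 1) := by ring
      calc exp (t * Z s) = exp (t * c) * exp (t * (Z s - c)) := by
            rw [← Real.exp_add]; congr 1; ring
        _ ≤ exp (t * c) * (1 + (Z s - c) * (exp t - 1)) :=
            mul_le_mul_of_nonneg_left h2 (Real.exp_nonneg _)
    have hint1 : Integrable (fun s => exp (t * Z s)) nu := by
      refine integrable_of_bound _ _ ((hZm.const_mul t).exp) (exp (|t| * C)) (fun s => ?_)
      rw [abs_of_pos (Real.exp_pos _)]
      apply Real.exp_le_exp.2
      calc t * Z s ≤ |t * Z s| := le_abs_self _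
        _ = |t| * |Z s| := abs_mul _ _
        _ ≤ |t| * C := by
            exact mul_le_mul_of_nonneg_left (hZb s) (abs_nonneg t)
    have hint2 : Integrable (fun s => exp (t * c) * (1 + (Z s - c) * (exp t - 1))) nu :=
      (((integrable_const (1:ℝ)).add (hZc.mul_const (exp t - 1))).const_mul (exp (t * c)))
    calc ∫ s, exp (t * Z s) ∂nu
        ≤ ∫ s, exp (t * c) * (1 + (Z s - c) * (exp t - 1)) ∂nu :=
          integral_mono hint1 hint2 hpt
      _ = exp (t * c) * (1 + m * (exp t - 1)) := by
          rw [integral_const_mul]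
          congr 1
          rw [integral_add (integrable_const 1) (hZc.mul_const _), integral_const,
            integral_mul_const]
          simp [measure_univ]
          exact Or.inl hm.symm
  have k1 := key l
  have k2 := key (-l)
  have e2 : (∫ s, exp (-(l * Z s)) ∂nu) = ∫ s, exp ((-l) * Z s) ∂nu := by
    congr 1; funext s; rw [neg_mul]
  have hpos1 : (0:ℝ) ≤ 1 + m * (exp l - 1) := by nlinarith [Real.exp_pos l]
  have hpos2 : (0:ℝ) ≤ 1 + m * (exp (-l) - 1) := by nlinarith [Real.exp_pos (-l)]
  have hI1nn : 0 ≤ ∫ s, exp (l * Z s) ∂nu := integral_nonneg fun s => (Real.exp_nonneg _)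
  have hI2nn : 0 ≤ ∫ s, exp ((-l) * Z s) ∂nu := integral_nonneg fun s => (Real.exp_nonneg _)
  have hprod : (∫ s, exp (l * Z s) ∂nu) * (∫ s, exp (-(l * Z s)) ∂nu) ≤
      (exp (l * c) * (1 + m * (exp l - 1))) * (exp ((-l) * c) * (1 + m * (exp (-l) - 1))) := by
    rw [e2]
    exact mul_le_mul k1 k2 hI2nn (by positivity)
  have hEF : exp l * exp (-l) = 1 := by rw [← Real.exp_add]; simp
  have hcc : exp (l * c) * exp ((-l) * c) = 1 := by rw [← Real.exp_add]; rw [show l*c + (-l)*c = 0 by ring, Real.exp_zero]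
  have hid : (1 + m * (exp l - 1)) * (1 + m * (exp (-l) - 1))
      = 1 + m * (1 - m) * (exp l + exp (-l) - 2) := by
    linear_combination m ^ 2 * hEF
  have h2le : 2 ≤ exp l + exp (-l) := by
    linarith [Real.add_one_le_exp l, Real.add_one_le_exp (-l)]
  have hm14 : m * (1 - m) ≤ 1 / 4 := by nlinarith [sq_nonneg (m - 1/2)]
  have hq : 1 + m * (1 - m) * (exp l + exp (-l) - 2) ≤ (exp l + exp (-l) + 2) / 4 := by
    nlinarith [mul_nonneg hm0 (by linarith : (0:ℝ) ≤ 1 - m)]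
  have hsq : (exp (l/2) + exp (-(l/2))) ^ 2 = exp l + exp (-l) + 2 := by
    have h1 : exp (l/2) * exp (l/2) = exp l := by rw [← Real.exp_add]; congr 1; ring
    have h2 : exp (-(l/2)) * exp (-(l/2)) = exp (-l) := by rw [← Real.exp_add]; congr 1; ring
    have h3 : exp (l/2) * exp (-(l/2)) = 1 := by rw [← Real.exp_add]; simp
    linear_combination h1 + h2 + 2 * h3
  have hch : exp (l/2) + exp (-(l/2)) ≤ 2 * exp ((l/2) ^ 2 / 2) := by
    have h := Real.cosh_le_exp_half_sq (l/2)
    rw [Real.cosh_eq] at h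
    linarith
  have hfin : (exp l + exp (-l) + 2) / 4 ≤ exp (l ^ 2 / 4) := by
    have h4 : exp ((l/2) ^ 2 / 2) * exp ((l/2) ^ 2 / 2) = exp (l ^ 2 / 4) := by
      rw [← Real.exp_add]; congr 1; ring
    nlinarith [Real.exp_pos (l/2), Real.exp_pos (-(l/2)), Real.exp_pos ((l/2) ^ 2 / 2)]
  calc (∫ s, exp (l * Z s) ∂nu) * (∫ s, exp (-(l * Z s)) ∂nu)
      ≤ (exp (l * c) * (1 + m * (exp l - 1))) * (exp ((-l) * c) * (1 + m * (exp (-l) - 1))) := hprod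
    _ = (1 + m * (exp l - 1)) * (1 + m * (exp (-l) - 1)) := by
        rw [show (exp (l * c) * (1 + m * (exp l - 1))) * (exp ((-l) * c) * (1 + m * (exp (-l) - 1)))
          = (exp (l * c) * exp ((-l) * c)) * ((1 + m * (exp l - 1)) * (1 + m * (exp (-l) - 1))) by ring,
          hcc, one_mul]
    _ = 1 + m * (1 - m) * (exp l + exp (-l) - 2) := hid
    _ ≤ (exp l + exp (-l) + 2) / 4 := hq
    _ ≤ exp (l ^ 2 / 4) := hfin

theorem tensor : ∀ (n : ℕ) (f : (Fin n → ℝ) → ℝ), Measurable f → ∀ C : ℝ,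
    (∀ x, |f x| ≤ C) →
    (∀ (i : Fin n) (x y : Fin n → ℝ), (∀ j, j ≠ i → x j = y j) → f x - f y ≤ 1) →
    ∀ l : ℝ, 0 ≤ l →
    (∫ x, exp (l * f x) ∂mu n) * (∫ x, exp (-(l * f x)) ∂mu n) ≤ exp (l ^ 2 * n / 4) := by
  intro n
  induction n with
  | zero =>
    intro f hf C hC hlip l hl
    have hfc : ∀ x : Fin 0 → ℝ, f x = f default := fun x => congrArg f (Subsingleton.elim x default)
    have h1 : (∫ x, exp (l * f x) ∂mu 0) = exp (l * f default) := by
      rw [show (fun x => exp (l * f x)) = fun _ => exp (l * f default) by funext x; rw [hfc x]]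
      simp [measure_univ]
    have h2 : (∫ x, exp (-(l * f x)) ∂mu 0) = exp (-(l * f default)) := by
      rw [show (fun x => exp (-(l * f x))) = fun _ => exp (-(l * f default)) by funext x; rw [hfc x]]
      simp [measure_univ]
    rw [h1, h2, ← Real.exp_add]
    simp
  | succ n ih =>
    intro f hf C hC hlip l hl
    rcases eq_or_lt_of_le hl with rfl | hlpos
    · simp [measure_univ]
    have hC0 : 0 ≤ C := le_trans (abs_nonneg _) (hC default)
    set e := MeasurableEquiv.piFinSuccAbove (fun _ : Fin (n+1) => ℝ) 0 with he
    have hpres : MeasurePreserving e (mu (n+1)) (nu.prod (mu n)) :=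
      measurePreserving_piFinSuccAbove (fun _ => nu) 0
    have hcons_meas : Measurable fun q : ℝ × (Fin n → ℝ) => (Fin.cons q.1 q.2 : Fin (n+1) → ℝ) := by
      apply measurable_pi_lambda
      intro j
      refine Fin.cases ?_ ?_ j
      · simpa using measurable_fst
      · intro k; exact (measurable_pi_apply k).comp measurable_snd
    have hcons_e : ∀ x : Fin (n+1) → ℝ, (Fin.cons (e x).1 (e x).2 : Fin (n+1) → ℝ) = x := by
      intro x
      have h1 : e x = (x 0, fun j => x (Fin.succAbove 0 j)) := rfl
      rw [h1]
      simp only [Fin.succAbove_zero]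
      exact Fin.cons_self_tail x
    have htransfer : ∀ g : (ℝ × (Fin n → ℝ)) → ℝ,
        ∫ q, g q ∂(nu.prod (mu n)) = ∫ x, g (e x) ∂mu (n+1) :=
      fun g => (hpres.integral_comp' g).symm
    -- the two inner-integral functions
    set a : (Fin n → ℝ) → ℝ := fun x => ∫ s, exp (l * f (Fin.cons s x)) ∂nu with ha
    set b : (Fin n → ℝ) → ℝ := fun x => ∫ s, exp (-(l * f (Fin.cons s x))) ∂nu with hb
    -- measurability
    have hG1m : Measurable fun q : ℝ × (Fin n → ℝ) => exp (l * f (Fin.cons q.1 q.2)) :=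
      (((hf.comp hcons_meas).const_mul l).exp)
    have hG2m : Measurable fun q : ℝ × (Fin n → ℝ) => exp (-(l * f (Fin.cons q.1 q.2))) :=
      (((hf.comp hcons_meas).const_mul l).neg.exp)
    have hG1b : ∀ q : ℝ × (Fin n → ℝ), |exp (l * f (Fin.cons q.1 q.2))| ≤ exp (l * C) := by
      intro q
      rw [abs_of_pos (Real.exp_pos _)]
      exact Real.exp_le_exp.2 (mul_le_mul_of_nonneg_left
        (le_trans (le_abs_self _) (hC _)) hl)
    have hG2b : ∀ q : ℝ × (Fin n → ℝ), |exp (-(l * f (Fin.cons q.1 q.2)))| ≤ exp (l * C) := by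
      intro q
      rw [abs_of_pos (Real.exp_pos _)]
      apply Real.exp_le_exp.2
      have := abs_le.1 (hC (Fin.cons q.1 q.2))
      nlinarith
    have hG1int : Integrable (fun q : ℝ × (Fin n → ℝ) => exp (l * f (Fin.cons q.1 q.2)))
        (nu.prod (mu n)) := integrable_of_bound _ _ hG1m _ hG1b
    have hG2int : Integrable (fun q : ℝ × (Fin n → ℝ) => exp (-(l * f (Fin.cons q.1 q.2))))
        (nu.prod (mu n)) := integrable_of_bound _ _ hG2m _ hG2b
    -- rewrite the two big integrals as iterated integrals
    have hA : (∫ x, exp (l * f x) ∂mu (n+1)) = ∫ x, a x ∂mu n := by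
      have h0 : (∫ x, exp (l * f x) ∂mu (n+1))
          = ∫ q, exp (l * f (Fin.cons q.1 q.2)) ∂(nu.prod (mu n)) := by
        rw [htransfer]
        congr 1
        funext x
        rw [hcons_e]
      rw [h0, integral_prod_symm _ hG1int]
    have hB : (∫ x, exp (-(l * f x)) ∂mu (n+1)) = ∫ x, b x ∂mu n := by
      have h0 : (∫ x, exp (-(l * f x)) ∂mu (n+1))
          = ∫ q, exp (-(l * f (Fin.cons q.1 q.2))) ∂(nu.prod (mu n)) := by
        rw [htransfer]
        congr 1
        funext x
        rw [hcons_e]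
      rw [h0, integral_prod_symm _ hG2int]
    -- per-x facts about a and b
    have hconsx_meas : ∀ x : Fin n → ℝ, Measurable fun s : ℝ => (Fin.cons s x : Fin (n+1) → ℝ) := by
      intro x
      apply measurable_pi_lambda
      intro j
      refine Fin.cases ?_ ?_ j
      · exact measurable_id
      · intro k; simpa using measurable_const
    have hZlip : ∀ (x : Fin n → ℝ) (s t : ℝ),
        f (Fin.cons s x) - f (Fin.cons t x) ≤ 1 := by
      intro x s t
      apply hlip 0 (Fin.cons s x) (Fin.cons t x)
      intro j
      refine Fin.cases ?_ ?_ j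
      · intro h; exact absurd rfl h
      · intro k _; simp
    have hZbd : ∀ (x : Fin n → ℝ) (s : ℝ), |f (Fin.cons s x)| ≤ C := fun x s => hC _
    have hab : ∀ x, a x * b x ≤ exp (l ^ 2 / 4) := by
      intro x
      exact oneD (fun s => f (Fin.cons s x)) (hf.comp (hconsx_meas x)) C (hZbd x)
        (hZlip x) l
    have hZint1 : ∀ x : Fin n → ℝ, Integrable (fun s => exp (l * f (Fin.cons s x))) nu := by
      intro x
      exact integrable_of_bound _ _ (((hf.comp (hconsx_meas x)).const_mul l).exp) (exp (l*C))
        (fun s => hG1b (s, x))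
    have hZint2 : ∀ x : Fin n → ℝ, Integrable (fun s => exp (-(l * f (Fin.cons s x)))) nu := by
      intro x
      exact integrable_of_bound _ _ (((hf.comp (hconsx_meas x)).const_mul l).neg.exp) (exp (l*C))
        (fun s => hG2b (s, x))
    have halow : ∀ x, exp (-(l*C)) ≤ a x := by
      intro x
      have h := integral_mono (integrable_const (exp (-(l*C)))) (hZint1 x) (fun s => by
        apply Real.exp_le_exp.2
        have := (abs_le.1 (hC (Fin.cons s x))).1
        nlinarith)
      simpa [measure_univ] using h
    have hblow : ∀ x, exp (-(l*C)) ≤ b x := by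
      intro x
      have h := integral_mono (integrable_const (exp (-(l*C)))) (hZint2 x) (fun s => by
        apply Real.exp_le_exp.2
        have := (abs_le.1 (hC (Fin.cons s x))).2
        nlinarith)
      simpa [measure_univ] using h
    have hahigh : ∀ x, a x ≤ exp (l*C) := by
      intro x
      have h := integral_mono (hZint1 x) (integrable_const (exp (l*C))) (fun s => by
        have := hG1b (s, x)
        rw [abs_of_pos (Real.exp_pos _)] at this
        exact this)
      simpa [measure_univ] using h
    have hbhigh : ∀ x, b x ≤ exp (l*C) := by
      intro x
      have h := integral_mono (hZint2 x) (integrable_const (exp (l*C))) (fun s => by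
        have := hG2b (s, x)
        rw [abs_of_pos (Real.exp_pos _)] at this
        exact this)
      simpa [measure_univ] using h
    have hapos : ∀ x, 0 < a x := fun x => lt_of_lt_of_le (Real.exp_pos _) (halow x)
    have hbpos : ∀ x, 0 < b x := fun x => lt_of_lt_of_le (Real.exp_pos _) (hblow x)
    -- measurability of a and b
    have ham : Measurable a := by
      have := hG1m.stronglyMeasurable.integral_prod_left' (μ := nu)
      exact this.measurable
    have hbm : Measurable b := by
      have := hG2m.stronglyMeasurable.integral_prod_left' (μ := nu)
      exact this.measurable
    -- the midpoint function
    set H : (Fin n → ℝ) → ℝ := fun x => (Real.log (a x) - Real.log (b x)) / (2*l) with hH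
    have hHm : Measurable H := ((ham.log.sub hbm.log).div_const _)
    have hloga : ∀ x, |Real.log (a x)| ≤ l * C := by
      intro x
      rw [abs_le]
      constructor
      · rw [← Real.log_exp (-(l*C))]
        exact Real.log_le_log (Real.exp_pos _) (halow x)
      · rw [← Real.log_exp (l*C)]
        exact Real.log_le_log (hapos x) (hahigh x)
    have hlogb : ∀ x, |Real.log (b x)| ≤ l * C := by
      intro x
      rw [abs_le]
      constructor
      · rw [← Real.log_exp (-(l*C))]
        exact Real.log_le_log (Real.exp_pos _) (hblow x)
      · rw [← Real.log_exp (l*C)]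
        exact Real.log_le_log (hbpos x) (hbhigh x)
    have hHbd : ∀ x, |H x| ≤ C := by
      intro x
      rw [hH]
      simp only
      rw [abs_div, abs_of_pos (by linarith : (0:ℝ) < 2*l)]
      rw [div_le_iff₀ (by linarith)]
      calc |Real.log (a x) - Real.log (b x)| ≤ |Real.log (a x)| + |Real.log (b x)| :=
            abs_sub _ _
        _ ≤ l * C + l * C := add_le_add (hloga x) (hlogb x)
        _ = C * (2*l) := by ring
    have hHlip : ∀ (i : Fin n) (x y : Fin n → ℝ), (∀ j, j ≠ i → x j = y j) → H x - H y ≤ 1 := by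
      intro i x y hxy
      have hcons_diff : ∀ s : ℝ, ∀ j, j ≠ i.succ →
          (Fin.cons s x : Fin (n+1) → ℝ) j = (Fin.cons s y : Fin (n+1) → ℝ) j := by
        intro s j
        refine Fin.cases ?_ ?_ j
        · intro _; simp
        · intro k hk
          simp only [Fin.cons_succ]
          exact hxy k (fun h => hk (by rw [h]))
      have haxy : a x ≤ exp l * a y := by
        have h := integral_mono (hZint1 x) ((hZint1 y).const_mul (exp l)) (fun s => by
          have h1 : f (Fin.cons s x) - f (Fin.cons s y) ≤ 1 :=
            hlip i.succ _ _ (hcons_diff s)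
          simp only
          rw [← Real.exp_add]
          apply Real.exp_le_exp.2
          nlinarith)
        rw [integral_const_mul] at h
        exact h
      have hbxy : b y ≤ exp l * b x := by
        have h := integral_mono (hZint2 y) ((hZint2 x).const_mul (exp l)) (fun s => by
          have h1 : f (Fin.cons s x) - f (Fin.cons s y) ≤ 1 :=
            hlip i.succ _ _ (hcons_diff s)
          simp only
          rw [← Real.exp_add]
          apply Real.exp_le_exp.2
          nlinarith)
        rw [integral_const_mul] at h
        exact h
      have hla : Real.log (a x) ≤ l + Real.log (a y) := by
        calc Real.log (a x) ≤ Real.log (exp l * a y) := Real.log_le_log (hapos x) haxy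
          _ = l + Real.log (a y) := by
              rw [Real.log_mul (Real.exp_ne_zero l) (ne_of_gt (hapos y)), Real.log_exp]
      have hlb : Real.log (b y) ≤ l + Real.log (b x) := by
        calc Real.log (b y) ≤ Real.log (exp l * b x) := Real.log_le_log (hbpos y) hbxy
          _ = l + Real.log (b x) := by
              rw [Real.log_mul (Real.exp_ne_zero l) (ne_of_gt (hbpos x)), Real.log_exp]
      rw [hH]
      simp only
      rw [div_sub_div_same, div_le_one (by linarith : (0:ℝ) < 2*l)]
      linarith
    -- pointwise splitting
    have hsplit_a : ∀ x, a x ≤ exp (l^2/8) * exp (l * H x) := by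
      intro x
      have hlog : Real.log (a x) + Real.log (b x) ≤ l^2/4 := by
        have h := (Real.log_le_iff_le_exp (mul_pos (hapos x) (hbpos x))).2 (hab x)
        rwa [Real.log_mul (ne_of_gt (hapos x)) (ne_of_gt (hbpos x))] at h
      have hlH : l * H x = (Real.log (a x) - Real.log (b x)) / 2 := by
        rw [hH]; field_simp
      calc a x = exp (Real.log (a x)) := (Real.exp_log (hapos x)).symm
        _ ≤ exp (l^2/8 + l * H x) := by
            apply Real.exp_le_exp.2
            rw [hlH]
            linarith
        _ = exp (l^2/8) * exp (l * H x) := Real.exp_add _ _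
    have hsplit_b : ∀ x, b x ≤ exp (l^2/8) * exp (-(l * H x)) := by
      intro x
      have hlog : Real.log (a x) + Real.log (b x) ≤ l^2/4 := by
        have h := (Real.log_le_iff_le_exp (mul_pos (hapos x) (hbpos x))).2 (hab x)
        rwa [Real.log_mul (ne_of_gt (hapos x)) (ne_of_gt (hbpos x))] at h
      have hlH : l * H x = (Real.log (a x) - Real.log (b x)) / 2 := by
        rw [hH]; field_simp
      calc b x = exp (Real.log (b x)) := (Real.exp_log (hbpos x)).symm
        _ ≤ exp (l^2/8 + -(l * H x)) := by
            apply Real.exp_le_exp.2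
            rw [hlH]
            linarith
        _ = exp (l^2/8) * exp (-(l * H x)) := Real.exp_add _ _
    -- integrate the splits
    have hHint1 : Integrable (fun x => exp (l * H x)) (mu n) :=
      integrable_of_bound _ _ ((hHm.const_mul l).exp) (exp (l*C)) (fun x => by
        rw [abs_of_pos (Real.exp_pos _)]
        apply Real.exp_le_exp.2
        have := (abs_le.1 (hHbd x)).2
        nlinarith)
    have hHint2 : Integrable (fun x => exp (-(l * H x))) (mu n) :=
      integrable_of_bound _ _ ((hHm.const_mul l).neg.exp) (exp (l*C)) (fun x => by
        rw [abs_of_pos (Real.exp_pos _)]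
        apply Real.exp_le_exp.2
        have := (abs_le.1 (hHbd x)).1
        nlinarith)
    have haint : Integrable a (mu n) :=
      integrable_of_bound _ _ ham (exp (l*C)) (fun x => by
        rw [abs_of_pos (hapos x)]; exact hahigh x)
    have hbint : Integrable b (mu n) :=
      integrable_of_bound _ _ hbm (exp (l*C)) (fun x => by
        rw [abs_of_pos (hbpos x)]; exact hbhigh x)
    have hAle : (∫ x, a x ∂mu n) ≤ exp (l^2/8) * ∫ x, exp (l * H x) ∂mu n := by
      have h := integral_mono haint (hHint1.const_mul (exp (l^2/8))) (fun x => hsplit_a x)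
      rwa [integral_const_mul] at h
    have hBle : (∫ x, b x ∂mu n) ≤ exp (l^2/8) * ∫ x, exp (-(l * H x)) ∂mu n := by
      have h := integral_mono hbint (hHint2.const_mul (exp (l^2/8))) (fun x => hsplit_b x)
      rwa [integral_const_mul] at h
    have hih := ih H hHm C hHbd hHlip l hl
    have hAnn : 0 ≤ ∫ x, a x ∂mu n := integral_nonneg (fun x => (hapos x).le)
    have hBnn : 0 ≤ ∫ x, b x ∂mu n := integral_nonneg (fun x => (hbpos x).le)
    have hP : 0 ≤ ∫ x, exp (l * H x) ∂mu n := integral_nonneg (fun x => (Real.exp_pos _).le)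
    have hQ : 0 ≤ ∫ x, exp (-(l * H x)) ∂mu n := integral_nonneg (fun x => (Real.exp_pos _).le)
    rw [hA, hB]
    calc (∫ x, a x ∂mu n) * (∫ x, b x ∂mu n)
        ≤ (exp (l^2/8) * ∫ x, exp (l * H x) ∂mu n) * (exp (l^2/8) * ∫ x, exp (-(l * H x)) ∂mu n) := by
          apply mul_le_mul hAle hBle hBnn
          positivity
      _ = exp (l^2/4) * ((∫ x, exp (l * H x) ∂mu n) * (∫ x, exp (-(l * H x)) ∂mu n)) := by
          rw [show exp (l^2/8) * (∫ x, exp (l * H x) ∂mu n) * (exp (l^2/8) * ∫ x, exp (-(l * H x)) ∂mu n)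
            = (exp (l^2/8) * exp (l^2/8)) * ((∫ x, exp (l * H x) ∂mu n) * (∫ x, exp (-(l * H x)) ∂mu n)) by ring,
            ← Real.exp_add]
          congr 1
          congr 1
          ring
      _ ≤ exp (l^2/4) * exp (l ^ 2 * n / 4) := by
          apply mul_le_mul_of_nonneg_left hih (Real.exp_pos _).le
      _ = exp (l ^ 2 * (n+1 : ℕ) / 4) := by
          rw [← Real.exp_add]
          congr 1
          push_cast
          ring

lemma mu_eq (n : ℕ) : mu n = volume.restrict (Set.Icc (0 : Fin n → ℝ) 1) := by
  unfold mu
  refine Measure.pi_eq ?_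
  intro s hs
  rw [Measure.restrict_apply (MeasurableSet.univ_pi hs)]
  have h1 : (Set.Icc (0 : Fin n → ℝ) 1) = Set.pi Set.univ (fun _ => Set.Icc (0:ℝ) 1) :=
    (Set.pi_univ_Icc (0 : Fin n → ℝ) 1).symm
  rw [h1, ← Set.pi_inter_distrib, volume_pi_pi]
  congr 1
  funext i
  rw [nu, Measure.restrict_apply (hs i)]



lemma mu_apply_of_subset {n : ℕ} {S : Set (Fin n → ℝ)} (hS : MeasurableSet S)
    (hsub : S ⊆ Set.Icc 0 1) : mu n S = volume S := by
  rw [mu_eq, Measure.restrict_apply hS, Set.inter_eq_self_of_subset_left hsub]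

lemma volume_cube (n : ℕ) : volume (Set.Icc (0 : Fin n → ℝ) 1) = 1 := by
  rw [Real.volume_Icc_pi]
  simp


end LpConc


open LpConc in
theorem lp_expansion_concentration (n : ℕ) (A : Set (Fin n → ℝ))
    (hA : MeasurableSet A) (hAsub : A ⊆ Set.Icc 0 1)
    (hApos : 0 < (volume A).toReal)
    (p : ℝ) (hp : 0 < p) (ε : ℝ) (hε : 0 ≤ ε) :
    volume {x ∈ Set.Icc (0 : Fin n → ℝ) 1 | ∃ y ∈ A, lpDist p x y ≤ ε} ≥
      ENNReal.ofReal (1 - Real.exp (-ε ^ (2 * p) / n) / (volume A).toReal) := by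
  set a := (volume A).toReal with ha
  have hvolA_le : volume A ≤ 1 := by
    calc volume A ≤ volume (Set.Icc (0 : Fin n → ℝ) 1) := measure_mono hAsub
      _ = 1 := volume_cube n
  have hvolA_ne_top : volume A ≠ ⊤ := by
    intro h
    rw [h] at hvolA_le
    exact absurd hvolA_le (by simp)
  have ha1 : a ≤ 1 := by
    have := ENNReal.toReal_mono ENNReal.one_ne_top hvolA_le
    simpa using this
  rcases Nat.eq_zero_or_pos n with hn | hn
  · -- trivial case n = 0
    subst hn
    have hexp : Real.exp (-ε ^ (2 * p) / ((0:ℕ):ℝ)) = 1 := by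
      norm_num
    rw [hexp]
    have h0 : (1 : ℝ) - 1 / a ≤ 0 := by
      have : (1:ℝ) ≤ 1 / a := by
        rw [le_div_iff₀ hApos]
        linarith
      linarith
    rw [ge_iff_le, ENNReal.ofReal_eq_zero.2 (by linarith)]
    exact zero_le
  -- main case
  have hn0 : ((n:ℝ)) ≠ 0 := Nat.cast_ne_zero.2 hn.ne'
  have hnpos : (0:ℝ) < n := Nat.cast_pos.2 hn
  have hApos' : volume A ≠ 0 := by
    intro h
    rw [ha, h] at hApos
    simp at hApos
  have hAne : A.Nonempty := nonempty_of_measure_ne_zero hApos'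
  haveI : Nonempty ↥A := hAne.to_subtype
  -- the cost function
  set g : (Fin n → ℝ) → (Fin n → ℝ) → ℝ := fun x y => ∑ i, min (|x i - y i| ^ p) 1 with hg
  have hterm_nonneg : ∀ (x y : Fin n → ℝ) i, 0 ≤ min (|x i - y i| ^ p) 1 :=
    fun x y i => le_min (Real.rpow_nonneg (abs_nonneg _) p) zero_le_one
  have hterm_le_one : ∀ (x y : Fin n → ℝ) i, min (|x i - y i| ^ p) 1 ≤ 1 :=
    fun x y i => min_le_right _ _
  have hg_nonneg : ∀ x y, 0 ≤ g x y :=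
    fun x y => Finset.sum_nonneg fun i _ => hterm_nonneg x y i
  have hg_le : ∀ x y, g x y ≤ n := by
    intro x y
    calc g x y ≤ ∑ _i : Fin n, (1:ℝ) := Finset.sum_le_sum fun i _ => hterm_le_one x y i
      _ = n := by simp
  have hg_self : ∀ x, g x x = 0 := by
    intro x
    rw [hg]
    simp only [sub_self, abs_zero]
    rw [Real.zero_rpow hp.ne']
    simp
  have hg_cont : ∀ y, Continuous fun x => g x y := by
    intro y
    apply continuous_finset_sum
    intro i _
    have hrpow : Continuous fun u : ℝ => u ^ p :=
      continuous_iff_continuousAt.2 fun u => Real.continuousAt_rpow_const u p (Or.inr hp.le)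
    exact ((hrpow.comp ((continuous_apply i).sub continuous_const).abs).min continuous_const)
  have hg_lip : ∀ (i : Fin n) (x y z : Fin n → ℝ), (∀ j, j ≠ i → x j = y j) →
      g x z ≤ g y z + 1 := by
    intro i x y z hxy
    have hx : g x z = (∑ j ∈ Finset.univ.erase i, min (|x j - z j| ^ p) 1)
        + min (|x i - z i| ^ p) 1 := (Finset.sum_erase_add _ _ (Finset.mem_univ i)).symm
    have hy : g y z = (∑ j ∈ Finset.univ.erase i, min (|y j - z j| ^ p) 1)
        + min (|y i - z i| ^ p) 1 := (Finset.sum_erase_add _ _ (Finset.mem_univ i)).symm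
    have hsame : (∑ j ∈ Finset.univ.erase i, min (|x j - z j| ^ p) 1)
        = ∑ j ∈ Finset.univ.erase i, min (|y j - z j| ^ p) 1 := by
      apply Finset.sum_congr rfl
      intro j hj
      rw [hxy j (Finset.ne_of_mem_erase hj)]
    rw [hx, hy, hsame]
    have h1 := hterm_le_one x z i
    have h2 := hterm_nonneg y z i
    linarith
  -- distance-like function to A
  set fA : (Fin n → ℝ) → ℝ := fun x => ⨅ y : A, g x y with hfA
  have hbddA : ∀ x, BddBelow (Set.range fun y : A => g x y) := by
    intro x
    exact ⟨0, by rintro _ ⟨y, rfl⟩; exact hg_nonneg x y⟩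
  have hfA_le : ∀ x (y : Fin n → ℝ), y ∈ A → fA x ≤ g x y := by
    intro x y hy
    exact ciInf_le (hbddA x) ⟨y, hy⟩
  have hfA_nonneg : ∀ x, 0 ≤ fA x := fun x => le_ciInf fun y => hg_nonneg x y
  have hfA_bd : ∀ x, |fA x| ≤ n := by
    intro x
    rw [abs_le]
    refine ⟨by linarith [hfA_nonneg x, hnpos], ?_⟩
    obtain ⟨y0, hy0⟩ := hAne
    calc fA x ≤ g x y0 := hfA_le x y0 hy0
      _ ≤ n := hg_le x y0
  have hfA_zero : ∀ x ∈ A, fA x = 0 := by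
    intro x hx
    refine le_antisymm ?_ (hfA_nonneg x)
    calc fA x ≤ g x x := hfA_le x x hx
      _ = 0 := hg_self x
  have hfA_lt : ∀ x r, fA x < r → ∃ y : A, g x y < r := by
    intro x r h
    exact exists_lt_of_ciInf_lt h
  have hfA_meas : Measurable fA := by
    apply measurable_of_Iio
    intro r
    have hset : fA ⁻¹' (Set.Iio r) = ⋃ y : A, {x | g x y < r} := by
      ext x
      simp only [Set.mem_preimage, Set.mem_Iio, Set.mem_iUnion, Set.mem_setOf_eq]
      constructor
      · intro h
        exact hfA_lt x r h
      · rintro ⟨y, hy⟩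
        exact lt_of_le_of_lt (hfA_le x y y.2) hy
    rw [hset]
    apply IsOpen.measurableSet
    apply isOpen_iUnion
    intro y
    exact (isOpen_lt (hg_cont y) continuous_const)
  have hfA_lip : ∀ (i : Fin n) (x y : Fin n → ℝ), (∀ j, j ≠ i → x j = y j) →
      fA x - fA y ≤ 1 := by
    intro i x y hxy
    have key : fA x - 1 ≤ fA y := by
      apply le_ciInf
      intro z
      have := hg_lip i x y z hxy
      have h2 := hfA_le x z z.2
      linarith
    linarith
  -- expansion-level sets
  set D := ε ^ p with hD
  have hD0 : 0 ≤ D := Real.rpow_nonneg hε p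
  set l := 2 * D / n with hl
  have hl0 : 0 ≤ l := by positivity
  set E' := Set.Icc (0 : Fin n → ℝ) 1 ∩ {x | fA x < D} with hE'
  set B' := Set.Icc (0 : Fin n → ℝ) 1 ∩ {x | D ≤ fA x} with hB'
  have hE'm : MeasurableSet E' := measurableSet_Icc.inter (measurableSet_lt hfA_meas measurable_const)
  have hB'm : MeasurableSet B' := measurableSet_Icc.inter (measurableSet_le measurable_const hfA_meas)
  have hE'sub : E' ⊆ {x ∈ Set.Icc (0 : Fin n → ℝ) 1 | ∃ y ∈ A, lpDist p x y ≤ ε} := by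
    rintro x ⟨hxI, hxf⟩
    refine ⟨hxI, ?_⟩
    obtain ⟨y, hy⟩ := hfA_lt x D hxf
    refine ⟨(y : Fin n → ℝ), y.2, ?_⟩
    have hyI := hAsub y.2
    have habs : ∀ i, |x i - (y : Fin n → ℝ) i| ≤ 1 := by
      intro i
      have hx1 := (Set.mem_Icc.1 hxI).1 i
      have hx2 := (Set.mem_Icc.1 hxI).2 i
      have hy1 := (Set.mem_Icc.1 hyI).1 i
      have hy2 := (Set.mem_Icc.1 hyI).2 i
      rw [abs_le]
      constructor <;> simp only [Pi.zero_apply, Pi.one_apply] at hx1 hx2 hy1 hy2 <;> linarith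
    have hsum_eq : g x y = ∑ i, |x i - (y : Fin n → ℝ) i| ^ p := by
      apply Finset.sum_congr rfl
      intro i _
      exact min_eq_left (Real.rpow_le_one (abs_nonneg _) (habs i) hp.le)
    have hsum_lt : ∑ i, |x i - (y : Fin n → ℝ) i| ^ p ≤ D := by
      rw [← hsum_eq]
      exact hy.le
    have hnn : 0 ≤ ∑ i, |x i - (y : Fin n → ℝ) i| ^ p :=
      Finset.sum_nonneg fun i _ => Real.rpow_nonneg (abs_nonneg _) p
    calc lpDist p x y = (∑ i, |x i - (y : Fin n → ℝ) i| ^ p) ^ (1/p) := rfl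
      _ ≤ D ^ (1/p) := Real.rpow_le_rpow hnn hsum_lt (by positivity)
      _ = ε := by
          rw [hD, ← Real.rpow_mul hε]
          rw [mul_one_div_cancel hp.ne', Real.rpow_one]
  -- integrability of the exponentials
  have hint1 : Integrable (fun x => Real.exp (l * fA x)) (mu n) := by
    refine integrable_of_bound _ _ ((hfA_meas.const_mul l).exp) (Real.exp (l * n)) (fun x => ?_)
    rw [abs_of_pos (Real.exp_pos _)]
    apply Real.exp_le_exp.2
    exact mul_le_mul_of_nonneg_left (le_trans (le_abs_self _) (hfA_bd x)) hl0
  have hint2 : Integrable (fun x => Real.exp (-(l * fA x))) (mu n) := by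
    refine integrable_of_bound _ _ ((hfA_meas.const_mul l).neg.exp) (Real.exp (l * n)) (fun x => ?_)
    rw [abs_of_pos (Real.exp_pos _)]
    apply Real.exp_le_exp.2
    have h1 : 0 ≤ l * fA x := mul_nonneg hl0 (hfA_nonneg x)
    have h2 : 0 ≤ l * n := mul_nonneg hl0 hnpos.le
    linarith
  -- tensorization inequality
  have htens := tensor n fA hfA_meas n hfA_bd hfA_lip l hl0
  -- lower bounds on the two integrals
  have hmuA : mu n A = volume A := mu_apply_of_subset hA hAsub
  have hI2 : a ≤ ∫ x, Real.exp (-(l * fA x)) ∂mu n := by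
    have h1 : (∫ x in A, (1:ℝ) ∂mu n) = a := by
      rw [setIntegral_const, smul_eq_mul, mul_one, measureReal_def, hmuA]
    have h2 : (∫ x in A, (1:ℝ) ∂mu n) = ∫ x in A, Real.exp (-(l * fA x)) ∂mu n := by
      apply setIntegral_congr_fun hA
      intro x hx
      show (1:ℝ) = Real.exp (-(l * fA x))
      rw [hfA_zero x hx]
      simp
    rw [← h1, h2]
    exact setIntegral_le_integral hint2 (Filter.Eventually.of_forall fun x => (Real.exp_pos _).le)
  have hI1 : (mu n B').toReal * Real.exp (l * D) ≤ ∫ x, Real.exp (l * fA x) ∂mu n := by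
    have h1 : (∫ x in B', Real.exp (l * D) ∂mu n) = (mu n B').toReal * Real.exp (l * D) := by
      rw [setIntegral_const, smul_eq_mul, measureReal_def]
    have h2 : (∫ x in B', Real.exp (l * D) ∂mu n) ≤ ∫ x in B', Real.exp (l * fA x) ∂mu n := by
      apply setIntegral_mono_on (integrableOn_const (measure_ne_top _ _) enorm_ne_top)
        (hint1.integrableOn) hB'm
      intro x hx
      exact Real.exp_le_exp.2 (mul_le_mul_of_nonneg_left hx.2 hl0)
    have h3 : (∫ x in B', Real.exp (l * fA x) ∂mu n) ≤ ∫ x, Real.exp (l * fA x) ∂mu n :=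
      setIntegral_le_integral hint1 (Filter.Eventually.of_forall fun x => (Real.exp_pos _).le)
    linarith
  -- combine
  set b' := (mu n B').toReal with hb'
  have hb'0 : 0 ≤ b' := ENNReal.toReal_nonneg
  have hcomb : a * (b' * Real.exp (l * D)) ≤ Real.exp (l^2 * n / 4) := by
    calc a * (b' * Real.exp (l * D))
        ≤ (∫ x, Real.exp (-(l * fA x)) ∂mu n) * (∫ x, Real.exp (l * fA x) ∂mu n) := by
          apply mul_le_mul hI2 hI1 (by positivity)
          exact integral_nonneg fun x => (Real.exp_pos _).le
      _ = (∫ x, Real.exp (l * fA x) ∂mu n) * (∫ x, Real.exp (-(l * fA x)) ∂mu n) := mul_comm _ _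
      _ ≤ Real.exp (l^2 * n / 4) := htens
  have hD2 : D ^ (2:ℕ) = ε ^ (2 * p) := by
    rw [hD, ← Real.rpow_natCast (ε ^ p) 2, ← Real.rpow_mul hε]
    norm_num [mul_comm]
  have hexp_eq : Real.exp (l^2 * n / 4) / Real.exp (l * D) = Real.exp (-ε ^ (2*p) / n) := by
    rw [← Real.exp_sub]
    congr 1
    rw [← hD2, hl]
    field_simp
    ring
  have hb'le : b' ≤ Real.exp (-ε ^ (2*p) / n) / a := by
    have h1 : b' * (a * Real.exp (l * D)) ≤ Real.exp (l^2 * n / 4) := by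
      calc b' * (a * Real.exp (l * D)) = a * (b' * Real.exp (l * D)) := by ring
        _ ≤ _ := hcomb
    have h2 : b' ≤ Real.exp (l^2 * n / 4) / (a * Real.exp (l * D)) :=
      (le_div_iff₀ (by positivity)).2 h1
    calc b' ≤ Real.exp (l^2 * n / 4) / (a * Real.exp (l * D)) := h2
      _ = (Real.exp (l^2 * n / 4) / Real.exp (l * D)) / a := by
          rw [div_div]
          congr 1
          ring
      _ = Real.exp (-ε ^ (2*p) / n) / a := by rw [hexp_eq]
  -- measure algebra
  have hunion : E' ∪ B' = Set.Icc (0 : Fin n → ℝ) 1 := by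
    rw [hE', hB', ← Set.inter_union_distrib_left]
    have : {x | fA x < D} ∪ {x | D ≤ fA x} = Set.univ := by
      ext x
      simp only [Set.mem_union, Set.mem_setOf_eq, Set.mem_univ, iff_true]
      exact lt_or_ge _ _
    rw [this, Set.inter_univ]
  have hdisj : Disjoint E' B' := by
    rw [Set.disjoint_left]
    rintro x ⟨_, hx1⟩ ⟨_, hx2⟩
    simp only [Set.mem_setOf_eq] at hx1 hx2
    exact absurd hx1 (not_lt.2 hx2)
  have hmu_cube : mu n (Set.Icc (0 : Fin n → ℝ) 1) = 1 := by
    rw [mu_apply_of_subset measurableSet_Icc (subset_refl _), volume_cube]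
  have hsum : mu n E' + mu n B' = 1 := by
    rw [← measure_union hdisj hB'm, hunion, hmu_cube]
  have hE'fin : mu n E' ≠ ⊤ := measure_ne_top _ _
  have hB'fin : mu n B' ≠ ⊤ := measure_ne_top _ _
  have hsum' : (mu n E').toReal + b' = 1 := by
    rw [hb', ← ENNReal.toReal_add hE'fin hB'fin, hsum]
    simp
  -- final chain
  have hfinal : ENNReal.ofReal (1 - Real.exp (-ε ^ (2*p) / n) / a) ≤ mu n E' := by
    apply ENNReal.ofReal_le_of_le_toReal
    linarith
  calc ENNReal.ofReal (1 - Real.exp (-ε ^ (2 * p) / n) / a)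
      ≤ mu n E' := hfinal
    _ = volume E' := mu_apply_of_subset hE'm (Set.inter_subset_left)
    _ ≤ volume {x ∈ Set.Icc (0 : Fin n → ℝ) 1 | ∃ y ∈ A, lpDist p x y ≤ ε} :=
        measure_mono hE'sub
end

section
/- (Hamming concentration) For any measurable A ⊂ [0,1]ⁿ with vol[A] > 0 and integer ε ≥ 0, the ℓ₀ (Hamming) ε-expansion satisfies vol[A(ε, d₀)] ≥ 1 - exp(-ε²/n)/vol[A]. -/
open Real MeasureTheory

/-- The Hamming (ℓ₀) distance on ℝⁿ: the number of differing coordinates. -/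
noncomputable def l0Dist {n : ℕ} (x y : Fin n → ℝ) : ℕ :=
  (Finset.univ.filter fun i => x i ≠ y i).card

namespace HamAux

open ENNReal Set

variable {n : ℕ}

lemma l0Dist_cons (t s : ℝ) (x y : Fin n → ℝ) :
    l0Dist (Fin.cons t x) (Fin.cons s y) = (if t ≠ s then 1 else 0) + l0Dist x y := by
  simp [l0Dist, Finset.card_filter, Fin.sum_univ_succ]

lemma l0Dist_cons_same (t : ℝ) (x y : Fin n → ℝ) :
    l0Dist (Fin.cons t x) (Fin.cons t y) = l0Dist x y := by
  simp [l0Dist_cons]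

lemma l0Dist_cons_le (t : ℝ) (x : Fin n → ℝ) (y : Fin (n+1) → ℝ) :
    l0Dist (Fin.cons t x) y ≤ l0Dist x (Fin.tail y) + 1 := by
  have h := l0Dist_cons t (y 0) x (Fin.tail y)
  rw [Fin.cons_self_tail] at h
  rw [h]
  split <;> omega

/-- Hamming distance from a point to a set. -/
noncomputable def hd (A : Set (Fin n → ℝ)) (x : Fin n → ℝ) : ℕ :=
  sInf {k | ∃ y ∈ A, l0Dist x y ≤ k}

lemma hd_spec {A : Set (Fin n → ℝ)} (hA : A.Nonempty) (x : Fin n → ℝ) :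
    ∃ y ∈ A, l0Dist x y ≤ hd A x := by
  obtain ⟨y0, hy0⟩ := hA
  have hne : {k | ∃ y ∈ A, l0Dist x y ≤ k}.Nonempty := ⟨l0Dist x y0, y0, hy0, le_rfl⟩
  exact Nat.sInf_mem hne

lemma hd_le {A : Set (Fin n → ℝ)} (x : Fin n → ℝ) {y : Fin n → ℝ} (hy : y ∈ A) :
    hd A x ≤ l0Dist x y :=
  Nat.sInf_le ⟨y, hy, le_rfl⟩

lemma hd_le_iff {A : Set (Fin n → ℝ)} (hA : A.Nonempty) {x : Fin n → ℝ} {m : ℕ} :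
    hd A x ≤ m ↔ ∃ y ∈ A, l0Dist x y ≤ m := by
  constructor
  · intro h
    obtain ⟨y, hy, hle⟩ := hd_spec hA x
    exact ⟨y, hy, hle.trans h⟩
  · rintro ⟨y, hy, hle⟩
    exact (hd_le x hy).trans hle

/-- Exponential Hamming distance to a set, as an `ℝ≥0∞`-valued infimum. -/
noncomputable def eD (lam : ℝ) (A : Set (Fin n → ℝ)) (x : Fin n → ℝ) : ℝ≥0∞ :=
  ⨅ y ∈ A, ENNReal.ofReal (Real.exp (lam * l0Dist x y))

lemma eD_empty (lam : ℝ) (x : Fin n → ℝ) : eD lam (∅ : Set (Fin n → ℝ)) x = ⊤ := by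
  simp [eD]

lemma eD_eq {lam : ℝ} (hlam : 0 ≤ lam) {A : Set (Fin n → ℝ)} (hA : A.Nonempty)
    (x : Fin n → ℝ) : eD lam A x = ENNReal.ofReal (Real.exp (lam * hd A x)) := by
  apply le_antisymm
  · obtain ⟨y, hy, hle⟩ := hd_spec hA x
    refine (iInf₂_le y hy).trans ?_
    apply ENNReal.ofReal_le_ofReal
    apply Real.exp_le_exp.mpr
    apply mul_le_mul_of_nonneg_left _ hlam
    exact_mod_cast hle
  · apply le_iInf₂
    intro y hy
    apply ENNReal.ofReal_le_ofReal
    apply Real.exp_le_exp.mpr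
    apply mul_le_mul_of_nonneg_left _ hlam
    exact_mod_cast hd_le x hy

/-- The Hamming expansion of a compact set is closed. -/
lemma isClosed_expansion {K : Set (Fin n → ℝ)} (hK : IsCompact K) (m : ℕ) :
    IsClosed {x : Fin n → ℝ | ∃ y ∈ K, l0Dist x y ≤ m} := by
  classical
  have hρ : ∀ S : Finset (Fin n), Continuous (fun x : Fin n → ℝ => fun i : S => x i) :=
    fun S => continuous_pi fun i => continuous_apply (i : Fin n)
  have key : {x : Fin n → ℝ | ∃ y ∈ K, l0Dist x y ≤ m} =
      ⋃ S ∈ {S : Finset (Fin n) | (Sᶜ).card ≤ m},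
        (fun x : Fin n → ℝ => fun i : S => x i) ⁻¹'
          ((fun y : Fin n → ℝ => fun i : S => y i) '' K) := by
    ext x
    simp only [Set.mem_setOf_eq, Set.mem_iUnion, Set.mem_preimage, Set.mem_image]
    constructor
    · rintro ⟨y, hy, hle⟩
      refine ⟨(Finset.univ.filter fun i => x i ≠ y i)ᶜ, ?_, y, hy, ?_⟩
      · simpa [l0Dist] using hle
      · funext i
        have hi := i.2
        simp only [Finset.mem_compl, Finset.mem_filter, Finset.mem_univ, true_and,
          not_not] at hi
        exact hi.symm
    · rintro ⟨S, hS, y, hy, hxy⟩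
      refine ⟨y, hy, ?_⟩
      have hsub : (Finset.univ.filter fun i => x i ≠ y i) ⊆ Sᶜ := by
        intro i hi
        simp only [Finset.mem_filter, Finset.mem_univ, true_and] at hi
        rw [Finset.mem_compl]
        intro hiS
        exact hi (congrFun hxy ⟨i, hiS⟩).symm
      exact (Finset.card_le_card hsub).trans hS
  rw [key]
  apply Set.Finite.isClosed_biUnion (Set.toFinite _)
  intro S _
  exact (IsClosed.preimage (hρ S) (hK.image (hρ S)).isClosed)

lemma measurableSet_expansion {K : Set (Fin n → ℝ)} (hK : IsCompact K) (m : ℕ) :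
    MeasurableSet {x : Fin n → ℝ | ∃ y ∈ K, l0Dist x y ≤ m} :=
  (isClosed_expansion hK m).measurableSet

lemma measurable_hd {K : Set (Fin n → ℝ)} (hK : IsCompact K) (hne : K.Nonempty) :
    Measurable (hd K) := by
  apply measurable_to_countable'
  intro k
  have h1 : ∀ j : ℕ, MeasurableSet {x : Fin n → ℝ | hd K x ≤ j} := by
    intro j
    have : {x : Fin n → ℝ | hd K x ≤ j} = {x | ∃ y ∈ K, l0Dist x y ≤ j} := by
      ext x; exact hd_le_iff hne
    rw [this]; exact measurableSet_expansion hK j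
  rcases k with _ | k
  · have : (hd K) ⁻¹' {0} = {x : Fin n → ℝ | hd K x ≤ 0} := by
      ext x; simp [Nat.le_zero]
    rw [this]; exact h1 0
  · have : (hd K) ⁻¹' {k+1} = {x : Fin n → ℝ | hd K x ≤ k+1} \ {x | hd K x ≤ k} := by
      ext x; simp only [Set.mem_preimage, Set.mem_singleton_iff, Set.mem_diff,
        Set.mem_setOf_eq]
      omega
    rw [this]; exact (h1 (k+1)).diff (h1 k)

lemma measurable_eD {lam : ℝ} (hlam : 0 ≤ lam) {K : Set (Fin n → ℝ)} (hK : IsCompact K)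
    (hne : K.Nonempty) : Measurable (eD lam K) := by
  have : eD lam K = fun x => ENNReal.ofReal (Real.exp (lam * hd K x)) :=
    funext (eD_eq hlam hne)
  rw [this]
  have h1 : Measurable (fun x => (hd K x : ℝ)) :=
    measurable_from_nat.comp (measurable_hd hK hne)
  exact ENNReal.measurable_ofReal.comp (Real.measurable_exp.comp (h1.const_mul lam))


lemma eD_le_slice {lam : ℝ} (K : Set (Fin (n+1) → ℝ)) (t : ℝ) (x' : Fin n → ℝ) :
    eD lam K (Fin.cons t x') ≤ eD lam {z | Fin.cons t z ∈ K} x' := by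
  apply le_iInf₂
  intro y hy
  refine iInf₂_le_of_le (Fin.cons t y) hy (le_of_eq ?_)
  rw [l0Dist_cons_same]

lemma eD_le_proj {lam : ℝ} (hlam : 0 ≤ lam) (K : Set (Fin (n+1) → ℝ)) (t : ℝ)
    (x' : Fin n → ℝ) :
    eD lam K (Fin.cons t x') ≤
      ENNReal.ofReal (Real.exp lam) * eD lam (Fin.tail '' K) x' := by
  rcases K.eq_empty_or_nonempty with rfl | hne
  · rw [Set.image_empty, eD_empty, eD_empty,
      ENNReal.mul_top (ENNReal.ofReal_pos.mpr (Real.exp_pos lam)).ne']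
  have hne' : (Fin.tail '' K).Nonempty := hne.image _
  rw [eD_eq hlam hne' x']
  obtain ⟨z, hz, hzle⟩ := hd_spec hne' x'
  obtain ⟨y, hy, rfl⟩ := hz
  refine (iInf₂_le y hy).trans ?_
  rw [← ENNReal.ofReal_mul (Real.exp_nonneg lam), ← Real.exp_add]
  apply ENNReal.ofReal_le_ofReal
  apply Real.exp_le_exp.mpr
  have h1 : (l0Dist (Fin.cons t x') y : ℝ) ≤ (hd (Fin.tail '' K) x' : ℝ) + 1 := by
    have := (l0Dist_cons_le t x' y).trans (by omega : l0Dist x' (Fin.tail y) + 1 ≤ hd (Fin.tail '' K) x' + 1)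
    exact_mod_cast this
  nlinarith [mul_le_mul_of_nonneg_left h1 hlam]


lemma final_real (lam α m : ℝ) (hα : 0 ≤ α) (hm : α ≤ m) :
    α * (Real.exp lam * m + m) ≤ m ^ 2 * Real.exp (lam ^ 2 / 4) + Real.exp lam * α ^ 2 := by
  set u := Real.exp (lam / 2) with hu
  set v := Real.exp (-(lam / 2)) with hv
  have huv : u * v = 1 := by rw [hu, hv, ← Real.exp_add]; simp
  have hupos : 0 < u := Real.exp_pos _
  have hexplam : Real.exp lam = u ^ 2 := by
    rw [hu, sq, ← Real.exp_add]; norm_num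
  have h1 : Real.cosh (lam / 2) ≤ Real.exp ((lam / 2) ^ 2 / 2) := Real.cosh_le_exp_half_sq _
  have h2 : (u + v) / 2 ≤ Real.exp (lam ^ 2 / 8) := by
    have h := Real.cosh_eq (lam / 2)
    rw [h] at h1
    convert h1 using 2
    ring
  have h3 : ((u + v) / 2) ^ 2 ≤ Real.exp (lam ^ 2 / 4) := by
    have hnn : 0 ≤ (u + v) / 2 := by positivity
    have hh := mul_le_mul h2 h2 hnn (Real.exp_nonneg _)
    calc ((u + v) / 2) ^ 2 = ((u + v) / 2) * ((u + v) / 2) := sq ((u+v)/2)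
      _ ≤ Real.exp (lam ^ 2 / 8) * Real.exp (lam ^ 2 / 8) := hh
      _ = Real.exp (lam ^ 2 / 4) := by rw [← Real.exp_add]; ring_nf
  have h4 : m ^ 2 * ((u + v) / 2) ^ 2 ≤ m ^ 2 * Real.exp (lam ^ 2 / 4) :=
    mul_le_mul_of_nonneg_left h3 (sq_nonneg m)
  rw [hexplam]
  have key2 : 4*u^2*(m^2*((u+v)/2)^2 + u^2*α^2 - α*m*(u^2+1)) =
      (m*u*(u+v) - 2*u^2*α)^2 := by
    linear_combination (4*u^2*α*m) * huv
  nlinarith [key2, sq_nonneg (m*u*(u+v) - 2*u^2*α), h4, mul_pos hupos hupos, hα, hm]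

lemma cube_vol (n : ℕ) : volume (Set.Icc (0 : Fin n → ℝ) 1) = 1 := by
  rw [Real.volume_Icc_pi]
  simp

lemma mem_cube_cons {t : ℝ} {z : Fin n → ℝ} :
    Fin.cons t z ∈ Set.Icc (0 : Fin (n+1) → ℝ) 1 ↔
      t ∈ Set.Icc (0:ℝ) 1 ∧ z ∈ Set.Icc (0 : Fin n → ℝ) 1 := by
  simp only [Set.mem_Icc, Pi.le_def]
  constructor
  · rintro ⟨h0, h1⟩
    refine ⟨⟨by simpa using h0 0, by simpa using h1 0⟩,
      fun i => by simpa using h0 i.succ, fun i => by simpa using h1 i.succ⟩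
  · rintro ⟨⟨ht0, ht1⟩, hz0, hz1⟩
    have hz0' : ∀ i, (0:ℝ) ≤ z i := fun i => by simpa using hz0 i
    have hz1' : ∀ i, z i ≤ 1 := fun i => by simpa using hz1 i
    constructor <;> intro i <;> refine Fin.cases ?_ (fun j => ?_) i <;>
      simp [ht0, ht1, hz0', hz1']

theorem key (lam : ℝ) (hlam : 0 ≤ lam) :
    ∀ n, ∀ K : Set (Fin n → ℝ), IsCompact K → K ⊆ Set.Icc 0 1 →
      volume K * ∫⁻ x in Set.Icc (0 : Fin n → ℝ) 1, eD lam K x ≤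
        ENNReal.ofReal (Real.exp (n * lam ^ 2 / 4)) := by
  intro n
  induction n with
  | zero =>
    intro K hK hsub
    rcases K.eq_empty_or_nonempty with rfl | hne
    · simp
    have h1 : ∀ x, eD lam K x ≤ 1 := by
      intro x
      obtain ⟨y, hy⟩ := hne
      refine (iInf₂_le y hy).trans ?_
      have h0 : l0Dist x y = 0 := by simp [l0Dist]
      simp [h0]
    have h2 : volume K * ∫⁻ x in Set.Icc (0 : Fin 0 → ℝ) 1, eD lam K x ≤ 1 * 1 := by
      apply mul_le_mul'
      · exact (measure_mono hsub).trans_eq (cube_vol 0)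
      · calc ∫⁻ x in Set.Icc (0 : Fin 0 → ℝ) 1, eD lam K x
            ≤ ∫⁻ _ in Set.Icc (0 : Fin 0 → ℝ) 1, (1:ℝ≥0∞) := lintegral_mono h1
          _ = 1 := by rw [setLIntegral_one, cube_vol 0]
    refine h2.trans ?_
    simp
  | succ n ih =>
    intro K hK hsub
    rcases K.eq_empty_or_nonempty with rfl | hne
    · simp
    classical
    set cube1 : Set ℝ := Set.Icc 0 1 with hcube1
    set cubeN : Set (Fin n → ℝ) := Set.Icc 0 1 with hcubeN
    set L : ℝ≥0∞ := ENNReal.ofReal (Real.exp lam) with hLdef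
    set C : ℝ≥0∞ := ENNReal.ofReal (Real.exp (n * lam ^ 2 / 4)) with hCdef
    have hLtop : L ≠ ⊤ := ENNReal.ofReal_ne_top
    have hC0 : C ≠ 0 := (ENNReal.ofReal_pos.mpr (Real.exp_pos _)).ne'
    have hCtop : C ≠ ⊤ := ENNReal.ofReal_ne_top
    set K' : Set (Fin n → ℝ) := Fin.tail '' K with hK'def
    set Kt : ℝ → Set (Fin n → ℝ) := fun t => {z | Fin.cons t z ∈ K} with hKtdef
    have htail_cont : Continuous (Fin.tail : (Fin (n+1) → ℝ) → (Fin n → ℝ)) :=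
      continuous_pi fun i => continuous_apply _
    have hcons_cont : ∀ t : ℝ,
        Continuous (fun z : Fin n → ℝ => (Fin.cons t z : Fin (n+1) → ℝ)) := by
      intro t
      apply continuous_pi
      intro i
      refine Fin.cases ?_ ?_ i
      · simpa using continuous_const
      · intro j; simpa using continuous_apply j
    have hK'comp : IsCompact K' := hK.image htail_cont
    have hK'sub : K' ⊆ cubeN := by
      rintro z ⟨y, hy, rfl⟩
      have hyc := hsub hy
      rw [Set.mem_Icc, Pi.le_def, Pi.le_def] at hyc
      rw [hcubeN, Set.mem_Icc, Pi.le_def, Pi.le_def]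
      exact ⟨fun i => by simpa [Fin.tail] using hyc.1 i.succ, fun i => by simpa [Fin.tail] using hyc.2 i.succ⟩
    have hKtsub : ∀ t, Kt t ⊆ K' := by
      intro t z hz
      exact ⟨Fin.cons t z, hz, by simp⟩
    have hKtcomp : ∀ t, IsCompact (Kt t) := by
      intro t
      apply IsCompact.of_isClosed_subset isCompact_Icc
        (hK.isClosed.preimage (hcons_cont t))
      exact (hKtsub t).trans hK'sub
    set e := MeasurableEquiv.piFinSuccAbove (fun _ : Fin (n+1) => ℝ) 0 with hedef
    have hmp : MeasurePreserving e volume volume :=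
      volume_preserving_piFinSuccAbove (fun _ : Fin (n+1) => ℝ) 0
    have hesymm : ∀ (t : ℝ) (z : Fin n → ℝ), e.symm (t, z) = Fin.cons t z := by
      intro t z
      rw [hedef, MeasurableEquiv.piFinSuccAbove_symm_apply]
      exact Fin.insertNth_zero' t z
    have hKmeas : MeasurableSet K := hK.isClosed.measurableSet
    have hG : Measurable (eD lam K) := measurable_eD hlam hK hne
    set G := eD lam K with hGdef
    have hGmeas' : Measurable fun p : ℝ × (Fin n → ℝ) => G (e.symm p) :=
      hG.comp e.symm.measurable
    have hsliceK : ∀ t : ℝ, (Prod.mk t ⁻¹' (e.symm ⁻¹' K)) = Kt t := by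
      intro t; ext z
      simp only [Set.mem_preimage, hesymm, hKtdef, Set.mem_setOf_eq]
    set at_ : ℝ → ℝ≥0∞ := fun t => volume (Kt t) with hatdef
    have hvolK : volume K = ∫⁻ t, at_ t := by
      have h1 : volume K = (volume : Measure (ℝ × (Fin n → ℝ))) (e.symm ⁻¹' K) :=
        ((MeasurePreserving.symm e hmp).measure_preimage hKmeas.nullMeasurableSet).symm
      rw [h1, Measure.volume_eq_prod, Measure.prod_apply (e.symm.measurable hKmeas)]
      apply lintegral_congr
      intro t
      rw [hsliceK]
    have hKt_empty : ∀ t, t ∉ cube1 → Kt t = ∅ := by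
      intro t ht
      ext z
      simp only [hKtdef, Set.mem_setOf_eq, Set.mem_empty_iff_false, iff_false]
      intro hz
      exact ht ((mem_cube_cons.mp (hsub hz)).1)
    have hvolK' : volume K = ∫⁻ t in cube1, at_ t := by
      rw [hvolK, ← lintegral_indicator measurableSet_Icc]
      apply lintegral_congr
      intro t
      by_cases ht : t ∈ cube1
      · rw [Set.indicator_of_mem ht]
      · rw [Set.indicator_of_notMem ht, hatdef]
        simp only []
        rw [hKt_empty t ht, measure_empty]
    set T := ∫⁻ x in Set.Icc (0 : Fin (n+1) → ℝ) 1, G x with hTdef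
    have himage : e '' (Set.Icc (0 : Fin (n+1) → ℝ) 1) = cube1 ×ˢ cubeN := by
      rw [MeasurableEquiv.image_eq_preimage_symm]
      ext p
      obtain ⟨t, z⟩ := p
      simp only [Set.mem_preimage, hesymm, Set.mem_prod]
      exact mem_cube_cons
    set J : ℝ → ℝ≥0∞ := fun t => ∫⁻ z in cubeN, G (Fin.cons t z) with hJdef
    have hT2 : T = ∫⁻ t in cube1, J t := by
      have h6 := hmp.setLIntegral_comp_emb e.measurableEmbedding
        (fun p => G (e.symm p)) (Set.Icc (0 : Fin (n+1) → ℝ) 1)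
      simp only [MeasurableEquiv.symm_apply_apply] at h6
      rw [hTdef, h6, himage, Measure.volume_eq_prod, ← Measure.prod_restrict,
        lintegral_prod _ hGmeas'.aemeasurable]
      apply lintegral_congr
      intro t
      apply lintegral_congr
      intro z
      rw [hesymm]
    set I' : ℝ≥0∞ := ∫⁻ z in cubeN, eD lam K' z with hI'def
    set It : ℝ → ℝ≥0∞ := fun t => ∫⁻ z in cubeN, eD lam (Kt t) z with hItdef
    have hJle : ∀ t, J t ≤ min (It t) (L * I') := by
      intro t
      refine le_min ?_ ?_
      · exact lintegral_mono fun z => eD_le_slice K t z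
      · calc J t ≤ ∫⁻ z in cubeN, L * eD lam K' z :=
              lintegral_mono fun z => eD_le_proj hlam K t z
          _ = L * I' := lintegral_const_mul' _ _ hLtop
    have hIH_t : ∀ t, at_ t * It t ≤ C := fun t =>
      ih (Kt t) (hKtcomp t) ((hKtsub t).trans hK'sub)
    set M := volume K' with hMdef
    have hIH' : M * I' ≤ C := ih K' hK'comp hK'sub
    have hat_le_M : ∀ t, at_ t ≤ M := fun t => measure_mono (hKtsub t)
    have hM_le_one : M ≤ 1 := (measure_mono hK'sub).trans_eq (cube_vol n)
    have hMtop : M ≠ ⊤ := (hM_le_one.trans_lt ENNReal.one_lt_top).ne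
    have ha_le_M : volume K ≤ M := by
      rw [hvolK']
      calc ∫⁻ t in cube1, at_ t ≤ ∫⁻ _ in cube1, M := lintegral_mono fun t => hat_le_M t
        _ = M * volume cube1 := setLIntegral_const _ _
        _ = M := by rw [hcube1, Real.volume_Icc]; simp
    have hmain : ∀ t, M^2 * J t + L * C * at_ t ≤ L * C * M + C * M := by
      intro t
      rcases le_or_gt (L * at_ t) M with hle | hlt
      · have h2 : M ^ 2 * J t ≤ L * C * M := by
          calc M^2 * J t ≤ M^2 * (L * I') := by
                gcongr
                exact (hJle t).trans (min_le_right _ _)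
            _ = L * M * (M * I') := by ring
            _ ≤ L * M * C := by gcongr
            _ = L * C * M := by ring
        have h3 : L * C * at_ t ≤ C * M := by
          calc L * C * at_ t = C * (L * at_ t) := by ring
            _ ≤ C * M := by gcongr
        exact add_le_add h2 h3
      · have hat0 : at_ t ≠ 0 := by
          rintro h0
          rw [h0, mul_zero] at hlt
          exact (not_lt.mpr (zero_le : (0:ℝ≥0∞) ≤ M)) hlt
        have hattop : at_ t ≠ ⊤ := ((hat_le_M t).trans_lt hMtop.lt_top).ne
        rw [← ENNReal.mul_le_mul_iff_right hat0 hattop]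
        obtain ⟨e0, he0⟩ := le_iff_exists_add.mp hlt.le
        have hJIt : at_ t * J t ≤ C := by
          refine le_trans ?_ (hIH_t t)
          gcongr
          exact (hJle t).trans (min_le_left _ _)
        calc at_ t * (M^2*J t + L*C*at_ t)
            = M^2 * (at_ t * J t) + C * ((L * at_ t) * at_ t) := by ring
          _ ≤ M^2 * C + C * ((L * at_ t) * at_ t) := by gcongr
          _ = C*(M*M) + C*(M*at_ t) + C*(e0*at_ t) := by rw [he0]; ring
          _ ≤ C*(M*M) + C*(M*at_ t) + C*(e0*M) := by
              gcongr
              exact hat_le_M t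
          _ = at_ t * (L*C*M + C*M) := by
              have h4 : at_ t * (L * C * M + C * M) =
                  (L * at_ t) * (C * M) + at_ t * (C * M) := by ring
              rw [h4, he0]; ring
    have hJmeas : Measurable J := by
      have h7 : J = fun t => ∫⁻ z, G (e.symm (t, z)) ∂(volume.restrict cubeN) := by
        funext t
        rw [hJdef]
        apply lintegral_congr
        intro z
        rw [hesymm]
      rw [h7]
      exact hGmeas'.lintegral_prod_right'
    have hstep : M^2 * T + L * C * volume K ≤ L * C * M + C * M := by
      have h5 : ∫⁻ t in cube1, (M^2 * J t + L * C * at_ t)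
          ≤ ∫⁻ _ in cube1, (L*C*M + C*M) := lintegral_mono fun t => hmain t
      rw [setLIntegral_const, hcube1, Real.volume_Icc] at h5
      simp only [sub_zero, ENNReal.ofReal_one, mul_one] at h5
      rw [lintegral_add_left (hJmeas.const_mul _)] at h5
      rw [lintegral_const_mul' _ _ (ENNReal.pow_ne_top hMtop),
        lintegral_const_mul' _ _ (ENNReal.mul_ne_top hLtop hCtop)] at h5
      rw [hT2, hvolK']
      exact h5
    rcases eq_or_ne M 0 with hM0 | hM0
    · have hK0 : volume K = 0 := le_antisymm (ha_le_M.trans_eq hM0) zero_le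
      rw [hK0, zero_mul]
      exact zero_le
    have hMsq0 : M^2 ≠ 0 := pow_ne_zero _ hM0
    have hMsqtop : M^2 ≠ ⊤ := ENNReal.pow_ne_top hMtop
    have hsplit : ((n+1 : ℕ) : ℝ) * lam^2/4 = n * lam^2/4 + lam^2/4 := by
      push_cast; ring
    rw [hsplit, Real.exp_add, ENNReal.ofReal_mul (Real.exp_nonneg _)]
    set E := ENNReal.ofReal (Real.exp (lam^2/4)) with hEdef
    set a := volume K with hadef
    have hatop : a ≠ ⊤ := (ha_le_M.trans_lt hMtop.lt_top).ne
    rw [← ENNReal.mul_le_mul_iff_right hMsq0 hMsqtop]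
    have hmul : a * (M^2 * T) + L * C * a^2 ≤ a * (L*C*M + C*M) := by
      calc a * (M^2*T) + L*C*a^2 = a * (M^2*T + L*C*a) := by ring
        _ ≤ a * (L*C*M + C*M) := by gcongr
    have hrealE : a * (L*M + M) ≤ M^2 * E + L * a^2 := by
      have hXtop : a * (L*M + M) ≠ ⊤ :=
        ENNReal.mul_ne_top hatop (ENNReal.add_ne_top.mpr
          ⟨ENNReal.mul_ne_top hLtop hMtop, hMtop⟩)
      have hYtop : M^2 * E + L * a^2 ≠ ⊤ :=
        ENNReal.add_ne_top.mpr ⟨ENNReal.mul_ne_top hMsqtop ENNReal.ofReal_ne_top,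
          ENNReal.mul_ne_top hLtop (ENNReal.pow_ne_top hatop)⟩
      rw [← ENNReal.toReal_le_toReal hXtop hYtop]
      rw [ENNReal.toReal_mul, ENNReal.toReal_add (ENNReal.mul_ne_top hLtop hMtop) hMtop,
        ENNReal.toReal_mul, ENNReal.toReal_add
          (ENNReal.mul_ne_top hMsqtop ENNReal.ofReal_ne_top)
          (ENNReal.mul_ne_top hLtop (ENNReal.pow_ne_top hatop)),
        ENNReal.toReal_mul, ENNReal.toReal_mul, ENNReal.toReal_pow, ENNReal.toReal_pow]
      rw [ENNReal.toReal_ofReal (Real.exp_nonneg _),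
        ENNReal.toReal_ofReal (Real.exp_nonneg _)]
      exact final_real lam a.toReal M.toReal ENNReal.toReal_nonneg
        (ENNReal.toReal_mono hMtop ha_le_M)
    have hfin : M^2 * (a*T) + L*C*a^2 ≤ M^2 * (C*E) + L*C*a^2 := by
      calc M^2 * (a*T) + L*C*a^2 = a * (M^2*T) + L*C*a^2 := by ring
        _ ≤ a * (L*C*M + C*M) := hmul
        _ = C * (a * (L*M + M)) := by ring
        _ ≤ C * (M^2 * E + L * a^2) := by gcongr
        _ = M^2 * (C*E) + L*C*a^2 := by ring
    exact (ENNReal.add_le_add_iff_right (ENNReal.mul_ne_top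
      (ENNReal.mul_ne_top hLtop hCtop) (ENNReal.pow_ne_top hatop))).mp hfin

end HamAux

open HamAux in
theorem hamming_expansion_concentration (n : ℕ) (A : Set (Fin n → ℝ))
    (hA : MeasurableSet A) (hAsub : A ⊆ Set.Icc 0 1)
    (hApos : 0 < (volume A).toReal) (ε : ℕ) :
    volume {x ∈ Set.Icc (0 : Fin n → ℝ) 1 | ∃ y ∈ A, l0Dist x y ≤ ε} ≥
      ENNReal.ofReal (1 - Real.exp (-(ε : ℝ) ^ 2 / n) / (volume A).toReal) := by
  classical
  have hAfin : volume A ≠ ⊤ := by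
    refine ne_of_lt (lt_of_le_of_lt (measure_mono hAsub) ?_)
    rw [cube_vol n]
    exact ENNReal.one_lt_top
  set aA := (volume A).toReal with haAdef
  have haA_le_one : aA ≤ 1 := by
    rw [haAdef, ← ENNReal.toReal_one]
    apply ENNReal.toReal_mono ENNReal.one_ne_top
    exact (measure_mono hAsub).trans_eq (cube_vol n)
  by_cases hn : n = 0
  · subst hn
    have h1 : Real.exp (-(ε : ℝ) ^ 2 / (0:ℕ)) / aA = 1 / aA := by
      norm_num
    have h2 : (1:ℝ) ≤ 1 / aA := by
      rw [le_div_iff₀ hApos]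
      simpa using haA_le_one
    have h3 : 1 - Real.exp (-(ε : ℝ) ^ 2 / (0:ℕ)) / aA ≤ 0 := by
      rw [h1]; linarith
    rw [ge_iff_le, ENNReal.ofReal_eq_zero.mpr h3]
    exact zero_le
  have hnpos : (0:ℝ) < n := by
    exact_mod_cast Nat.pos_of_ne_zero hn
  set lam : ℝ := 2 * ε / n with hlamdef
  have hlam : 0 ≤ lam := by positivity
  set ee := Real.exp (-(ε : ℝ) ^ 2 / n) with heedef
  have heepos : 0 < ee := Real.exp_pos _
  rw [ge_iff_le]
  apply ENNReal.le_of_forall_pos_le_add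
  intro η hη _
  have hηR : (0:ℝ) < (η:ℝ) := hη
  set δ : ℝ := min (aA/2) ((η:ℝ) * aA^2 / (2 * ee)) with hδdef
  have hδpos : 0 < δ := by
    apply lt_min
    · positivity
    · positivity
  obtain ⟨K, hKA, hKcomp, hKvol⟩ :=
    hA.exists_isCompact_lt_add hAfin (ENNReal.ofReal_pos.mpr hδpos).ne'
  have hKfin : volume K ≠ ⊤ := ne_of_lt (lt_of_le_of_lt (measure_mono hKA) hAfin.lt_top)
  set aK := (volume K).toReal with haKdef
  have haA_lt : aA ≤ aK + δ := by
    have h4 : volume A ≤ volume K + ENNReal.ofReal δ := hKvol.le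
    have h5 := ENNReal.toReal_mono (by
      exact ENNReal.add_ne_top.mpr ⟨hKfin, ENNReal.ofReal_ne_top⟩) h4
    rwa [ENNReal.toReal_add hKfin ENNReal.ofReal_ne_top,
      ENNReal.toReal_ofReal hδpos.le] at h5
  have hδ_half : δ ≤ aA / 2 := min_le_left _ _
  have haKpos : 0 < aK := by linarith
  have hKne : K.Nonempty := by
    rcases K.eq_empty_or_nonempty with rfl | h
    · rw [haKdef, measure_empty] at haKpos; simp at haKpos
    · exact h
  -- Markov bound on the complement of the expansion of K
  set Exp := {x : Fin n → ℝ | ∃ y ∈ K, l0Dist x y ≤ ε} with hExpdef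
  have hExpMeas : MeasurableSet Exp := measurableSet_expansion hKcomp ε
  set B := Set.Icc (0 : Fin n → ℝ) 1 \ Exp with hBdef
  have hBmeas : MeasurableSet B := measurableSet_Icc.diff hExpMeas
  have hlower : ∀ x ∈ B, ENNReal.ofReal (Real.exp (lam * ε)) ≤ eD lam K x := by
    intro x hx
    rw [eD_eq hlam hKne]
    apply ENNReal.ofReal_le_ofReal
    apply Real.exp_le_exp.mpr
    apply mul_le_mul_of_nonneg_left _ hlam
    have h6 : ¬ (hd K x ≤ ε) := by
      rw [hd_le_iff hKne]
      exact hx.2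
    exact_mod_cast le_of_not_ge h6
  have hMarkov : volume B * ENNReal.ofReal (Real.exp (lam * ε)) ≤
      ∫⁻ x in Set.Icc (0 : Fin n → ℝ) 1, eD lam K x := by
    calc volume B * ENNReal.ofReal (Real.exp (lam * ε))
        = ∫⁻ _ in B, ENNReal.ofReal (Real.exp (lam * ε)) := by
          rw [setLIntegral_const, mul_comm]
      _ ≤ ∫⁻ x in B, eD lam K x :=
          setLIntegral_mono (measurable_eD hlam hKcomp hKne) hlower
      _ ≤ ∫⁻ x in Set.Icc (0 : Fin n → ℝ) 1, eD lam K x :=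
          lintegral_mono' (Measure.restrict_mono Set.diff_subset le_rfl) le_rfl
  have hkey := key lam hlam n K hKcomp (hKA.trans hAsub)
  have h9 : ENNReal.ofReal (aK * Real.exp (lam * ε)) * volume B ≤
      ENNReal.ofReal (Real.exp (n * lam^2/4)) := by
    rw [ENNReal.ofReal_mul haKpos.le]
    have hvolKeq : ENNReal.ofReal aK = volume K := ENNReal.ofReal_toReal hKfin
    calc ENNReal.ofReal aK * ENNReal.ofReal (Real.exp (lam * ε)) * volume B
        = volume K * (volume B * ENNReal.ofReal (Real.exp (lam * ε))) := by
          rw [hvolKeq]; ring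
      _ ≤ volume K * ∫⁻ x in Set.Icc (0 : Fin n → ℝ) 1, eD lam K x := by
          gcongr
      _ ≤ ENNReal.ofReal (Real.exp (n * lam^2/4)) := hkey
  have h10 : volume B ≤ ENNReal.ofReal (ee / aK) := by
    have hcpos : (0:ℝ) < aK * Real.exp (lam * ε) := by positivity
    have h11 : volume B ≤ ENNReal.ofReal (Real.exp (n * lam^2/4)) /
        ENNReal.ofReal (aK * Real.exp (lam * ε)) := by
      rw [ENNReal.le_div_iff_mul_le
        (Or.inl (ENNReal.ofReal_pos.mpr hcpos).ne') (Or.inl ENNReal.ofReal_ne_top)]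
      rw [mul_comm]
      exact h9
    rw [← ENNReal.ofReal_div_of_pos hcpos] at h11
    have hexp_eq : Real.exp (n * lam^2/4) / (aK * Real.exp (lam * ε)) = ee / aK := by
      rw [heedef, hlamdef]
      rw [show (n:ℝ) * (2 * ε / n)^2/4 = (ε:ℝ)^2/n by field_simp; ring]
      rw [show (2 * (ε:ℝ) / n) * ε = 2 * (ε:ℝ)^2/n by ring]
      rw [div_mul_eq_div_div_swap, ← Real.exp_sub]
      congr 1
      ring
    rwa [hexp_eq] at h11
  -- conclude
  have hExpSub : Set.Icc (0 : Fin n → ℝ) 1 ∩ Exp ⊆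
      {x ∈ Set.Icc (0 : Fin n → ℝ) 1 | ∃ y ∈ A, l0Dist x y ≤ ε} := by
    rintro x ⟨hx1, y, hy, hxy⟩
    exact ⟨hx1, y, hKA hy, hxy⟩
  have hsum : volume (Set.Icc (0 : Fin n → ℝ) 1 ∩ Exp) + volume B = 1 := by
    rw [hBdef, measure_inter_add_diff _ hExpMeas, cube_vol n]
  have hlb : 1 - ENNReal.ofReal (ee / aK) ≤
      volume {x ∈ Set.Icc (0 : Fin n → ℝ) 1 | ∃ y ∈ A, l0Dist x y ≤ ε} := by
    refine le_trans ?_ (measure_mono hExpSub)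
    rw [tsub_le_iff_right]
    calc (1:ENNReal) = volume (Set.Icc (0 : Fin n → ℝ) 1 ∩ Exp) + volume B := hsum.symm
      _ ≤ volume (Set.Icc (0 : Fin n → ℝ) 1 ∩ Exp) + ENNReal.ofReal (ee / aK) := by
          gcongr
  -- real arithmetic: ee/aK ≤ ee/aA + η
  have hδ2 : 2 * ee * δ ≤ (η:ℝ) * aA^2 := by
    have := min_le_right (aA/2) ((η:ℝ) * aA^2 / (2 * ee))
    calc 2 * ee * δ ≤ 2 * ee * ((η:ℝ) * aA^2 / (2 * ee)) := by
          apply mul_le_mul_of_nonneg_left _ (by positivity)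
          rw [hδdef]
          exact this
      _ = (η:ℝ) * aA^2 := by field_simp
  have hf3 : 0 ≤ (η:ℝ) * aA * (2 * aK - aA) := by
    apply mul_nonneg (by positivity)
    linarith
  have hf1 : ee * (aA - aK) ≤ ee * δ :=
    mul_le_mul_of_nonneg_left (by linarith) heepos.le
  have hre : ee / aK ≤ ee / aA + (η:ℝ) := by
    rw [div_le_iff₀ haKpos]
    have hApos' : (0:ℝ) < aA := hApos
    have hexpand : (ee / aA + (η:ℝ)) * aK = (ee * aK + (η:ℝ) * aA * aK) / aA := by
      field_simp
    rw [hexpand, le_div_iff₀ hApos']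
    nlinarith [hf1, hδ2, hf3]
  calc ENNReal.ofReal (1 - ee / aA)
      ≤ ENNReal.ofReal ((1 - ee / aK) + (η:ℝ)) := by
        apply ENNReal.ofReal_le_ofReal
        linarith
    _ ≤ ENNReal.ofReal (1 - ee / aK) + ENNReal.ofReal (η:ℝ) := ENNReal.ofReal_add_le
    _ = ENNReal.ofReal (1 - ee / aK) + η := by rw [ENNReal.ofReal_coe_nnreal]
    _ ≤ volume {x ∈ Set.Icc (0 : Fin n → ℝ) 1 | ∃ y ∈ A, l0Dist x y ≤ ε} + η := by
        gcongr
        calc ENNReal.ofReal (1 - ee / aK)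
            = ENNReal.ofReal 1 - ENNReal.ofReal (ee / aK) :=
              ENNReal.ofReal_sub _ (by positivity)
          _ = 1 - ENNReal.ofReal (ee / aK) := by rw [ENNReal.ofReal_one]
          _ ≤ _ := hlb
end

section
/- (Existence of sparse adversarial examples) Let ρ be a probability density on [0,1]ⁿ with support S, and R ⊂ [0,1]ⁿ measurable with vol[R] < 1/2. If ε ≥ √(n·log 2/2) and vol[S] ≥ exp(-(2/n)·(ε - √(n·log 2/2))²), then there exists x with ρ(x) > 0 and x̂ ∈ Rᶜ differing from x in at most ε coordinates. -/
set_option maxHeartbeats 1000000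

open Real MeasureTheory

-- derivative helper: T λ = p e^λ / (q + p e^λ) is (1/4)-Lipschitz
private lemma hoeffding_scalar (p lam : ℝ) (hp0 : 0 ≤ p) (hp1 : p ≤ 1) :
    1 - p + p * exp lam ≤ exp (p * lam + lam ^ 2 / 8) := by
  set q : ℝ := 1 - p with hq
  have hq0 : 0 ≤ q := by simp [hq]; linarith
  have hD : ∀ x : ℝ, 0 < q + p * exp x := by
    intro x
    rcases eq_or_lt_of_le hp0 with h | h
    · simp [← h, hq]
    · positivity
  set T : ℝ → ℝ := fun x => p * exp x / (q + p * exp x) with hT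
  have hTderiv : ∀ x : ℝ, HasDerivAt T (q * (p * exp x) / (q + p * exp x) ^ 2) x := by
    intro x
    have h1 : HasDerivAt (fun x : ℝ => p * exp x) (p * exp x) x :=
      (Real.hasDerivAt_exp x).const_mul p
    have h2 : HasDerivAt (fun x : ℝ => q + p * exp x) (p * exp x) x := by
      simpa using h1.const_add q
    have := h1.div h2 (ne_of_gt (hD x))
    exact this.congr_deriv (by ring)
  have hTbd : ∀ x : ℝ, |q * (p * exp x) / (q + p * exp x) ^ 2| ≤ 1 / 4 := by
    intro x
    have h4 : 4 * (q * (p * exp x)) ≤ (q + p * exp x) ^ 2 := by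
      nlinarith [sq_nonneg (q - p * exp x), exp_pos x]
    rw [abs_div, abs_of_nonneg (by positivity : (0:ℝ) ≤ q * (p * exp x)),
      abs_of_pos (pow_pos (hD x) 2)]
    rw [div_le_div_iff₀ (pow_pos (hD x) 2) (by norm_num)]
    linarith
  have hTlip : ∀ x : ℝ, |T x - T 0| ≤ 1 / 4 * |x - 0| := by
    intro x
    have := Convex.norm_image_sub_le_of_norm_hasDerivWithin_le
      (f := T) (f' := fun x => q * (p * exp x) / (q + p * exp x) ^ 2)
      (fun y _ => (hTderiv y).hasDerivWithinAt) (fun y _ => hTbd y) convex_univ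
      (Set.mem_univ 0) (Set.mem_univ x)
    simpa [Real.norm_eq_abs] using this
  have hT0 : T 0 = p := by
    simp [hT, hq]
  -- h x := p x + x^2/8 - log (q + p e^x)
  set h : ℝ → ℝ := fun x => p * x + x ^ 2 / 8 - log (q + p * exp x) with hh
  have hhderiv : ∀ x : ℝ, HasDerivAt h (p + x / 4 - T x) x := by
    intro x
    have h2 : HasDerivAt (fun x : ℝ => q + p * exp x) (p * exp x) x := by
      simpa using ((Real.hasDerivAt_exp x).const_mul p).const_add q
    have hlog := h2.log (ne_of_gt (hD x))
    have hpoly : HasDerivAt (fun x : ℝ => p * x + x ^ 2 / 8) (p + x / 4) x := by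
      have := ((hasDerivAt_id x).const_mul p).add
        (((hasDerivAt_pow 2 x)).div_const 8)
      exact this.congr_deriv (by ring)
    exact hpoly.sub hlog
  have hcont : Continuous h := by
    have : Differentiable ℝ h := fun x => (hhderiv x).differentiableAt
    exact this.continuous
  have key : ∀ x : ℝ, 0 ≤ h x := by
    intro x
    have h0 : h 0 = 0 := by simp [hh, hq]
    rcases le_total 0 x with hx | hx
    · have mono : MonotoneOn h (Set.Ici 0) := by
        apply monotoneOn_of_deriv_nonneg (convex_Ici 0) (hcont.continuousOn)
          (fun y _ => (hhderiv y).differentiableAt.differentiableWithinAt)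
        intro y hy
        rw [interior_Ici] at hy
        rw [(hhderiv y).deriv]
        have := (hTlip y)
        have hy0 : 0 < y := hy
        rw [abs_le] at this
        have := this.2
        rw [hT0, sub_zero, abs_of_nonneg hy0.le] at this
        linarith
      have := mono (Set.mem_Ici.2 le_rfl) (Set.mem_Ici.2 hx) hx
      linarith [h0 ▸ this]
    · have anti : AntitoneOn h (Set.Iic 0) := by
        apply antitoneOn_of_deriv_nonpos (convex_Iic 0) (hcont.continuousOn)
          (fun y _ => (hhderiv y).differentiableAt.differentiableWithinAt)
        intro y hy
        rw [interior_Iic] at hy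
        rw [(hhderiv y).deriv]
        have := (hTlip y)
        have hy0 : y < 0 := hy
        rw [abs_le] at this
        have := this.1
        rw [hT0, sub_zero, abs_of_nonpos hy0.le] at this
        linarith
      have := anti (Set.mem_Iic.2 hx) (Set.mem_Iic.2 le_rfl) hx
      linarith [h0 ▸ this]
  have := key lam
  rw [hh] at this
  have hlog : log (q + p * exp lam) ≤ p * lam + lam ^ 2 / 8 := by linarith
  calc 1 - p + p * exp lam = q + p * exp lam := by rw [hq]
    _ ≤ exp (p * lam + lam ^ 2 / 8) := by
        rw [← Real.exp_log (hD lam)]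
        exact Real.exp_le_exp.2 hlog


section
variable {α : Type*} [MeasurableSpace α] (ν : Measure α) [IsProbabilityMeasure ν]

private lemma integrable_of_bdd {φ : α → ℝ} (hφ : Measurable φ) (C : ℝ) (hC : ∀ ω, |φ ω| ≤ C) :
    Integrable φ ν :=
  Integrable.mono' (integrable_const C) hφ.aestronglyMeasurable (Filter.Eventually.of_forall hC)

private lemma hoeffding_integral {g : α → ℝ} (hg : Measurable g)
    (hosc : ∀ ω ω', g ω - g ω' ≤ 1) (lam : ℝ) :
    ∫ ω, exp (lam * g ω) ∂ν ≤ exp (lam * (∫ ω, g ω ∂ν) + lam ^ 2 / 8) := by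
  have hne : Nonempty α := by
    by_contra hc
    rw [not_nonempty_iff] at hc
    have h1 := measure_univ (μ := ν)
    rw [Set.univ_eq_empty_iff.2 hc, measure_empty] at h1
    simp at h1
  obtain ⟨ω₀⟩ := hne
  have hrange : (Set.range g).Nonempty := ⟨g ω₀, ⟨ω₀, rfl⟩⟩
  have hbdd : BddBelow (Set.range g) := by
    refine ⟨g ω₀ - 1, ?_⟩
    rintro y ⟨ω, rfl⟩
    linarith [hosc ω₀ ω]
  set a : ℝ := sInf (Set.range g) with ha
  have ha1 : ∀ ω, a ≤ g ω := fun ω => csInf_le hbdd ⟨ω, rfl⟩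
  have ha2 : ∀ ω, g ω ≤ a + 1 := by
    intro ω
    have : g ω - 1 ≤ a := by
      apply le_csInf hrange
      rintro y ⟨ω', rfl⟩
      linarith [hosc ω ω']
    linarith
  have hgbd : ∀ ω, |g ω| ≤ |a| + 1 := by
    intro ω
    rw [abs_le]
    constructor <;> [linarith [ha1 ω, neg_abs_le a]; linarith [ha2 ω, le_abs_self a]]
  have hgint : Integrable g ν := integrable_of_bdd ν hg (|a| + 1) hgbd
  set m : ℝ := ∫ ω, g ω ∂ν with hm
  set e1 : ℝ := exp (lam * a) with he1
  set e2 : ℝ := exp (lam * (a + 1)) with he2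
  -- pointwise convexity bound
  have hpt : ∀ ω, exp (lam * g ω) ≤ ((a + 1) * e1 - a * e2) + g ω * (e2 - e1) := by
    intro ω
    have h1 : (0:ℝ) ≤ a + 1 - g ω := by linarith [ha2 ω]
    have h2 : (0:ℝ) ≤ g ω - a := by linarith [ha1 ω]
    have h3 : (a + 1 - g ω) + (g ω - a) = 1 := by ring
    have := convexOn_exp.2 (Set.mem_univ (lam * a)) (Set.mem_univ (lam * (a + 1))) h1 h2 h3
    simp only [smul_eq_mul] at this
    have harg : (a + 1 - g ω) * (lam * a) + (g ω - a) * (lam * (a + 1)) = lam * g ω := by ring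
    rw [harg] at this
    calc exp (lam * g ω) ≤ (a + 1 - g ω) * e1 + (g ω - a) * e2 := this
      _ = ((a + 1) * e1 - a * e2) + g ω * (e2 - e1) := by ring
  -- integrate
  have hLint : Integrable (fun ω => exp (lam * g ω)) ν := by
    apply integrable_of_bdd ν (by fun_prop) (exp (|lam| * (|a| + 1)))
    intro ω
    rw [abs_of_nonneg (exp_nonneg _), exp_le_exp]
    calc lam * g ω ≤ |lam * g ω| := le_abs_self _
      _ = |lam| * |g ω| := abs_mul _ _
      _ ≤ |lam| * (|a| + 1) := by
          apply mul_le_mul_of_nonneg_left (hgbd ω) (abs_nonneg _)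
  have hRint : Integrable (fun ω => ((a + 1) * e1 - a * e2) + g ω * (e2 - e1)) ν :=
    (integrable_const _).add (hgint.mul_const _)
  have hint := integral_mono hLint hRint hpt
  have hRval : ∫ ω, (((a + 1) * e1 - a * e2) + g ω * (e2 - e1)) ∂ν
      = ((a + 1) * e1 - a * e2) + m * (e2 - e1) := by
    rw [integral_add (integrable_const _) (hgint.mul_const _), integral_const,
      integral_mul_const]
    simp [hm]
  rw [hRval] at hint
  -- scalar Hoeffding
  have hma : a ≤ m := by
    have := integral_mono (integrable_const a) hgint (fun ω => ha1 ω)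
    rwa [integral_const, probReal_univ, smul_eq_mul, one_mul] at this
  have hma2 : m ≤ a + 1 := by
    have := integral_mono hgint (integrable_const (a + 1)) (fun ω => ha2 ω)
    rwa [integral_const, probReal_univ, smul_eq_mul, one_mul] at this
  set p : ℝ := m - a with hp
  have key : ((a + 1) * e1 - a * e2) + m * (e2 - e1) = e1 * (1 - p + p * exp lam) := by
    rw [he1, he2, hp]
    have : exp (lam * (a + 1)) = exp (lam * a) * exp lam := by
      rw [← Real.exp_add]; ring_nf
    rw [this]; ring
  rw [key] at hint
  calc ∫ ω, exp (lam * g ω) ∂ν ≤ e1 * (1 - p + p * exp lam) := hint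
    _ ≤ e1 * exp (p * lam + lam ^ 2 / 8) := by
        apply mul_le_mul_of_nonneg_left
          (hoeffding_scalar p lam (by linarith) (by linarith)) (exp_nonneg _)
    _ = exp (lam * m + lam ^ 2 / 8) := by
        rw [he1, ← Real.exp_add]
        congr 1
        rw [hp]; ring
end


private lemma mcdiarmid_mgf : ∀ (n : ℕ) (ν : Fin n → Measure ℝ),
    (∀ i, IsProbabilityMeasure (ν i)) →
    ∀ (f : (Fin n → ℝ) → ℝ) (B : ℝ), Measurable f → (∀ x, |f x| ≤ B) →
    (∀ (x : Fin n → ℝ) (i : Fin n) (t : ℝ), |f (Function.update x i t) - f x| ≤ 1) →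
    ∀ lam : ℝ,
    ∫ x, exp (lam * f x) ∂(Measure.pi ν) ≤
      exp (lam * ∫ x, f x ∂(Measure.pi ν) + n * lam ^ 2 / 8) := by
  intro n
  induction n with
  | zero =>
    intro ν hprob f B hf hB hdiff lam
    haveI := hprob
    haveI : IsProbabilityMeasure (Measure.pi ν) := inferInstance
    have hconst : (f = fun _ => f (fun i => i.elim0)) := by
      funext x
      congr
      funext i
      exact i.elim0
    rw [hconst]
    rw [integral_const, integral_const]
    simp [measure_univ]
  | succ n IH =>
    intro ν hprob f B hf hB hdiff lam
    haveI := hprob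
    haveI : IsProbabilityMeasure (Measure.pi ν) := inferInstance
    set ν' : Fin n → Measure ℝ := fun j => ν j.succ with hν'
    haveI : ∀ j, IsProbabilityMeasure (ν' j) := fun j => hprob _
    haveI : IsProbabilityMeasure (Measure.pi ν') := inferInstance
    haveI : IsProbabilityMeasure ((ν 0).prod (Measure.pi ν')) := inferInstance
    set e := MeasurableEquiv.piFinSuccAbove (fun _ : Fin (n+1) => ℝ) 0 with he
    have hmp : MeasurePreserving e (Measure.pi ν)
        ((ν 0).prod (Measure.pi fun j => ν ((0 : Fin (n+1)).succAbove j))) :=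
      measurePreserving_piFinSuccAbove ν 0
    have hsA : (fun j => ν ((0 : Fin (n+1)).succAbove j)) = ν' := by
      funext j; simp [hν']
    rw [hsA] at hmp
    have hesymm : ∀ z : ℝ × (Fin n → ℝ), e.symm z = Fin.cons z.1 z.2 := by
      intro z
      show (MeasurableEquiv.piFinSuccAbove (fun _ : Fin (n+1) => ℝ) 0).symm z = _
      simp only [MeasurableEquiv.piFinSuccAbove, MeasurableEquiv.symm,
        MeasurableEquiv.coe_mk, Equiv.symm_symm]
      simp [Fin.consEquiv]
    have hcomp : ∀ (g : (Fin (n+1) → ℝ) → ℝ),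
        ∫ x, g x ∂(Measure.pi ν) = ∫ z, g (Fin.cons z.1 z.2) ∂((ν 0).prod (Measure.pi ν')) := by
      intro g
      rw [← (hmp.symm e).integral_comp' g]
      congr 1
      funext z
      rw [hesymm]
    set F : ℝ × (Fin n → ℝ) → ℝ := fun z => f (Fin.cons z.1 z.2) with hF
    have hconsmeas : Measurable (fun z : ℝ × (Fin n → ℝ) => Fin.cons z.1 z.2 : _ → Fin (n+1) → ℝ) := by
      apply measurable_pi_lambda
      intro i
      refine Fin.cases ?_ ?_ i
      · simpa using measurable_fst
      · intro j
        simpa [Function.comp_def] using (measurable_pi_apply j).comp measurable_snd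
    have hFmeas : Measurable F := hf.comp hconsmeas
    have hFbd : ∀ z, |F z| ≤ B := fun z => hB _
    set g : (Fin n → ℝ) → ℝ := fun y => ∫ t, F (t, y) ∂(ν 0) with hg
    have hgmeas : Measurable g :=
      (hFmeas.stronglyMeasurable.integral_prod_left' (μ := ν 0)).measurable
    have hBnn : 0 ≤ B := le_trans (abs_nonneg _) (hB (fun _ => 0))
    have hgbd : ∀ y, |g y| ≤ B := by
      intro y
      have := norm_integral_le_of_norm_le_const (μ := ν 0)
        (f := fun t => F (t, y)) (C := B)
        (Filter.Eventually.of_forall fun t => by simpa using hFbd (t, y))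
      simpa [measure_univ] using this
    have hsecmeas : ∀ y, Measurable fun t => F (t, y) := fun y =>
      hFmeas.comp (measurable_id.prodMk measurable_const)
    have hgdiff : ∀ (y : Fin n → ℝ) (j : Fin n) (s : ℝ),
        |g (Function.update y j s) - g y| ≤ 1 := by
      intro y j s
      have hdiffpt : ∀ t, |F (t, Function.update y j s) - F (t, y)| ≤ 1 := by
        intro t
        simp only [hF, Fin.cons_update]
        exact hdiff (Fin.cons t y) j.succ s
      have hint1 : Integrable (fun t => F (t, Function.update y j s)) (ν 0) :=
        integrable_of_bdd (ν 0) (hsecmeas _) B (fun t => hFbd _)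
      have hint2 : Integrable (fun t => F (t, y)) (ν 0) :=
        integrable_of_bdd (ν 0) (hsecmeas _) B (fun t => hFbd _)
      have : g (Function.update y j s) - g y
          = ∫ t, (F (t, Function.update y j s) - F (t, y)) ∂(ν 0) := by
        rw [integral_sub hint1 hint2]
      rw [this]
      have := norm_integral_le_of_norm_le_const (μ := ν 0)
        (f := fun t => F (t, Function.update y j s) - F (t, y)) (C := 1)
        (Filter.Eventually.of_forall fun t => by simpa using hdiffpt t)
      simpa [measure_univ] using this
    -- pointwise Hoeffding in the first coordinate
    have hineq1 : ∀ y, ∫ t, exp (lam * F (t, y)) ∂(ν 0) ≤ exp (lam * g y + lam ^ 2 / 8) := by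
      intro y
      apply hoeffding_integral (ν 0) (hsecmeas y)
      intro t t'
      have h1 : (Fin.cons t y : Fin (n+1) → ℝ) = Function.update (Fin.cons t' y : Fin (n+1) → ℝ) 0 t := by
        rw [Fin.update_cons_zero]
      have := hdiff (Fin.cons t' y) 0 t
      rw [← h1] at this
      calc F (t, y) - F (t', y) ≤ |F (t, y) - F (t', y)| := le_abs_self _
        _ ≤ 1 := this
    -- integrability facts
    have hexpFmeas : Measurable fun z => exp (lam * F z) := by fun_prop
    have hexpFbd : ∀ z, |exp (lam * F z)| ≤ exp (|lam| * B) := by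
      intro z
      rw [abs_of_nonneg (exp_nonneg _), exp_le_exp]
      calc lam * F z ≤ |lam * F z| := le_abs_self _
        _ = |lam| * |F z| := abs_mul _ _
        _ ≤ |lam| * B := mul_le_mul_of_nonneg_left (hFbd z) (abs_nonneg _)
    have hexpFint : Integrable (fun z => exp (lam * F z)) ((ν 0).prod (Measure.pi ν')) :=
      integrable_of_bdd _ hexpFmeas _ hexpFbd
    -- chain
    have step1 : ∫ x, exp (lam * f x) ∂(Measure.pi ν)
        = ∫ z, exp (lam * F z) ∂((ν 0).prod (Measure.pi ν')) :=
      hcomp (fun x => exp (lam * f x))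
    have step2 : ∫ z, exp (lam * F z) ∂((ν 0).prod (Measure.pi ν'))
        = ∫ y, ∫ t, exp (lam * F (t, y)) ∂(ν 0) ∂(Measure.pi ν') := by
      rw [integral_prod_symm _ hexpFint]
    have hinnermeas : Measurable fun y => ∫ t, exp (lam * F (t, y)) ∂(ν 0) := by
      exact (hexpFmeas.stronglyMeasurable.integral_prod_left' (μ := ν 0)).measurable
    have hinnerbd : ∀ y, |∫ t, exp (lam * F (t, y)) ∂(ν 0)| ≤ exp (|lam| * B) := by
      intro y
      have := norm_integral_le_of_norm_le_const (μ := ν 0)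
        (f := fun t => exp (lam * F (t, y))) (C := exp (|lam| * B))
        (Filter.Eventually.of_forall fun t => by simpa using hexpFbd (t, y))
      simpa [measure_univ] using this
    have step3 : ∫ y, ∫ t, exp (lam * F (t, y)) ∂(ν 0) ∂(Measure.pi ν')
        ≤ ∫ y, exp (lam * g y + lam ^ 2 / 8) ∂(Measure.pi ν') := by
      apply integral_mono
        (integrable_of_bdd _ hinnermeas _ hinnerbd)
        (integrable_of_bdd _ (by fun_prop) (exp (|lam| * B + lam ^ 2 / 8)) ?_)
        hineq1
      intro y
      rw [abs_of_nonneg (exp_nonneg _), exp_le_exp]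
      have : lam * g y ≤ |lam| * B := by
        calc lam * g y ≤ |lam * g y| := le_abs_self _
          _ = |lam| * |g y| := abs_mul _ _
          _ ≤ |lam| * B := mul_le_mul_of_nonneg_left (hgbd y) (abs_nonneg _)
      linarith
    have step4 : ∫ y, exp (lam * g y + lam ^ 2 / 8) ∂(Measure.pi ν')
        = exp (lam ^ 2 / 8) * ∫ y, exp (lam * g y) ∂(Measure.pi ν') := by
      simp_rw [exp_add, mul_comm (exp (lam * g _)) (exp (lam ^ 2 / 8))]
      rw [integral_const_mul]
    have step5 := IH ν' (fun j => hprob _) g B hgmeas hgbd hgdiff lam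
    have hmean : ∫ y, g y ∂(Measure.pi ν') = ∫ x, f x ∂(Measure.pi ν) := by
      rw [hcomp f]
      rw [integral_prod_symm _ (integrable_of_bdd _ hFmeas B hFbd)]
    rw [hmean] at step5
    calc ∫ x, exp (lam * f x) ∂(Measure.pi ν)
        = ∫ y, ∫ t, exp (lam * F (t, y)) ∂(ν 0) ∂(Measure.pi ν') := by rw [step1, step2]
      _ ≤ ∫ y, exp (lam * g y + lam ^ 2 / 8) ∂(Measure.pi ν') := step3
      _ = exp (lam ^ 2 / 8) * ∫ y, exp (lam * g y) ∂(Measure.pi ν') := step4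
      _ ≤ exp (lam ^ 2 / 8) * exp (lam * ∫ x, f x ∂(Measure.pi ν) + n * lam ^ 2 / 8) :=
          mul_le_mul_of_nonneg_left step5 (exp_nonneg _)
      _ = exp (lam * ∫ x, f x ∂(Measure.pi ν) + (n + 1 : ℕ) * lam ^ 2 / 8) := by
          rw [← exp_add]
          congr 1
          push_cast
          ring


private lemma mcdiarmid_tail_upper {n : ℕ} (hn : 0 < n) (ν : Fin n → Measure ℝ)
    (hprob : ∀ i, IsProbabilityMeasure (ν i)) (f : (Fin n → ℝ) → ℝ) (B : ℝ)
    (hf : Measurable f) (hB : ∀ x, |f x| ≤ B)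
    (hdiff : ∀ (x : Fin n → ℝ) (i : Fin n) (t : ℝ), |f (Function.update x i t) - f x| ≤ 1)
    (a : ℝ) (ha : ∫ x, f x ∂(Measure.pi ν) ≤ a) :
    ((Measure.pi ν) {x | a ≤ f x}).toReal
      ≤ exp (-2 * (a - ∫ x, f x ∂(Measure.pi ν)) ^ 2 / n) := by
  haveI := hprob
  haveI : IsProbabilityMeasure (Measure.pi ν) := inferInstance
  set m := ∫ x, f x ∂Measure.pi ν with hm
  have hnR : (0:ℝ) < n := by exact_mod_cast hn
  set lam := 4 * (a - m) / n with hlam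
  have hlam0 : 0 ≤ lam := by
    apply div_nonneg _ hnR.le
    have : 0 ≤ a - m := by linarith
    linarith
  have hint : Integrable (fun x => exp (lam * f x)) (Measure.pi ν) := by
    apply integrable_of_bdd _ (by fun_prop) (exp (|lam| * B))
    intro x
    rw [abs_of_nonneg (exp_nonneg _), exp_le_exp]
    calc lam * f x ≤ |lam * f x| := le_abs_self _
      _ = |lam| * |f x| := abs_mul _ _
      _ ≤ |lam| * B := mul_le_mul_of_nonneg_left (hB x) (abs_nonneg _)
  have hcher := ProbabilityTheory.measure_ge_le_exp_mul_mgf (X := f) (μ := Measure.pi ν) a hlam0 hint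
  have hmgf : ProbabilityTheory.mgf f (Measure.pi ν) lam = ∫ x, exp (lam * f x) ∂(Measure.pi ν) := rfl
  have hmc := mcdiarmid_mgf n ν hprob f B hf hB hdiff lam
  calc ((Measure.pi ν) {x | a ≤ f x}).toReal
      ≤ exp (-lam * a) * ProbabilityTheory.mgf f (Measure.pi ν) lam := hcher
    _ ≤ exp (-lam * a) * exp (lam * m + n * lam ^ 2 / 8) := by
        rw [hmgf]
        exact mul_le_mul_of_nonneg_left hmc (exp_nonneg _)
    _ = exp (-lam * a + (lam * m + n * lam ^ 2 / 8)) := (Real.exp_add _ _).symm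
    _ = exp (-2 * (a - m) ^ 2 / n) := by
        congr 1
        rw [hlam]
        field_simp
        ring

private lemma mcdiarmid_tail_lower {n : ℕ} (hn : 0 < n) (ν : Fin n → Measure ℝ)
    (hprob : ∀ i, IsProbabilityMeasure (ν i)) (f : (Fin n → ℝ) → ℝ) (B : ℝ)
    (hf : Measurable f) (hB : ∀ x, |f x| ≤ B)
    (hdiff : ∀ (x : Fin n → ℝ) (i : Fin n) (t : ℝ), |f (Function.update x i t) - f x| ≤ 1)
    (a : ℝ) (ha : a ≤ ∫ x, f x ∂(Measure.pi ν)) :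
    ((Measure.pi ν) {x | f x ≤ a}).toReal
      ≤ exp (-2 * ((∫ x, f x ∂(Measure.pi ν)) - a) ^ 2 / n) := by
  have hneg := mcdiarmid_tail_upper hn ν hprob (fun x => -f x) B (by fun_prop)
    (fun x => by simpa using hB x)
    (fun x i t => by
      have := hdiff x i t
      rw [abs_sub_comm] at this
      simp only [neg_sub_neg]; exact this)
    (-a)
    (by rw [integral_neg]; linarith)
  have hset : {x | -a ≤ -f x} = {x | f x ≤ a} := by
    ext x; simp
  rw [hset, integral_neg] at hneg
  convert hneg using 3
  ring


section Ham
variable {n : ℕ} {K : Set (Fin n → ℝ)}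

noncomputable def hamToSet (K : Set (Fin n → ℝ)) (x : Fin n → ℝ) : ℕ :=
  sInf ((fun s => l0Dist x s) '' K)

lemma l0Dist_le_n (x y : Fin n → ℝ) : l0Dist x y ≤ n := by
  calc l0Dist x y ≤ Finset.univ.card := Finset.card_filter_le _ _
    _ = n := Finset.card_fin n

lemma l0Dist_comm (x y : Fin n → ℝ) : l0Dist x y = l0Dist y x := by
  unfold l0Dist
  congr 1
  ext i
  simp [ne_comm]

lemma l0Dist_update_le (x s : Fin n → ℝ) (i : Fin n) (t : ℝ) :
    l0Dist (Function.update x i t) s ≤ l0Dist x s + 1 := by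
  unfold l0Dist
  have hsub : (Finset.univ.filter fun j => Function.update x i t j ≠ s j)
      ⊆ insert i (Finset.univ.filter fun j => x j ≠ s j) := by
    intro j hj
    simp only [Finset.mem_filter, Finset.mem_univ, true_and] at hj
    rcases eq_or_ne j i with rfl | hne
    · exact Finset.mem_insert_self _ _
    · rw [Function.update_of_ne hne] at hj
      exact Finset.mem_insert_of_mem (by simp [hj])
  calc (Finset.univ.filter fun j => Function.update x i t j ≠ s j).card
      ≤ (insert i (Finset.univ.filter fun j => x j ≠ s j)).card := Finset.card_le_card hsub
    _ ≤ _ + 1 := Finset.card_insert_le _ _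

lemma hamToSet_exists (hK : K.Nonempty) (x : Fin n → ℝ) :
    ∃ s ∈ K, hamToSet K x = l0Dist x s := by
  have : ((fun s => l0Dist x s) '' K).Nonempty := hK.image _
  obtain ⟨s, hs, heq⟩ := Nat.sInf_mem this
  exact ⟨s, hs, heq.symm⟩

lemma hamToSet_le {s : Fin n → ℝ} (hs : s ∈ K) (x : Fin n → ℝ) :
    hamToSet K x ≤ l0Dist x s :=
  Nat.sInf_le ⟨s, hs, rfl⟩

lemma hamToSet_update_le (hK : K.Nonempty) (x : Fin n → ℝ) (i : Fin n) (t : ℝ) :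
    hamToSet K (Function.update x i t) ≤ hamToSet K x + 1 := by
  obtain ⟨s, hs, heq⟩ := hamToSet_exists hK x
  calc hamToSet K (Function.update x i t) ≤ l0Dist (Function.update x i t) s :=
        hamToSet_le hs _
    _ ≤ l0Dist x s + 1 := l0Dist_update_le x s i t
    _ = hamToSet K x + 1 := by rw [heq]

lemma hamToSet_bddDiff (hK : K.Nonempty) (x : Fin n → ℝ) (i : Fin n) (t : ℝ) :
    |((hamToSet K (Function.update x i t) : ℝ)) - (hamToSet K x : ℝ)| ≤ 1 := by
  have h1 := hamToSet_update_le hK x i t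
  have h2 : hamToSet K x ≤ hamToSet K (Function.update x i t) + 1 := by
    have := hamToSet_update_le hK (Function.update x i t) i (x i)
    rwa [Function.update_idem, Function.update_eq_self] at this
  rw [abs_le]
  constructor
  · have : (hamToSet K x : ℝ) ≤ (hamToSet K (Function.update x i t) : ℝ) + 1 := by
      exact_mod_cast h2
    linarith
  · have : (hamToSet K (Function.update x i t) : ℝ) ≤ (hamToSet K x : ℝ) + 1 := by
      exact_mod_cast h1
    linarith

lemma isClosed_hamToSet_sublevel (hK : IsCompact K) (hne : K.Nonempty) (k : ℕ) :
    IsClosed {x : Fin n → ℝ | hamToSet K x ≤ k} := by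
  have hEq : {x : Fin n → ℝ | hamToSet K x ≤ k}
      = ⋃ T ∈ Finset.univ.filter (fun T : Finset (Fin n) => T.card ≤ k),
          ((fun (x : Fin n → ℝ) (j : {i : Fin n // i ∉ T}) => x j.1) ⁻¹'
            ((fun (s : Fin n → ℝ) (j : {i : Fin n // i ∉ T}) => s j.1) '' K)) := by
    ext x
    simp only [Set.mem_setOf_eq, Set.mem_iUnion, Finset.mem_filter, Finset.mem_univ, true_and,
      Set.mem_preimage, Set.mem_image]
    constructor
    · intro hx
      obtain ⟨s, hs, heq⟩ := hamToSet_exists hne x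
      refine ⟨Finset.univ.filter fun i => x i ≠ s i, ?_, s, hs, ?_⟩
      · show l0Dist x s ≤ k
        rw [← heq]
        exact hx
      · funext j
        have : ¬(x j.1 ≠ s j.1) := by
          intro hcon
          exact j.2 (by simp [hcon])
        simpa using (not_not.1 this).symm
    · rintro ⟨T, hT, s, hs, hproj⟩
      have hagree : ∀ i ∉ T, s i = x i := fun i hi => congrFun hproj ⟨i, hi⟩
      have : l0Dist x s ≤ T.card := by
        apply Finset.card_le_card
        intro i hi
        simp only [Finset.mem_filter, Finset.mem_univ, true_and] at hi
        by_contra hiT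
        exact hi (hagree i hiT).symm
      calc hamToSet K x ≤ l0Dist x s := hamToSet_le hs x
        _ ≤ T.card := this
        _ ≤ k := hT
  rw [hEq]
  apply isClosed_biUnion_finset
  intro T _
  apply IsClosed.preimage (continuous_pi fun j => continuous_apply _)
  exact (hK.image (continuous_pi fun j => continuous_apply _)).isClosed

lemma measurable_hamToSet (hK : IsCompact K) (hne : K.Nonempty) :
    Measurable fun x => (hamToSet K x : ℝ) := by
  apply Measurable.comp (measurable_from_top : Measurable (Nat.cast : ℕ → ℝ))
  apply measurable_to_countable'
  intro k
  have : (fun x => hamToSet K x) ⁻¹' {k} = {x | hamToSet K x = k} := rfl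
  rw [this]
  rcases k with _ | k
  · have : {x : Fin n → ℝ | hamToSet K x = 0} = {x | hamToSet K x ≤ 0} := by
      ext x; simp [Nat.le_zero]
    rw [this]
    exact (isClosed_hamToSet_sublevel hK hne 0).measurableSet
  · have : {x : Fin n → ℝ | hamToSet K x = k + 1}
        = {x | hamToSet K x ≤ k + 1} \ {x | hamToSet K x ≤ k} := by
      ext x
      simp only [Set.mem_setOf_eq, Set.mem_diff]
      omega
    rw [this]
    exact ((isClosed_hamToSet_sublevel hK hne (k+1)).measurableSet).diff
      (isClosed_hamToSet_sublevel hK hne k).measurableSet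
end Ham

theorem existence_of_sparse_adversarial_examples (n : ℕ) (ρ : (Fin n → ℝ) → ℝ)
    (hρmeas : Measurable ρ) (hρ0 : ∀ x, 0 ≤ ρ x)
    (hρsupp : Function.support ρ ⊆ Set.Icc (0 : Fin n → ℝ) 1)
    (hρint : ∫ x in Set.Icc (0 : Fin n → ℝ) 1, ρ x = 1)
    (R : Set (Fin n → ℝ)) (hR : MeasurableSet R) (hRsub : R ⊆ Set.Icc 0 1)
    (hRvol : volume R < ENNReal.ofReal (1 / 2))
    (ε : ℝ) (hε : ε ≥ Real.sqrt (n * Real.log 2 / 2))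
    (hS : volume (Function.support ρ) ≥
      ENNReal.ofReal (Real.exp (-(2 / n) * (ε - Real.sqrt (n * Real.log 2 / 2)) ^ 2))) :
    ∃ x, 0 < ρ x ∧ ∃ x' ∈ Set.Icc (0 : Fin n → ℝ) 1 \ R, (l0Dist x x' : ℝ) ≤ ε := by
  have hε0 : 0 ≤ ε := le_trans (Real.sqrt_nonneg _) hε
  have hSmeas : MeasurableSet (Function.support ρ) := by
    have : Function.support ρ = ρ ⁻¹' ({0}ᶜ) := by
      ext x; simp [Function.mem_support]
    rw [this]
    exact hρmeas (measurableSet_singleton 0).compl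
  rcases Nat.eq_zero_or_pos n with hn0 | hn
  · subst hn0
    have hSne : (Function.support ρ).Nonempty := by
      by_contra hc
      rw [Set.not_nonempty_iff_eq_empty] at hc
      rw [hc] at hS
      simp only [measure_empty] at hS
      exact absurd hS (not_le.2 (ENNReal.ofReal_pos.2 (exp_pos _)))
    obtain ⟨x, hx⟩ := hSne
    have hρx : 0 < ρ x := lt_of_le_of_ne (hρ0 x) (Ne.symm hx)
    have hxIcc : x ∈ Set.Icc (0 : Fin 0 → ℝ) 1 := hρsupp hx
    refine ⟨x, hρx, x, ⟨hxIcc, ?_⟩, ?_⟩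
    · intro hxR
      have hRuniv : R = Set.univ := Set.eq_univ_of_forall fun y => by
        rwa [Subsingleton.elim y x]
      have huniv : (volume : Measure (Fin 0 → ℝ)) Set.univ = 1 := by
        rw [MeasureTheory.volume_pi, Measure.pi_univ]
        simp
      rw [hRuniv, huniv] at hRvol
      have : ENNReal.ofReal (1/2) ≤ 1 := by
        rw [show (1 : ENNReal) = ENNReal.ofReal 1 by simp]
        exact ENNReal.ofReal_le_ofReal (by norm_num)
      exact absurd hRvol (not_lt.2 this)
    · have hzero : l0Dist x x = 0 := by simp [l0Dist]
      rw [hzero]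
      simpa using hε0
  -- main case
  have hnR : (0:ℝ) < n := by exact_mod_cast hn
  set c := Real.sqrt (↑n * Real.log 2 / 2) with hc
  set t₀ := ε - c with ht₀
  have ht₀0 : 0 ≤ t₀ := sub_nonneg.2 hε
  have hlog2 : 0 < Real.log 2 := Real.log_pos (by norm_num)
  have hc0 : 0 < c := Real.sqrt_pos.2 (by positivity)
  set ν : Fin n → Measure ℝ := fun _ => volume.restrict (Set.Icc (0:ℝ) 1) with hν
  have hprob : ∀ i, IsProbabilityMeasure (ν i) := by
    intro i
    constructor
    rw [hν, Measure.restrict_apply MeasurableSet.univ, Set.univ_inter, Real.volume_Icc]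
    simp
  haveI := hprob
  haveI hsf : ∀ i, SigmaFinite (ν i) := fun i => inferInstance
  set μ := Measure.pi ν with hμ
  haveI : IsProbabilityMeasure μ := @Measure.pi.instIsProbabilityMeasure _ _ _ _ ν hprob
  have hμeq : μ = volume.restrict (Set.Icc (0 : Fin n → ℝ) 1) := by
    rw [hμ]
    apply Measure.pi_eq
    intro s hs
    rw [← Set.pi_univ_Icc, Measure.restrict_apply (MeasurableSet.univ_pi hs),
      ← Set.pi_inter_distrib, volume_pi_pi]
    apply Finset.prod_congr rfl
    intro i _
    rw [hν, Measure.restrict_apply (hs i)]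
    norm_num
  have hIccvol : volume (Set.Icc (0 : Fin n → ℝ) 1) = 1 := by
    rw [← Set.pi_univ_Icc, volume_pi_pi]
    simp [Real.volume_Icc]
  set Bset := Set.Icc (0 : Fin n → ℝ) 1 \ R with hBdef
  have hBmeas : MeasurableSet Bset := measurableSet_Icc.diff hR
  have hRfin : volume R ≠ ⊤ := (lt_of_lt_of_le hRvol le_top).ne
  have hBfin : volume Bset ≠ ⊤ := by
    apply ne_top_of_le_ne_top (by simp : (1:ENNReal) ≠ ⊤)
    rw [← hIccvol]
    exact measure_mono Set.diff_subset
  have hsum : volume Bset + volume R = 1 := by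
    have := measure_diff_add_inter (μ := volume) (Set.Icc (0 : Fin n → ℝ) 1) hR
    rwa [Set.inter_eq_self_of_subset_right hRsub, hIccvol] at this
  set b := (volume Bset).toReal with hb
  have hb12 : 1/2 < b := by
    have hr : (volume R).toReal < 1/2 :=
      (ENNReal.lt_ofReal_iff_toReal_lt hRfin).1 hRvol
    have hsum' : b + (volume R).toReal = 1 := by
      rw [hb, ← ENNReal.toReal_add hBfin hRfin, hsum]
      simp
    linarith
  have hb0 : 0 < b := lt_trans (by norm_num) hb12
  have hb1 : b ≤ 1 := by
    have hsum' : b + (volume R).toReal = 1 := by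
      rw [hb, ← ENNReal.toReal_add hBfin hRfin, hsum]
      simp
    have : 0 ≤ (volume R).toReal := ENNReal.toReal_nonneg
    linarith
  set w := Real.sqrt (↑n / 2 * Real.log (1 / b)) with hw
  have hw0 : 0 ≤ w := Real.sqrt_nonneg _
  have hlogb : 0 ≤ Real.log (1 / b) := by
    apply Real.log_nonneg
    rw [le_div_iff₀ hb0]
    linarith
  have hw2 : w ^ 2 = ↑n / 2 * Real.log (1 / b) := Real.sq_sqrt (by positivity)
  have hwc : w < c := by
    rw [hw, hc]
    apply Real.sqrt_lt_sqrt (by positivity)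
    have h1 : Real.log (1 / b) < Real.log 2 := by
      apply Real.log_lt_log (by positivity)
      rw [div_lt_iff₀ hb0]
      linarith
    calc ↑n / 2 * Real.log (1 / b) < ↑n / 2 * Real.log 2 := by
          apply mul_lt_mul_of_pos_left h1 (by positivity)
      _ = ↑n * Real.log 2 / 2 := by ring
  set γ := c - w with hγ
  have hγ0 : 0 < γ := sub_pos.2 hwc
  have hγc : γ ≤ c := by rw [hγ]; linarith
  set v := Real.exp (-(2/↑n) * (t₀ + γ)^2) with hv
  have hv0 : 0 < v := exp_pos _
  have hvS : ENNReal.ofReal v < volume (Function.support ρ) := by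
    apply lt_of_lt_of_le _ hS
    apply (ENNReal.ofReal_lt_ofReal_iff (exp_pos _)).2
    rw [hv]
    apply Real.exp_lt_exp.2
    have h2n : (0:ℝ) < 2/↑n := by positivity
    have hsq : t₀^2 < (t₀ + γ)^2 := by nlinarith
    have := mul_lt_mul_of_pos_left hsq h2n
    linarith
  have hSfin : volume (Function.support ρ) ≠ ⊤ := by
    apply ne_top_of_le_ne_top (by simp : (1:ENNReal) ≠ ⊤)
    rw [← hIccvol]
    exact measure_mono hρsupp
  obtain ⟨K, hKS, hKcomp, hKv⟩ := hSmeas.exists_lt_isCompact_of_ne_top hSfin hvS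
  have hKmeas : MeasurableSet K := hKcomp.measurableSet
  have hKne : K.Nonempty := by
    by_contra hcne
    rw [Set.not_nonempty_iff_eq_empty] at hcne
    rw [hcne, measure_empty] at hKv
    exact absurd hKv (not_lt.2 zero_le)
  set f : (Fin n → ℝ) → ℝ := fun x => (hamToSet K x : ℝ) with hf
  have hfmeas : Measurable f := measurable_hamToSet hKcomp hKne
  have hfbd : ∀ x, |f x| ≤ (n:ℝ) := by
    intro x
    obtain ⟨s, hs⟩ := hKne
    have h1 : hamToSet K x ≤ n := le_trans (hamToSet_le hs x) (l0Dist_le_n x s)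
    have h2 : f x = (hamToSet K x : ℝ) := rfl
    rw [h2, abs_of_nonneg (Nat.cast_nonneg _)]
    exact_mod_cast h1
  have hfdiff : ∀ (x : Fin n → ℝ) (i : Fin n) (t : ℝ),
      |f (Function.update x i t) - f x| ≤ 1 := fun x i t => hamToSet_bddDiff hKne x i t
  set m := ∫ x, f x ∂μ with hm
  have hm0 : 0 ≤ m := integral_nonneg (fun x => Nat.cast_nonneg _)
  have hμ_of : ∀ A : Set (Fin n → ℝ), MeasurableSet A → A ⊆ Set.Icc 0 1 → μ A = volume A := by
    intro A hA hsub
    rw [hμeq, Measure.restrict_apply hA, Set.inter_eq_self_of_subset_left hsub]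
  have hKμ : μ K = volume K := hμ_of K hKmeas (hKS.trans hρsupp)
  have hKsub : K ⊆ {x | f x ≤ 0} := by
    intro s hs
    have h1 : hamToSet K s ≤ l0Dist s s := hamToSet_le hs s
    have h2 : l0Dist s s = 0 := by simp [l0Dist]
    rw [h2, Nat.le_zero] at h1
    simp [hf, h1]
  have hlow := mcdiarmid_tail_lower hn ν hprob f (n:ℝ) hfmeas hfbd hfdiff 0 hm0
  rw [← hμ, ← hm] at hlow
  have hvlow : v < Real.exp (-2 * m^2 / ↑n) := by
    have h1 : ENNReal.ofReal v < μ {x | f x ≤ 0} :=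
      lt_of_lt_of_le (hKμ ▸ hKv) (measure_mono hKsub)
    have h2 : v < (μ {x | f x ≤ 0}).toReal :=
      (ENNReal.ofReal_lt_iff_lt_toReal hv0.le (measure_ne_top μ _)).1 h1
    calc v < (μ {x | f x ≤ 0}).toReal := h2
      _ ≤ exp (-2 * (m - 0)^2 / ↑n) := hlow
      _ = exp (-2 * m^2 / ↑n) := by ring_nf
  have hmlt : m < t₀ + γ := by
    rw [hv] at hvlow
    have hexp := Real.exp_lt_exp.1 hvlow
    have h2n : (0:ℝ) < 2/↑n := by positivity
    have hsq : m^2 < (t₀ + γ)^2 := by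
      have hn2 : -(2/↑n) * (t₀+γ)^2 < -2 * m^2 / ↑n := hexp
      have he1 : -2 * m^2 / ↑n = -(2/↑n) * m^2 := by ring
      rw [he1] at hn2
      by_contra hge
      push_neg at hge
      have := mul_le_mul_of_nonneg_left hge h2n.le
      linarith
    by_contra hge
    push_neg at hge
    have := pow_le_pow_left₀ (by positivity : (0:ℝ) ≤ t₀ + γ) hge 2
    linarith
  by_contra hcon
  push_neg at hcon
  have hBsubset : Bset ⊆ {x | ε ≤ f x} := by
    intro x' hx'
    obtain ⟨s, hsK, heq⟩ := hamToSet_exists hKne x'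
    have hρs : 0 < ρ s := by
      have hsS : s ∈ Function.support ρ := hKS hsK
      exact lt_of_le_of_ne (hρ0 s) (Ne.symm hsS)
    have hlt := hcon s hρs x' hx'
    have h2 : f x' = (l0Dist s x' : ℝ) := by
      rw [show f x' = ((hamToSet K x' : ℕ) : ℝ) from rfl, heq, l0Dist_comm]
    rw [Set.mem_setOf_eq, h2]
    exact hlt.le
  have hεm : m ≤ ε := by
    have hεeq : ε = t₀ + c := by rw [ht₀]; ring
    linarith
  have hup := mcdiarmid_tail_upper hn ν hprob f (n:ℝ) hfmeas hfbd hfdiff ε hεm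
  rw [← hμ, ← hm] at hup
  have hBle : b ≤ Real.exp (-2 * (ε - m)^2 / ↑n) := by
    have h1 : μ Bset = volume Bset := hμ_of Bset hBmeas Set.diff_subset
    calc b = (μ Bset).toReal := by rw [hb, h1]
      _ ≤ (μ {x | ε ≤ f x}).toReal :=
          ENNReal.toReal_mono (measure_ne_top μ _) (measure_mono hBsubset)
      _ ≤ _ := hup
  have hfinal : Real.exp (-2 * (ε - m)^2 / ↑n) < b := by
    have hεeq : ε = t₀ + c := by rw [ht₀]; ring
    have h1 : w < ε - m := by
      have : c - γ = w := by rw [hγ]; ring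
      linarith
    have h2 : w^2 < (ε - m)^2 := by nlinarith
    calc Real.exp (-2 * (ε-m)^2 / ↑n) < Real.exp (-2 * w^2 / ↑n) := by
          apply Real.exp_lt_exp.2
          have h2n : (0:ℝ) < 2/↑n := by positivity
          have e1 : -2 * (ε-m)^2/(n:ℝ) = -((2/↑n) * (ε-m)^2) := by ring
          have e2 : -2 * w^2/(n:ℝ) = -((2/↑n) * w^2) := by ring
          rw [e1, e2]
          have := mul_lt_mul_of_pos_left h2 h2n
          linarith
      _ = Real.exp (-Real.log (1/b)) := by
          rw [hw2]
          congr 1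
          have hne : (n:ℝ) ≠ 0 := ne_of_gt hnR
          field_simp
      _ = b := by
          rw [one_div, Real.log_inv, neg_neg, Real.exp_log hb0]
  linarith
end
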